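/- arXiv:2205.06038 — 4 statements merged into one kernel-verified Lean document; each statement's English description precedes it below -/
import Mathlib

section
/- For pairs (λ, μ) of strict partitions with ℓ(λ) = i + j and ℓ(μ) = j (where i, j ≥ 0) satisfying μ_1 ≤ ℓ(λ), the generating function ∑ q^{|λ|+|μ|} equals (q^{(i+j)(i+j+1)/2}/(q;q)_i) · (q^{j(j+1)/2}/(q;q)_j) · [1/(q;q)_{i+j}]·(q;q)_{i+j}, i.e., equals q^{(i+j)(i+j+1)/2 + j(j+1)/2} / ((q;q)_i (q;q)_j). -/
open Finset PowerSeries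

/-- A strict partition: a strictly decreasing finite list of positive integers. -/
structure StrictPartition where
  parts : List ℕ
  pos : ∀ p ∈ parts, 0 < p
  sorted : parts.Pairwise (· > ·)

namespace StrictPartition

/-- The size `|λ|`. -/
def size (μ : StrictPartition) : ℕ := μ.parts.sum

/-- The number of parts `ℓ(λ)`. -/
def len (μ : StrictPartition) : ℕ := μ.parts.length

/-- The largest part `λ₁` (`0` if `λ` is empty). -/
def first (μ : StrictPartition) : ℕ := μ.parts.headI

end StrictPartition

/-- `(q;q)_n = ∏_{0 ≤ j < n} (1 - q^{j+1})`. -/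
noncomputable def qPoch (n : ℕ) : PowerSeries ℚ :=
  ∏ j ∈ Finset.range n, (1 - (PowerSeries.X : PowerSeries ℚ) ^ (j + 1))


namespace PairGFAux

/-- triangular number `1 + 2 + ... + k`. -/
def tri (k : ℕ) : ℕ := ∑ m ∈ Finset.range k, (m + 1)

lemma tri_eq (k : ℕ) : tri k = k * (k + 1) / 2 := by
  induction k with
  | zero => simp [tri]
  | succ n ih =>
    rw [tri, Finset.sum_range_succ, ← tri, ih]
    have h2 : 2 ∣ n * (n + 1) := Nat.even_mul_succ_self n |>.two_dvd
    have h4 : (n + 1) * (n + 1 + 1) = n * (n + 1) + 2 * (n + 1) := by ring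
    omega

/-- weight of a gap vector: `∑ (t+1) * e t`. -/
def wt {k : ℕ} (e : Fin k → ℕ) : ℕ := ∑ t : Fin k, (t.1 + 1) * e t

/-- from gap list to strict partition parts list -/
def unGaps : List ℕ → List ℕ
  | [] => []
  | g :: t => (g + 1 + (unGaps t).headI) :: unGaps t

/-- from strict partition parts list to gap list -/
def gaps : List ℕ → List ℕ
  | [] => []
  | a :: t => (a - t.headI - 1) :: gaps t

@[simp] lemma length_unGaps (l : List ℕ) : (unGaps l).length = l.length := by
  induction l with
  | nil => rfl
  | cons g t ih => simp [unGaps, ih]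

@[simp] lemma length_gaps (l : List ℕ) : (gaps l).length = l.length := by
  induction l with
  | nil => rfl
  | cons g t ih => simp [gaps, ih]

lemma headI_unGaps (l : List ℕ) : (unGaps l).headI = l.length + l.sum := by
  induction l with
  | nil => rfl
  | cons g t ih => simp [unGaps, ih]; omega

lemma le_headI_of_sorted {l : List ℕ} (h : l.Pairwise (· > ·)) :
    ∀ x ∈ l, x ≤ l.headI := by
  cases l with
  | nil => simp
  | cons a t =>
    intro x hx
    rcases List.mem_cons.1 hx with rfl | hx
    · simp
    · exact le_of_lt (List.rel_of_pairwise_cons h hx)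

lemma sorted_unGaps (l : List ℕ) : (unGaps l).Pairwise (· > ·) := by
  induction l with
  | nil => exact List.Pairwise.nil
  | cons g t ih =>
    rw [unGaps, List.pairwise_cons]
    refine ⟨fun b hb => ?_, ih⟩
    have := le_headI_of_sorted ih b hb
    omega

lemma pos_unGaps (l : List ℕ) : ∀ p ∈ unGaps l, 0 < p := by
  induction l with
  | nil => simp [unGaps]
  | cons g t ih =>
    intro p hp
    rw [unGaps, List.mem_cons] at hp
    rcases hp with rfl | hp
    · omega
    · exact ih p hp

/-- recursive weight on lists -/
def lw : List ℕ → ℕ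
  | [] => 0
  | g :: t => g + t.sum + lw t

lemma sum_unGaps (l : List ℕ) : (unGaps l).sum = lw l + tri l.length := by
  induction l with
  | nil => rfl
  | cons g t ih =>
    rw [unGaps, List.sum_cons, ih, headI_unGaps, lw, List.length_cons]
    have : tri (t.length + 1) = tri t.length + (t.length + 1) := by
      rw [tri, Finset.sum_range_succ, ← tri]
    omega

lemma gaps_unGaps (l : List ℕ) : gaps (unGaps l) = l := by
  induction l with
  | nil => rfl
  | cons g t ih => rw [unGaps, gaps, ih]; congr 1; omega

lemma unGaps_gaps (l : List ℕ) (hs : l.Pairwise (· > ·)) (hp : ∀ p ∈ l, 0 < p) :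
    unGaps (gaps l) = l := by
  induction l with
  | nil => rfl
  | cons a t ih =>
    rw [List.pairwise_cons] at hs
    rw [gaps, unGaps, ih hs.2 (fun p hp' => hp p (List.mem_cons_of_mem _ hp'))]
    congr 1
    have ha : 0 < a := hp a List.mem_cons_self
    cases t with
    | nil => simp; omega
    | cons b t' =>
      have : b < a := hs.1 b List.mem_cons_self
      simp; omega

lemma lw_ofFn {k : ℕ} (e : Fin k → ℕ) : lw (List.ofFn e) = wt e := by
  induction k with
  | zero => simp [lw, wt]
  | succ n ih =>
    rw [List.ofFn_succ, lw, ih, List.sum_ofFn, wt, wt, Fin.sum_univ_succ]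
    simp only [Fin.val_zero, zero_add, one_mul, Fin.val_succ]
    rw [add_assoc, ← Finset.sum_add_distrib]
    congr 1
    refine Finset.sum_congr rfl fun t _ => ?_
    ring

lemma ofFn_getD {k : ℕ} (L : List ℕ) (h : L.length = k) :
    List.ofFn (fun t : Fin k => L.getD t 0) = L := by
  subst h
  refine List.ext_getElem (by simp) fun n h1 h2 => ?_
  simp [List.getD_eq_getElem?_getD, List.getElem?_eq_getElem h2]

lemma sp_ext {p q : StrictPartition} (h : p.parts = q.parts) : p = q := by
  cases p; cases q; cases h; rfl

/-- The equivalence between strict partitions of length `k` and gap vectors. -/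
noncomputable def spEquiv (k : ℕ) :
    {p : StrictPartition // p.len = k} ≃ (Fin k → ℕ) where
  toFun p := fun t => (gaps p.1.parts).getD t 0
  invFun e := ⟨⟨unGaps (List.ofFn e), pos_unGaps _, sorted_unGaps _⟩, by
    simp [StrictPartition.len]⟩
  left_inv p := by
    have hl : (gaps p.1.parts).length = k := by
      rw [length_gaps]; exact p.2
    have key : unGaps (List.ofFn (fun t : Fin k => (gaps p.1.parts).getD t 0))
        = p.1.parts := by
      rw [ofFn_getD _ hl, unGaps_gaps _ p.1.sorted p.1.pos]
    ext1
    exact sp_ext key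
  right_inv e := by
    funext t
    simp only [gaps_unGaps]
    rw [List.getD_eq_getElem?_getD]
    simp

lemma size_symm_spEquiv {k : ℕ} (e : Fin k → ℕ) :
    ((spEquiv k).symm e).1.size = tri k + wt e := by
  simp only [spEquiv, Equiv.coe_fn_symm_mk, StrictPartition.size]
  rw [sum_unGaps, lw_ofFn]
  simp [add_comm]

lemma first_symm_spEquiv {k : ℕ} (e : Fin k → ℕ) :
    ((spEquiv k).symm e).1.first = k + ∑ t, e t := by
  simp only [spEquiv, Equiv.coe_fn_symm_mk, StrictPartition.first]
  rw [headI_unGaps]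
  simp [List.sum_ofFn]

lemma size_spEquiv {k : ℕ} (p : {p : StrictPartition // p.len = k}) :
    p.1.size = tri k + wt (spEquiv k p) := by
  conv_lhs => rw [← (spEquiv k).symm_apply_apply p]
  rw [size_symm_spEquiv]

lemma first_spEquiv {k : ℕ} (p : {p : StrictPartition // p.len = k}) :
    p.1.first = k + ∑ t, spEquiv k p t := by
  conv_lhs => rw [← (spEquiv k).symm_apply_apply p]
  rw [first_symm_spEquiv]

lemma apply_le_of_wt_eq {k n : ℕ} {e : Fin k → ℕ} (h : wt e ≤ n) (t : Fin k) :
    e t ≤ n := by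
  have h1 : (t.1 + 1) * e t ≤ wt e :=
    Finset.single_le_sum (f := fun t : Fin k => (t.1 + 1) * e t)
      (fun _ _ => Nat.zero_le _) (Finset.mem_univ t)
  have h2 : e t ≤ (t.1 + 1) * e t := Nat.le_mul_of_pos_left _ (Nat.succ_pos _)
  omega

lemma finite_wt_le (k n : ℕ) : Finite {e : Fin k → ℕ // wt e ≤ n} := by
  refine Finite.of_injective
    (fun x => (fun t => (⟨x.1 t, Nat.lt_succ_of_le (apply_le_of_wt_eq x.2 t)⟩ :
      Fin (n + 1))) : _ → (Fin k → Fin (n + 1))) ?_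
  intro x y h
  ext t
  exact congrArg Fin.val (congrFun h t)

lemma mycard_sigma {ι : Type*} [Fintype ι] (f : ι → Type*) [∀ i, Finite (f i)] :
    Nat.card (Σ i, f i) = ∑ i, Nat.card (f i) := by
  classical
  letI : ∀ i, Fintype (f i) := fun i => Fintype.ofFinite _
  simp only [Nat.card_eq_fintype_card, Fintype.card_sigma]

lemma card_fiber_sum {γ : Type*} {s : Finset (ℕ × ℕ)} (f : γ → ℕ × ℕ)
    (hf : ∀ g, f g ∈ s) [∀ x : ℕ × ℕ, Finite {g : γ // f g = x}] :
    Nat.card γ = ∑ x ∈ s, Nat.card {g : γ // f g = x} := by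
  have E : γ ≃ Σ x : s, {g : γ // f g = (x : ℕ × ℕ)} :=
    { toFun := fun g => ⟨⟨f g, hf g⟩, g, rfl⟩
      invFun := fun p => p.2.1
      left_inv := fun g => rfl
      right_inv := by
        rintro ⟨⟨x, hx⟩, g, hg⟩
        obtain rfl : f g = x := hg
        rfl }
  rw [Nat.card_congr E, mycard_sigma,
    Finset.sum_coe_sort s (fun x => Nat.card {g : γ // f g = x})]

lemma conv {α β : Type*} (wa : α → ℕ) (wb : β → ℕ)
    (ha : ∀ n, Finite {a : α // wa a ≤ n}) (hb : ∀ n, Finite {b : β // wb b ≤ n})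
    (M : ℕ) :
    Nat.card {p : α × β // wa p.1 + wb p.2 = M}
      = ∑ x ∈ Finset.HasAntidiagonal.antidiagonal M,
          Nat.card {a : α // wa a = x.1} * Nat.card {b : β // wb b = x.2} := by
  haveI := ha M; haveI := hb M
  haveI : Finite {p : α × β // wa p.1 + wb p.2 = M} := by
    refine Finite.of_injective (fun g =>
      ((⟨g.1.1, by omega⟩ : {a : α // wa a ≤ M}),
       (⟨g.1.2, by omega⟩ : {b : β // wb b ≤ M}))) ?_
    intro x y h
    apply Subtype.ext
    have h1 := congrArg (fun z => z.1.1) h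
    have h2 := congrArg (fun z => z.2.1) h
    exact Prod.ext h1 h2
  haveI : ∀ x : ℕ × ℕ,
      Finite {g : {p : α × β // wa p.1 + wb p.2 = M} //
        (wa g.1.1, wb g.1.2) = x} :=
    fun x => Finite.of_injective (fun g => g.1) (fun _ _ h => Subtype.ext h)
  rw [card_fiber_sum (s := Finset.HasAntidiagonal.antidiagonal M) (fun g : {p : α × β // wa p.1 + wb p.2 = M} =>
    (wa g.1.1, wb g.1.2)) (fun g => by simp [Finset.HasAntidiagonal.mem_antidiagonal, g.2])]
  refine Finset.sum_congr rfl fun x hx => ?_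
  rw [Finset.HasAntidiagonal.mem_antidiagonal] at hx
  rw [← Nat.card_prod]
  refine Nat.card_congr ?_
  refine
    { toFun := fun g => (⟨g.1.1.1, congrArg Prod.fst g.2⟩, ⟨g.1.1.2, congrArg Prod.snd g.2⟩)
      invFun := fun ab => ⟨⟨(ab.1.1, ab.2.1), by rw [ab.1.2, ab.2.2]; exact hx⟩, by
        simp only
        rw [ab.1.2, ab.2.2]⟩
      left_inv := fun g => by
        apply Subtype.ext; apply Subtype.ext; rfl
      right_inv := fun ab => by
        apply Prod.ext <;> apply Subtype.ext <;> rfl }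

/-- geometric series `1/(1-X^m)` -/
noncomputable def geom (m : ℕ) : PowerSeries ℚ :=
  PowerSeries.mk (fun n => if m ∣ n then (1 : ℚ) else 0)

lemma geom_mul (m : ℕ) (hm : 0 < m) :
    geom m * (1 - (PowerSeries.X : PowerSeries ℚ) ^ m) = 1 := by
  ext n
  rw [mul_sub, mul_one, map_sub, PowerSeries.coeff_mul_X_pow' (geom m) m n]
  simp only [geom, PowerSeries.coeff_mk, PowerSeries.coeff_one]
  rcases Nat.eq_zero_or_pos n with rfl | hn
  · have h0 : ¬ m ≤ 0 := by omega
    simp [h0]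
  · have hne : n ≠ 0 := by omega
    have hiff : m ∣ n ↔ (m ≤ n ∧ m ∣ n - m) := by
      constructor
      · intro h
        exact ⟨Nat.le_of_dvd hn h, Nat.dvd_sub h dvd_rfl⟩
      · rintro ⟨h1, h2⟩
        have := Nat.dvd_add h2 (dvd_refl m)
        rwa [Nat.sub_add_cancel h1] at this
    rw [if_neg hne]
    by_cases h1 : m ≤ n
    · rw [if_pos h1]
      by_cases h2 : m ∣ n
      · rw [if_pos h2, if_pos ((hiff.1 h2).2)]; ring
      · rw [if_neg h2, if_neg (fun hc => h2 (hiff.2 ⟨h1, hc⟩))]; ring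
    · rw [if_neg h1, if_neg (fun hc : m ∣ n => h1 (Nat.le_of_dvd hn hc))]; ring

lemma qPoch_succ (k : ℕ) :
    qPoch (k + 1) = qPoch k * (1 - (PowerSeries.X : PowerSeries ℚ) ^ (k + 1)) := by
  rw [qPoch, Finset.prod_range_succ, ← qPoch]

lemma constantCoeff_qPoch (k : ℕ) :
    PowerSeries.constantCoeff (qPoch k) = 1 := by
  rw [qPoch, map_prod]
  refine Finset.prod_eq_one fun m _ => ?_
  rw [map_sub, map_one, map_pow, PowerSeries.constantCoeff_X]
  simp

/-- splitting off the last coordinate -/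
def snocE (k : ℕ) : (Fin (k + 1) → ℕ) ≃ (Fin k → ℕ) × ℕ where
  toFun e := (fun t => e t.castSucc, e (Fin.last k))
  invFun x := Fin.snoc x.1 x.2
  left_inv e := Fin.snoc_init_self e
  right_inv x := by
    refine Prod.ext (funext fun t => ?_) ?_
    · simp
    · simp

lemma wt_snoc {k : ℕ} (e : Fin k → ℕ) (r : ℕ) :
    wt (Fin.snoc e r : Fin (k + 1) → ℕ) = wt e + (k + 1) * r := by
  rw [wt, Fin.sum_univ_castSucc]
  simp only [Fin.coe_castSucc, Fin.snoc_castSucc, Fin.snoc_last, Fin.val_last]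
  rfl

lemma sum_snoc {k : ℕ} (e : Fin k → ℕ) (r : ℕ) :
    ∑ t, (Fin.snoc e r : Fin (k + 1) → ℕ) t = (∑ t, e t) + r := by
  rw [Fin.sum_univ_castSucc]
  simp only [Fin.snoc_castSucc, Fin.snoc_last]

lemma finite_wt_eq (k n : ℕ) (P : (Fin k → ℕ) → Prop) :
    Finite {e : Fin k → ℕ // wt e = n ∧ P e} := by
  haveI := finite_wt_le k n
  exact Finite.of_injective
    (fun x => (⟨x.1, le_of_eq x.2.1⟩ : {e : Fin k → ℕ // wt e ≤ n}))
    (fun x y h => by apply Subtype.ext; exact congrArg (fun z => z.val) h)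

lemma finite_wt_eq' (k n : ℕ) : Finite {e : Fin k → ℕ // wt e = n} := by
  haveI := finite_wt_le k n
  exact Finite.of_injective
    (fun x => (⟨x.1, le_of_eq x.2⟩ : {e : Fin k → ℕ // wt e ≤ n}))
    (fun x y h => by apply Subtype.ext; exact congrArg (fun z => z.val) h)

lemma card_mul_eq (m b : ℕ) (hm : 0 < m) :
    Nat.card {r : ℕ // m * r = b} = if m ∣ b then 1 else 0 := by
  by_cases h : m ∣ b
  · obtain ⟨c, rfl⟩ := h
    rw [if_pos ⟨c, rfl⟩]
    haveI : Nonempty {r : ℕ // m * r = m * c} := ⟨⟨c, rfl⟩⟩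
    haveI : Subsingleton {r : ℕ // m * r = m * c} := ⟨fun x y => Subtype.ext (by
      have := x.2.trans y.2.symm
      exact Nat.eq_of_mul_eq_mul_left hm this)⟩
    exact Nat.card_unique
  · rw [if_neg h]
    haveI : IsEmpty {r : ℕ // m * r = b} := ⟨fun x => h ⟨x.1, x.2.symm⟩⟩
    exact Nat.card_of_isEmpty

lemma wt_eq_split {k : ℕ} (e : Fin (k + 1) → ℕ) :
    wt e = wt ((snocE k) e).1 + (k + 1) * ((snocE k) e).2 := by
  conv_lhs => rw [← Fin.snoc_init_self e]
  rw [wt_snoc]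
  rfl

lemma sum_eq_split {k : ℕ} (e : Fin (k + 1) → ℕ) :
    ∑ t, e t = (∑ t, ((snocE k) e).1 t) + ((snocE k) e).2 := by
  conv_lhs => rw [← Fin.snoc_init_self e]
  rw [sum_snoc]
  rfl

lemma gf_strict (k : ℕ) :
    PowerSeries.mk (fun n => (Nat.card {e : Fin k → ℕ // wt e = n} : ℚ)) * qPoch k
      = 1 := by
  induction k with
  | zero =>
    have h1 : qPoch 0 = 1 := by simp [qPoch]
    rw [h1, mul_one]
    ext n
    rw [PowerSeries.coeff_mk, PowerSeries.coeff_one]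
    rcases eq_or_ne n 0 with rfl | hn
    · rw [if_pos rfl]
      haveI : Nonempty {e : Fin 0 → ℕ // wt e = 0} :=
        ⟨⟨fun t => t.elim0, by simp [wt]⟩⟩
      haveI : Subsingleton {e : Fin 0 → ℕ // wt e = 0} :=
        ⟨fun x y => Subtype.ext (funext fun t => t.elim0)⟩
      rw [Nat.card_unique]; norm_num
    · rw [if_neg hn]
      haveI : IsEmpty {e : Fin 0 → ℕ // wt e = n} :=
        ⟨fun x => hn (x.2.symm.trans (by simp [wt]))⟩
      rw [Nat.card_of_isEmpty]; norm_num
  | succ k ih =>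
    have hstep : PowerSeries.mk
        (fun n => (Nat.card {e : Fin (k + 1) → ℕ // wt e = n} : ℚ))
        = PowerSeries.mk (fun n => (Nat.card {e : Fin k → ℕ // wt e = n} : ℚ))
          * geom (k + 1) := by
      ext n
      rw [PowerSeries.coeff_mul, PowerSeries.coeff_mk]
      have hc : Nat.card {e : Fin (k + 1) → ℕ // wt e = n}
          = Nat.card {x : (Fin k → ℕ) × ℕ // wt x.1 + (k + 1) * x.2 = n} :=
        Nat.card_congr ((snocE k).subtypeEquiv (fun e => by
          rw [wt_eq_split e]))
      rw [hc, conv wt (fun r => (k + 1) * r) (fun n => finite_wt_le k n)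
        (fun n => Finite.of_injective
          (fun x => (⟨x.1, by
            have h1 : (k + 1) * x.1 ≤ n := x.2
            have h2 : x.1 ≤ (k + 1) * x.1 := Nat.le_mul_of_pos_left _ k.succ_pos
            omega⟩ : Fin (n + 1)))
          (fun x y h => Subtype.ext (congrArg Fin.val h))) n]
      push_cast
      refine Finset.sum_congr rfl fun x hx => ?_
      rw [card_mul_eq _ _ (Nat.succ_pos k)]
      simp [geom]
    rw [hstep, qPoch_succ]
    calc PowerSeries.mk (fun n => (Nat.card {e : Fin k → ℕ // wt e = n} : ℚ))
          * geom (k + 1) * (qPoch k * (1 - (PowerSeries.X : PowerSeries ℚ) ^ (k + 1)))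
        = (PowerSeries.mk (fun n => (Nat.card {e : Fin k → ℕ // wt e = n} : ℚ))
            * qPoch k) * (geom (k + 1) * (1 - (PowerSeries.X : PowerSeries ℚ) ^ (k + 1))) := by
          ring
      _ = 1 := by rw [ih, geom_mul _ (Nat.succ_pos k), mul_one]

/-- number of box-bounded gap vectors -/
noncomputable def bcard (j i n : ℕ) : ℕ :=
  Nat.card {f : Fin j → ℕ // wt f = n ∧ ∑ t, f t ≤ i}

/-- its generating function -/
noncomputable def mkB (j i : ℕ) : PowerSeries ℚ :=
  PowerSeries.mk (fun n => (bcard j i n : ℚ))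

lemma mkB_zero_left (i : ℕ) : mkB 0 i = 1 := by
  ext n
  rw [mkB, PowerSeries.coeff_mk, PowerSeries.coeff_one, bcard]
  rcases eq_or_ne n 0 with rfl | hn
  · rw [if_pos rfl]
    haveI : Nonempty {f : Fin 0 → ℕ // wt f = 0 ∧ ∑ t, f t ≤ i} :=
      ⟨⟨fun t => t.elim0, by simp [wt]⟩⟩
    haveI : Subsingleton {f : Fin 0 → ℕ // wt f = 0 ∧ ∑ t, f t ≤ i} :=
      ⟨fun x y => Subtype.ext (funext fun t => t.elim0)⟩
    rw [Nat.card_unique]; norm_num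
  · rw [if_neg hn]
    haveI : IsEmpty {f : Fin 0 → ℕ // wt f = n ∧ ∑ t, f t ≤ i} :=
      ⟨fun x => hn (x.2.1.symm.trans (by simp [wt]))⟩
    rw [Nat.card_of_isEmpty]; norm_num

lemma mkB_zero_right (j : ℕ) : mkB j 0 = 1 := by
  ext n
  rw [mkB, PowerSeries.coeff_mk, PowerSeries.coeff_one, bcard]
  have hzero : ∀ f : Fin j → ℕ, (∑ t, f t ≤ 0) → f = 0 := by
    intro f hf
    funext t
    have h1 : f t ≤ ∑ t, f t :=
      Finset.single_le_sum (f := f) (fun _ _ => Nat.zero_le _) (Finset.mem_univ t)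
    simpa using Nat.le_zero.1 (h1.trans hf)
  rcases eq_or_ne n 0 with rfl | hn
  · rw [if_pos rfl]
    haveI : Nonempty {f : Fin j → ℕ // wt f = 0 ∧ ∑ t, f t ≤ 0} :=
      ⟨⟨0, by simp [wt]⟩⟩
    haveI : Subsingleton {f : Fin j → ℕ // wt f = 0 ∧ ∑ t, f t ≤ 0} :=
      ⟨fun x y => Subtype.ext ((hzero _ x.2.2).trans (hzero _ y.2.2).symm)⟩
    rw [Nat.card_unique]; norm_num
  · rw [if_neg hn]
    haveI : IsEmpty {f : Fin j → ℕ // wt f = n ∧ ∑ t, f t ≤ 0} :=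
      ⟨fun x => hn (by
        have h0 := hzero _ x.2.2
        have := x.2.1
        rw [h0] at this
        rw [← this]
        simp [wt])⟩
    rw [Nat.card_of_isEmpty]; norm_num

lemma bcard_pair (j I N : ℕ) :
    bcard (j + 1) I N
      = Nat.card {x : (Fin j → ℕ) × ℕ //
          wt x.1 + (j + 1) * x.2 = N ∧ (∑ t, x.1 t) + x.2 ≤ I} := by
  refine Nat.card_congr ((snocE j).subtypeEquiv (fun e => ?_))
  rw [wt_eq_split e, sum_eq_split e]

lemma finite_pair (j I N : ℕ) :
    Finite {x : (Fin j → ℕ) × ℕ //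
        wt x.1 + (j + 1) * x.2 = N ∧ (∑ t, x.1 t) + x.2 ≤ I} := by
  haveI := finite_wt_eq (j + 1) N (fun f => (∑ t, f t) ≤ I)
  exact Finite.of_equiv {f : Fin (j + 1) → ℕ // wt f = N ∧ (∑ t, f t) ≤ I}
    ((snocE j).subtypeEquiv (fun e => by rw [wt_eq_split e, sum_eq_split e]))

lemma box_rec (j i n : ℕ) :
    bcard (j + 1) (i + 1) n
      = bcard j (i + 1) n + (if j + 1 ≤ n then bcard (j + 1) i (n - (j + 1)) else 0) := by
  classical
  rw [bcard_pair]
  haveI := finite_pair j (i + 1) n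
  set X := {x : (Fin j → ℕ) × ℕ //
      wt x.1 + (j + 1) * x.2 = n ∧ (∑ t, x.1 t) + x.2 ≤ i + 1} with hX
  have hsplit : Nat.card X
      = Nat.card {x : X // x.1.2 = 0} + Nat.card {x : X // ¬ x.1.2 = 0} := by
    rw [← Nat.card_sum]
    exact Nat.card_congr (Equiv.sumCompl (fun x : X => x.1.2 = 0)).symm
  rw [hsplit]
  congr 1
  · refine Nat.card_congr ?_
    refine
      { toFun := fun x => ⟨x.1.1.1, ?_, ?_⟩
        invFun := fun e => ⟨⟨(e.1, 0), by
          refine ⟨?_, ?_⟩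
          · simpa using e.2.1
          · simpa using e.2.2⟩, rfl⟩
        left_inv := fun x => by
          apply Subtype.ext; apply Subtype.ext
          exact Prod.ext rfl x.2.symm
        right_inv := fun e => by apply Subtype.ext; rfl }
    · have h1 := x.1.2.1
      have h2 := x.2
      rw [h2] at h1
      simpa using h1
    · have h1 := x.1.2.2
      have h2 := x.2
      rw [h2] at h1
      simpa using h1
  · by_cases hc : j + 1 ≤ n
    · rw [if_pos hc, bcard_pair]
      refine Nat.card_congr ?_
      refine
        { toFun := fun x => ⟨(x.1.1.1, x.1.1.2 - 1), ?_⟩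
          invFun := fun y => ⟨⟨(y.1.1, y.1.2 + 1), ?_⟩, by simp⟩
          left_inv := fun x => by
            apply Subtype.ext; apply Subtype.ext
            refine Prod.ext rfl ?_
            have := x.2
            simp only at this ⊢
            omega
          right_inv := fun y => by
            apply Subtype.ext
            rfl }
      · obtain ⟨⟨⟨e, r⟩, ⟨hw, hs⟩⟩, hr⟩ := x
        simp only at hr hw hs ⊢
        obtain ⟨r', rfl⟩ : ∃ r', r = r' + 1 := ⟨r - 1, by omega⟩
        have hmul : (j + 1) * (r' + 1) = (j + 1) * r' + (j + 1) := by ring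
        have hmul2 : (j + 1) * (r' + 1 - 1) = (j + 1) * r' := by norm_num
        constructor <;> omega
      · obtain ⟨⟨e, r'⟩, ⟨hw, hs⟩⟩ := y
        simp only at hw hs ⊢
        have hmul : (j + 1) * (r' + 1) = (j + 1) * r' + (j + 1) := by ring
        constructor <;> omega
    · rw [if_neg hc]
      haveI : IsEmpty {x : X // ¬ x.1.2 = 0} := by
        refine ⟨fun x => ?_⟩
        obtain ⟨⟨⟨e, r⟩, ⟨hw, hs⟩⟩, hr⟩ := x
        simp only at hr hw hs
        have : j + 1 ≤ (j + 1) * r := Nat.le_mul_of_pos_right _ (by omega)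
        omega
      exact Nat.card_of_isEmpty

lemma mkB_rec (j i : ℕ) :
    mkB (j + 1) (i + 1)
      = mkB j (i + 1) + (PowerSeries.X : PowerSeries ℚ) ^ (j + 1) * mkB (j + 1) i := by
  ext n
  rw [map_add, mkB, mkB, mkB, PowerSeries.coeff_mk,
    PowerSeries.coeff_X_pow_mul' _ (j + 1) n, box_rec, PowerSeries.coeff_mk]
  by_cases hc : j + 1 ≤ n
  · rw [if_pos hc, if_pos hc, PowerSeries.coeff_mk]
    push_cast
    ring
  · rw [if_neg hc, if_neg hc]
    push_cast
    ring

lemma box_gf (i : ℕ) : ∀ j, mkB j i * (qPoch i * qPoch j) = qPoch (i + j) := by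
  induction i with
  | zero =>
    intro j
    have h0 : qPoch 0 = 1 := by simp [qPoch]
    rw [mkB_zero_right, h0, one_mul, one_mul, Nat.zero_add]
  | succ i ihi =>
    intro j
    induction j with
    | zero =>
      rw [mkB_zero_left]
      have h0 : qPoch 0 = 1 := by simp [qPoch]
      rw [h0]
      ring
    | succ j ihj =>
      have h1 := ihj
      have h2 := ihi (j + 1)
      have hh : i + (j + 1) = i + 1 + j := by omega
      rw [hh] at h2
      rw [mkB_rec]
      have hq : qPoch (i + 1 + (j + 1)) = qPoch (i + 1 + j)
          * (1 - (PowerSeries.X : PowerSeries ℚ) ^ (i + 1 + j + 1)) := qPoch_succ _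
      rw [hq, qPoch_succ j, qPoch_succ i] at *
      have hxp : (PowerSeries.X : PowerSeries ℚ) ^ (i + 1 + j + 1)
          = (PowerSeries.X : PowerSeries ℚ) ^ (j + 1) * (PowerSeries.X : PowerSeries ℚ) ^ (i + 1) := by
        rw [← pow_add]
        congr 1
        omega
      rw [hxp]
      linear_combination (1 - (PowerSeries.X : PowerSeries ℚ) ^ (j + 1)) * h1
        + (PowerSeries.X : PowerSeries ℚ) ^ (j + 1)
          * (1 - (PowerSeries.X : PowerSeries ℚ) ^ (i + 1)) * h2

noncomputable def master_equiv (i j N : ℕ) :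
    {p : StrictPartition × StrictPartition //
        p.1.len = i + j ∧ p.2.len = j ∧ p.2.first ≤ p.1.len ∧
        p.1.size + p.2.size = N}
      ≃ {x : (Fin (i + j) → ℕ) × (Fin j → ℕ) //
          ((tri (i + j) + wt x.1) + (tri j + wt x.2) = N ∧ (∑ t, x.2 t) ≤ i)} where
  toFun p := ⟨(spEquiv (i + j) ⟨p.1.1, p.2.1⟩, spEquiv j ⟨p.1.2, p.2.2.1⟩), by
    constructor
    · rw [← size_spEquiv, ← size_spEquiv]
      exact p.2.2.2.2
    · have hfirst : p.1.2.first = j + ∑ t, spEquiv j ⟨p.1.2, p.2.2.1⟩ t :=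
        first_spEquiv (k := j) ⟨p.1.2, p.2.2.1⟩
      have hle := p.2.2.2.1
      rw [p.2.1] at hle
      show (∑ t, spEquiv j ⟨p.1.2, p.2.2.1⟩ t) ≤ i
      omega⟩
  invFun x := ⟨(((spEquiv (i + j)).symm x.1.1).1, ((spEquiv j).symm x.1.2).1), by
    refine ⟨((spEquiv (i + j)).symm x.1.1).2, ((spEquiv j).symm x.1.2).2, ?_, ?_⟩
    · rw [first_symm_spEquiv, ((spEquiv (i + j)).symm x.1.1).2]
      have := x.2.2
      omega
    · rw [size_symm_spEquiv, size_symm_spEquiv]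
      have := x.2.1
      omega⟩
  left_inv p := by
    apply Subtype.ext
    apply Prod.ext
    · exact congrArg Subtype.val ((spEquiv (i + j)).symm_apply_apply ⟨p.1.1, p.2.1⟩)
    · exact congrArg Subtype.val ((spEquiv j).symm_apply_apply ⟨p.1.2, p.2.2.1⟩)
  right_inv x := by
    apply Subtype.ext
    apply Prod.ext
    · exact (spEquiv (i + j)).apply_symm_apply x.1.1
    · exact (spEquiv j).apply_symm_apply x.1.2

lemma key_card (i j N : ℕ) :
    Nat.card {p : StrictPartition × StrictPartition //
        p.1.len = i + j ∧ p.2.len = j ∧ p.2.first ≤ p.1.len ∧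
        p.1.size + p.2.size = N}
      = if tri (i + j) + tri j ≤ N then
          ∑ x ∈ Finset.HasAntidiagonal.antidiagonal (N - (tri (i + j) + tri j)),
            Nat.card {e : Fin (i + j) → ℕ // wt e = x.1} * bcard j i x.2
        else 0 := by
  rw [Nat.card_congr (master_equiv i j N)]
  by_cases hc : tri (i + j) + tri j ≤ N
  · rw [if_pos hc]
    have hE2 : {x : (Fin (i + j) → ℕ) × (Fin j → ℕ) //
          ((tri (i + j) + wt x.1) + (tri j + wt x.2) = N ∧ (∑ t, x.2 t) ≤ i)}
        ≃ {q : (Fin (i + j) → ℕ) × {f : Fin j → ℕ // (∑ t, f t) ≤ i} //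
            wt q.1 + wt q.2.1 = N - (tri (i + j) + tri j)} :=
      { toFun := fun x => ⟨(x.1.1, ⟨x.1.2, x.2.2⟩), by
          show wt x.1.1 + wt x.1.2 = N - (tri (i + j) + tri j)
          have := x.2.1
          omega⟩
        invFun := fun q => ⟨(q.1.1, q.1.2.1), ⟨by
          show (tri (i + j) + wt q.1.1) + (tri j + wt q.1.2.1) = N
          have := q.2
          omega, q.1.2.2⟩⟩
        left_inv := fun x => by apply Subtype.ext; rfl
        right_inv := fun q => by
          apply Subtype.ext
          refine Prod.ext rfl ?_
          apply Subtype.ext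
          rfl }
    rw [Nat.card_congr hE2]
    rw [conv (fun e : Fin (i + j) → ℕ => wt e)
      (fun b : {f : Fin j → ℕ // (∑ t, f t) ≤ i} => wt b.1)
      (fun n => finite_wt_le (i + j) n)
      (fun n => by
        haveI := finite_wt_le j n
        exact Finite.of_injective
          (fun x => (⟨x.1.1, x.2⟩ : {f : Fin j → ℕ // wt f ≤ n}))
          (fun x y h => by
            apply Subtype.ext; apply Subtype.ext
            exact congrArg (fun z => z.val) h))]
    refine Finset.sum_congr rfl fun x hx => ?_
    congr 1
    rw [bcard]
    refine Nat.card_congr ?_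
    exact
      { toFun := fun b => ⟨b.1.1, b.2, b.1.2⟩
        invFun := fun f => ⟨⟨f.1, f.2.2⟩, f.2.1⟩
        left_inv := fun b => by apply Subtype.ext; apply Subtype.ext; rfl
        right_inv := fun f => by apply Subtype.ext; rfl }
  · rw [if_neg hc]
    haveI : IsEmpty {x : (Fin (i + j) → ℕ) × (Fin j → ℕ) //
        ((tri (i + j) + wt x.1) + (tri j + wt x.2) = N ∧ (∑ t, x.2 t) ≤ i)} :=
      ⟨fun x => hc (by have := x.2.1; omega)⟩
    exact Nat.card_of_isEmpty

lemma final (i j : ℕ) :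
    PowerSeries.mk (fun N =>
        (Nat.card {p : StrictPartition × StrictPartition //
          p.1.len = i + j ∧ p.2.len = j ∧ p.2.first ≤ p.1.len ∧
          p.1.size + p.2.size = N} : ℚ)) =
      (PowerSeries.X : PowerSeries ℚ) ^ (tri (i + j) + tri j) *
        ((qPoch i)⁻¹ * (qPoch j)⁻¹) := by
  have hE := gf_strict (i + j)
  have hB := box_gf i j
  have hi1 : qPoch i * (qPoch i)⁻¹ = 1 :=
    PowerSeries.mul_inv_cancel _ (by rw [constantCoeff_qPoch]; norm_num)
  have hj1 : qPoch j * (qPoch j)⁻¹ = 1 :=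
    PowerSeries.mul_inv_cancel _ (by rw [constantCoeff_qPoch]; norm_num)
  set E := PowerSeries.mk
    (fun n => (Nat.card {e : Fin (i + j) → ℕ // wt e = n} : ℚ)) with hEdef
  have hprod : E * mkB j i = (qPoch i)⁻¹ * (qPoch j)⁻¹ := by
    calc E * mkB j i
        = E * mkB j i * (qPoch i * (qPoch i)⁻¹) * (qPoch j * (qPoch j)⁻¹) := by
          rw [hi1, hj1, mul_one, mul_one]
      _ = (E * (mkB j i * (qPoch i * qPoch j))) * ((qPoch i)⁻¹ * (qPoch j)⁻¹) := by
          ring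
      _ = (E * qPoch (i + j)) * ((qPoch i)⁻¹ * (qPoch j)⁻¹) := by rw [hB]
      _ = (qPoch i)⁻¹ * (qPoch j)⁻¹ := by rw [hE, one_mul]
  rw [← hprod]
  ext N
  rw [PowerSeries.coeff_mk, PowerSeries.coeff_X_pow_mul' _ (tri (i + j) + tri j) N,
    key_card]
  by_cases hc : tri (i + j) + tri j ≤ N
  · rw [if_pos hc, if_pos hc, PowerSeries.coeff_mul]
    push_cast
    refine Finset.sum_congr rfl fun x hx => ?_
    rw [hEdef, PowerSeries.coeff_mk, mkB, PowerSeries.coeff_mk]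
  · rw [if_neg hc, if_neg hc]
    norm_num

end PairGFAux

/-- The generating function of pairs `(λ, μ)` of strict partitions with
`ℓ(λ) = i + j`, `ℓ(μ) = j` and `μ₁ ≤ ℓ(λ)` equals
`q^{(i+j)(i+j+1)/2 + j(j+1)/2} / ((q;q)_i (q;q)_j)`. -/
theorem pair_gf (i j : ℕ) :
    PowerSeries.mk (fun N =>
        (Nat.card {p : StrictPartition × StrictPartition //
          p.1.len = i + j ∧ p.2.len = j ∧ p.2.first ≤ p.1.len ∧
          p.1.size + p.2.size = N} : ℚ)) =
      (PowerSeries.X : PowerSeries ℚ) ^ ((i + j) * (i + j + 1) / 2 + j * (j + 1) / 2) *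
        (qPoch i)⁻¹ * (qPoch j)⁻¹ := by
  have h := PairGFAux.final i j
  rw [PairGFAux.tri_eq, PairGFAux.tri_eq] at h
  rw [h, mul_assoc]
end

section
/- Let S_2 be the set of pairs (λ, μ) of strict partitions with ℓ(λ) ≥ μ_1. Then ∑_{(λ,μ)∈S_2} x^{ℓ(λ)+ℓ(μ)} q^{|λ|+|μ|} = ∑_{i,j≥0} q^{i(i+1)/2 + 2·j(j+1)/2 + i·j} x^{i+2j} / ((q;q)_i (q;q)_j). -/
open Finset PowerSeries

namespace StrictPartition
lemma ext' {μ ν : StrictPartition} (h : μ.parts = ν.parts) : μ = ν := by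
  cases μ; cases ν; simpa using h
end StrictPartition

namespace S2aux
open StrictPartition

/- ------------ list lemmas ------------- -/
lemma length_le_sum {l : List ℕ} (h : ∀ p ∈ l, 0 < p) : l.length ≤ l.sum := by
  induction l with
  | nil => simp
  | cons a t ih =>
    have h1 := h a (by simp)
    have h2 := ih (fun p hp => h p (by simp [hp]))
    simp only [List.length_cons, List.sum_cons]; omega

lemma mem_le_sum {l : List ℕ} {x : ℕ} (hx : x ∈ l) : x ≤ l.sum :=
  List.single_le_sum (fun y _ => Nat.zero_le y) x hx

lemma headI_mem {l : List ℕ} (h : l ≠ []) : l.headI ∈ l := by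
  cases l with
  | nil => simp at h
  | cons a t => simp

lemma le_headI {l : List ℕ} (hs : l.Pairwise (· > ·)) {x : ℕ} (hx : x ∈ l) : x ≤ l.headI := by
  cases l with
  | nil => simp at hx
  | cons a t =>
    rcases List.mem_cons.1 hx with rfl | hx
    · simp
    · exact le_of_lt ((List.pairwise_cons.1 hs).1 x hx)

lemma tail_lt_headI {l : List ℕ} (hs : l.Pairwise (· > ·)) {x : ℕ} (hx : x ∈ l.tail) : x < l.headI := by
  cases l with
  | nil => simp at hx
  | cons a t => exact (List.pairwise_cons.1 hs).1 x hx

lemma length_le_headI {l : List ℕ} (hs : l.Pairwise (· > ·)) (hp : ∀ p ∈ l, 0 < p) :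
    l ≠ [] → l.length ≤ l.headI := by
  induction l with
  | nil => simp
  | cons a t ih =>
    intro _
    rcases eq_or_ne t [] with rfl | ht
    · simpa [Nat.one_le_iff_ne_zero, Nat.pos_iff_ne_zero] using hp a (by simp)
    · have h1 : t.length ≤ t.headI := ih (List.pairwise_cons.1 hs).2 (fun p hp' => hp p (by simp [hp'])) ht
      have h2 : t.headI < a := (List.pairwise_cons.1 hs).1 _ (headI_mem ht)
      simp only [List.length_cons, List.headI_cons]; omega

lemma headI_cons_tail {l : List ℕ} (h : l ≠ []) : l.headI :: l.tail = l := by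
  cases l with
  | nil => simp at h
  | cons a t => rfl

lemma sum_map_pred {l : List ℕ} (hp : ∀ p ∈ l, 0 < p) : (l.map (· - 1)).sum = l.sum - l.length := by
  induction l with
  | nil => simp
  | cons a t ih =>
    have h1 := hp a (by simp)
    have h3 : t.length ≤ t.sum := length_le_sum (fun p hp' => hp p (by simp [hp']))
    simp only [List.map_cons, List.sum_cons, List.length_cons, ih (fun p hp' => hp p (by simp [hp']))]
    omega

lemma sum_map_succ (l : List ℕ) : (l.map (· + 1)).sum = l.sum + l.length := by
  induction l with
  | nil => simp
  | cons a t ih => simp only [List.map_cons, List.sum_cons, List.length_cons, ih]; omega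

lemma sorted_map_pred {l : List ℕ} (hs : l.Pairwise (· > ·)) (hp : ∀ p ∈ l, 0 < p) :
    (l.map (· - 1)).Pairwise (· > ·) := by
  rw [List.pairwise_map]
  refine (List.Pairwise.imp_of_mem ?_ hs)
  intro a b ha hb hab
  have := hp b hb
  omega

lemma sorted_map_succ {l : List ℕ} (hs : l.Pairwise (· > ·)) : (l.map (· + 1)).Pairwise (· > ·) := by
  rw [List.pairwise_map]
  exact hs.imp (fun hab => by omega)

/- ------------ finiteness ------------- -/
lemma finite_subtype_list {Q : List ℕ → Prop} {N : ℕ}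
    (h : ∀ l, Q l → l.length ≤ N ∧ ∀ x ∈ l, x ≤ N) : Finite {l : List ℕ // Q l} := by
  have hfin : {l : List (Fin (N + 1)) | l.length ≤ N}.Finite := List.finite_length_le _ _
  haveI := hfin.to_subtype
  refine Finite.of_injective
    (fun x => (⟨x.1.map (fun v => (⟨min v N, by omega⟩ : Fin (N + 1))),
      by simpa using (h x.1 x.2).1⟩ : {l : List (Fin (N+1)) | l.length ≤ N})) ?_
  intro x y hxy
  have := congrArg (fun l => (l : List (Fin (N+1))).map Fin.val) (Subtype.ext_iff.1 hxy)
  simp only [List.map_map] at this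
  have hx : ∀ {z : {l : List ℕ // Q l}}, z.1.map (Fin.val ∘ fun v => (⟨min v N, by omega⟩ : Fin (N+1))) = z.1 := by
    intro z
    rw [List.map_congr_left (g := id), List.map_id]
    intro v hv
    have := (h z.1 z.2).2 v hv
    simp [Nat.min_eq_left this]
  rw [hx, hx] at this
  exact Subtype.ext this

lemma finite_subtype_sp {Q : StrictPartition → Prop} {N : ℕ}
    (h : ∀ μ, Q μ → μ.size ≤ N) : Finite {μ : StrictPartition // Q μ} := by
  haveI : Finite {l : List ℕ // l.Pairwise (· > ·) ∧ (∀ p ∈ l, 0 < p) ∧ ∃ h1 h2, Q ⟨l, h1, h2⟩} := by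
    apply finite_subtype_list (N := N)
    rintro l ⟨hs, hp, h1, h2, hq⟩
    have hsum : l.sum ≤ N := h _ hq
    exact ⟨le_trans (length_le_sum hp) hsum, fun x hx => le_trans (mem_le_sum hx) hsum⟩
  refine Finite.of_injective (fun x => (⟨x.1.parts, x.1.sorted, x.1.pos, x.1.pos, x.1.sorted, by
      simpa using x.2⟩ : {l : List ℕ // l.Pairwise (· > ·) ∧ (∀ p ∈ l, 0 < p) ∧ ∃ h1 h2, Q ⟨l, h1, h2⟩})) ?_
  intro x y hxy
  exact Subtype.ext (StrictPartition.ext' (Subtype.ext_iff.1 hxy))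

lemma finite_dlist {N : ℕ} {Q : List ℕ → Prop} (h : ∀ l, Q l → l.Pairwise (· > ·) ∧ l.sum = N) :
    Finite {l : List ℕ // Q l} := by
  apply finite_subtype_list (N := N + 1)
  intro l hq
  obtain ⟨hs, hsum⟩ := h l hq
  constructor
  · have hnd : l.Nodup := hs.nodup
    have hsub : l.toFinset ⊆ Finset.range (N + 1) := by
      intro x hx
      simp only [Finset.mem_range]
      have := mem_le_sum (List.mem_toFinset.1 hx)
      omega
    have := Finset.card_le_card hsub
    rwa [List.toFinset_card_of_nodup hnd, Finset.card_range] at this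
  · intro x hx
    have := mem_le_sum hx
    omega

/- ------------ the series ------------- -/
noncomputable def fS (a : ℕ) : PowerSeries ℚ :=
  PowerSeries.mk fun N => (Nat.card {μ : StrictPartition // μ.len = a ∧ μ.size = N} : ℚ)

noncomputable def dS (a : ℕ) : PowerSeries ℚ :=
  PowerSeries.mk fun N =>
    (Nat.card {l : List ℕ // l.Pairwise (· > ·) ∧ l.length = a ∧ l.sum = N} : ℚ)

noncomputable def gS (a b : ℕ) : PowerSeries ℚ :=
  PowerSeries.mk fun N =>
    (Nat.card {μ : StrictPartition // μ.first ≤ a ∧ μ.len = b ∧ μ.size = N} : ℚ)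

lemma fS_zero : fS 0 = 1 := by
  ext N
  rw [fS, coeff_mk, coeff_one]
  rcases eq_or_ne N 0 with rfl | hN
  · rw [if_pos rfl]
    norm_cast
    rw [Nat.card_eq_one_iff_unique]
    constructor
    · constructor
      rintro ⟨μ, h1, h2⟩ ⟨ν, k1, k2⟩
      have : μ.parts = [] := List.length_eq_zero_iff.1 h1
      have : ν.parts = [] := List.length_eq_zero_iff.1 k1
      exact Subtype.ext (StrictPartition.ext' (by simp_all))
    · exact ⟨⟨⟨[], by simp, by simp⟩, rfl, rfl⟩⟩
  · rw [if_neg hN]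
    norm_cast
    rw [Nat.card_eq_zero]
    left
    constructor
    rintro ⟨μ, h1, h2⟩
    have : μ.parts = [] := List.length_eq_zero_iff.1 h1
    exact hN (by rw [← h2]; simp [size, this])

lemma gS_zero (a : ℕ) : gS a 0 = 1 := by
  ext N
  rw [gS, coeff_mk, coeff_one]
  rcases eq_or_ne N 0 with rfl | hN
  · rw [if_pos rfl]
    norm_cast
    rw [Nat.card_eq_one_iff_unique]
    constructor
    · constructor
      rintro ⟨μ, _, h1, h2⟩ ⟨ν, _, k1, k2⟩
      have : μ.parts = [] := List.length_eq_zero_iff.1 h1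
      have : ν.parts = [] := List.length_eq_zero_iff.1 k1
      exact Subtype.ext (StrictPartition.ext' (by simp_all))
    · exact ⟨⟨⟨[], by simp, by simp⟩, by simp [first], rfl, rfl⟩⟩
  · rw [if_neg hN]
    norm_cast
    rw [Nat.card_eq_zero]
    left
    constructor
    rintro ⟨μ, _, h1, h2⟩
    have : μ.parts = [] := List.length_eq_zero_iff.1 h1
    exact hN (by rw [← h2]; simp [size, this])

lemma gS_of_lt {a b : ℕ} (h : a < b) : gS a b = 0 := by
  ext N
  rw [gS, coeff_mk, map_zero]
  norm_cast
  rw [Nat.card_eq_zero]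
  left
  constructor
  rintro ⟨μ, h1, h2, h3⟩
  have hne : μ.parts ≠ [] := by
    intro hc
    rw [len, hc] at h2; simp at h2; omega
  have := length_le_headI μ.sorted μ.pos hne
  rw [len] at h2
  rw [first] at h1
  omega


/- ------------ fS = dS * X^a ------------- -/
lemma fS_eq (a : ℕ) : fS a = dS a * X ^ a := by
  ext N
  rw [fS, dS, coeff_mk, PowerSeries.coeff_mul_X_pow']
  split_ifs with h
  · rw [coeff_mk]
    norm_cast
    apply Nat.card_congr
    refine
      { toFun := fun x => ⟨x.1.parts.map (· - 1), sorted_map_pred x.1.sorted x.1.pos,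
          by simp [← x.2.1, len], by
            rw [sum_map_pred x.1.pos]
            have h1 : x.1.parts.length = a := x.2.1
            have h2 : x.1.parts.sum = N := x.2.2
            omega⟩
        invFun := fun x => ⟨⟨x.1.map (· + 1), by simp, sorted_map_succ x.2.1⟩,
          by simp [len, x.2.2.1], by
            show (x.1.map (· + 1)).sum = N
            rw [sum_map_succ, x.2.2.1, x.2.2.2]; omega⟩
        left_inv := ?_
        right_inv := ?_ }
    · rintro ⟨μ, h1, h2⟩
      apply Subtype.ext
      apply StrictPartition.ext'
      show (μ.parts.map (· - 1)).map (· + 1) = μ.parts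
      rw [List.map_map, List.map_congr_left (g := id), List.map_id]
      intro v hv
      have := μ.pos v hv
      simp; omega
    · rintro ⟨l, h1, h2, h3⟩
      apply Subtype.ext
      show (l.map (· + 1)).map (· - 1) = l
      rw [List.map_map, List.map_congr_left (g := id), List.map_id]
      intro v hv
      simp
  · norm_cast
    rw [Nat.card_eq_zero]
    left
    constructor
    rintro ⟨μ, h1, h2⟩
    have := length_le_sum μ.pos
    rw [show μ.parts.length = μ.len from rfl, show μ.parts.sum = μ.size from rfl, h1, h2] at this
    omega

/- ------------ dS recursion ------------- -/
lemma zero_last {l : List ℕ} (hs : l.Pairwise (· > ·)) (hne : l ≠ []) (h : ¬ ∀ p ∈ l, 0 < p) :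
    l = l.dropLast ++ [0] ∧ (∀ p ∈ l.dropLast, 0 < p) ∧ l.dropLast.Pairwise (· > ·) := by
  push_neg at h
  obtain ⟨x, hx, hx0⟩ := h
  have hx0 : x = 0 := by omega
  subst hx0
  have hd : l.dropLast ++ [l.getLast hne] = l := List.dropLast_append_getLast hne
  have hs' := hs
  rw [← hd] at hs'
  rw [List.pairwise_append] at hs'
  obtain ⟨s1, _, hrel⟩ := hs'
  have hlast : l.getLast hne = 0 := by
    rw [← hd] at hx
    rcases List.mem_append.1 hx with hx' | hx'
    · exact absurd (hrel 0 hx' (l.getLast hne) (List.mem_singleton_self _)) (by omega)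
    · simp at hx'; omega
  refine ⟨by rw [← hlast]; exact hd.symm, ?_, s1⟩
  intro p hp
  have := hrel p hp (l.getLast hne) (List.mem_singleton_self _)
  omega

lemma dS_succ (a : ℕ) : dS (a + 1) = fS (a + 1) + fS a := by
  ext N
  rw [dS, fS, fS, map_add, coeff_mk, coeff_mk, coeff_mk]
  norm_cast
  haveI : Finite {μ : StrictPartition // μ.len = a + 1 ∧ μ.size = N} :=
    finite_subtype_sp (N := N) (fun μ h => h.2.le)
  haveI : Finite {μ : StrictPartition // μ.len = a ∧ μ.size = N} :=
    finite_subtype_sp (N := N) (fun μ h => h.2.le)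
  rw [← Nat.card_sum]
  apply Nat.card_congr
  refine
    { toFun := fun x =>
        match x with
        | ⟨l, hsort, hlen, hsum⟩ =>
          if h : ∀ p ∈ l, 0 < p then
            Sum.inl ⟨⟨l, h, hsort⟩, hlen, hsum⟩
          else
            have hne : l ≠ [] := by intro hc; rw [hc] at hlen; simp at hlen
            Sum.inr ⟨⟨l.dropLast, (zero_last hsort hne h).2.1, (zero_last hsort hne h).2.2⟩, by
              show l.dropLast.length = a
              rw [List.length_dropLast, hlen]; omega, by
              show l.dropLast.sum = N
              have h2 := congrArg List.sum (zero_last hsort hne h).1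
              rw [List.sum_append] at h2
              simp at h2
              omega⟩
      invFun := fun x =>
        match x with
        | Sum.inl μ => ⟨μ.1.parts, μ.1.sorted, μ.2.1, μ.2.2⟩
        | Sum.inr μ => ⟨μ.1.parts ++ [0], by
            rw [List.pairwise_append]
            exact ⟨μ.1.sorted, by simp, fun p hp q hq => by
              simp at hq; subst hq; exact μ.1.pos p hp⟩, by
            have h1 : μ.1.parts.length = a := μ.2.1
            simp [h1], by
            have h2 : μ.1.parts.sum = N := μ.2.2
            simp [h2]⟩
      left_inv := ?_
      right_inv := ?_ }
  · rintro ⟨l, hsort, hlen, hsum⟩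
    by_cases h : ∀ p ∈ l, 0 < p
    · simp only [dif_pos h]
    · simp only [dif_neg h]
      have hne : l ≠ [] := by intro hc; rw [hc] at hlen; simp at hlen
      exact Subtype.ext (zero_last hsort hne h).1.symm
  · rintro (⟨μ, h1, h2⟩ | ⟨μ, h1, h2⟩)
    · simp only [dif_pos μ.pos]
    · have hcond : ¬ ∀ p ∈ μ.parts ++ [0], 0 < p := by
        intro hc
        simpa using hc 0 (by simp)
      simp only [dif_neg hcond]
      congr 1
      apply Subtype.ext
      apply StrictPartition.ext'
      show (μ.parts ++ [0]).dropLast = μ.parts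
      exact List.dropLast_concat ..


lemma size_pos_first {μ : StrictPartition} (h : μ.parts ≠ []) : μ.first ≤ μ.size :=
  mem_le_sum (headI_mem h)

lemma gS_succ (a b : ℕ) : gS (a + 1) (b + 1) = gS a (b + 1) + gS a b * X ^ (a + 1) := by
  ext N
  rw [gS, map_add, coeff_mk, PowerSeries.coeff_mul_X_pow', gS, gS, coeff_mk, coeff_mk]
  haveI F1 : Finite {μ : StrictPartition // μ.first ≤ a ∧ μ.len = b + 1 ∧ μ.size = N} :=
    finite_subtype_sp (N := N) (fun μ h => h.2.2.le)
  split_ifs with h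
  · norm_cast
    haveI : Finite {μ : StrictPartition // μ.first ≤ a ∧ μ.len = b ∧ μ.size = N - (a+1)} :=
      finite_subtype_sp (N := N) (fun μ h' => h'.2.2.le.trans (by omega))
    rw [← Nat.card_sum]
    apply Nat.card_congr
    refine
      { toFun := fun x =>
          match x with
          | ⟨μ, h1, h2, h3⟩ =>
            if hc : μ.first ≤ a then
              Sum.inl ⟨μ, hc, h2, h3⟩
            else
              have hne : μ.parts ≠ [] := by
                intro hcon
                have : μ.len = 0 := by simp [StrictPartition.len, hcon]
                omega
              have hfirst : μ.first = a + 1 := by omega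
              Sum.inr ⟨⟨μ.parts.tail,
                  fun p hp => μ.pos p (List.mem_of_mem_tail hp),
                  by
                    have := μ.sorted
                    rw [← headI_cons_tail hne] at this
                    exact (List.pairwise_cons.1 this).2⟩, by
                show μ.parts.tail.headI ≤ a
                rcases eq_or_ne μ.parts.tail [] with h' | h'
                · simp [h']
                · have := tail_lt_headI μ.sorted (headI_mem h')
                  have hf : μ.parts.headI = a + 1 := hfirst
                  omega, by
                show μ.parts.tail.length = b
                have : μ.parts.length = b + 1 := h2
                rw [List.length_tail]; omega, by
                show μ.parts.tail.sum = N - (a + 1)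
                have hsum := congrArg List.sum (headI_cons_tail hne)
                rw [List.sum_cons] at hsum
                have h3' : μ.parts.sum = N := h3
                have hf : μ.parts.headI = a + 1 := hfirst
                omega⟩
        invFun := fun x =>
          match x with
          | Sum.inl ⟨μ, h1, h2, h3⟩ => ⟨μ, by omega, h2, h3⟩
          | Sum.inr ⟨ν, h1, h2, h3⟩ =>
            ⟨⟨(a + 1) :: ν.parts, by
                rintro p hp
                rcases List.mem_cons.1 hp with rfl | hp'
                · omega
                · exact ν.pos p hp', by
                rw [List.pairwise_cons]
                refine ⟨fun x hx => ?_, ν.sorted⟩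
                have := le_headI ν.sorted hx
                have h1' : ν.parts.headI ≤ a := h1
                omega⟩, by
              show ((a+1) :: ν.parts).headI ≤ a + 1
              simp, by
              show ((a+1) :: ν.parts).length = b + 1
              have : ν.parts.length = b := h2
              simp [this], by
              show ((a+1) :: ν.parts).sum = N
              have h3' : ν.parts.sum = N - (a + 1) := h3
              simp [h3']; omega⟩
        left_inv := ?_
        right_inv := ?_ }
    · rintro ⟨μ, h1, h2, h3⟩
      by_cases hc : μ.first ≤ a
      · simp only [dif_pos hc]
      · simp only [dif_neg hc]
        apply Subtype.ext
        apply StrictPartition.ext'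
        show (a + 1) :: μ.parts.tail = μ.parts
        have hne : μ.parts ≠ [] := by
          intro hcon
          have : μ.len = 0 := by simp [StrictPartition.len, hcon]
          omega
        have hf : μ.parts.headI = a + 1 := by
          have : μ.first ≤ a + 1 := h1
          have : ¬ μ.first ≤ a := hc
          show μ.parts.headI = a + 1
          have hf1 : μ.first = μ.parts.headI := rfl
          omega
        rw [← hf]
        exact headI_cons_tail hne
    · rintro (⟨μ, h1, h2, h3⟩ | ⟨ν, h1, h2, h3⟩)
      · simp only [dif_pos h1]
      · dsimp only
        split_ifs with hc
        · exfalso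
          revert hc
          show (((a+1) :: ν.parts).headI ≤ a) → False
          simp
        · rfl
  · -- N < a + 1 : the inr side is impossible
    push_neg at h
    norm_cast
    rw [add_zero]
    apply Nat.card_congr
    apply Equiv.subtypeEquivRight
    intro μ
    constructor
    · rintro ⟨h1, h2, h3⟩
      refine ⟨?_, h2, h3⟩
      have hne : μ.parts ≠ [] := by
        intro hcon
        have : μ.len = 0 := by simp [StrictPartition.len, hcon]
        omega
      have := size_pos_first hne
      omega
    · rintro ⟨h1, h2, h3⟩
      exact ⟨by omega, h2, h3⟩


/- ------------ algebra ------------- -/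
lemma tri_succ (a : ℕ) : (a + 1) * (a + 2) / 2 = a * (a + 1) / 2 + (a + 1) := by
  obtain ⟨k, hk⟩ := Nat.even_mul_succ_self a
  have h1 : (a + 1) * (a + 2) = a * (a + 1) + 2 * (a + 1) := by ring
  rw [h1, hk]
  omega

lemma qPoch_zero : qPoch 0 = 1 := by simp [qPoch]

lemma qPoch_succ (n : ℕ) : qPoch (n + 1) = qPoch n * (1 - X ^ (n + 1)) :=
  Finset.prod_range_succ _ _

lemma constantCoeff_qPoch (n : ℕ) : constantCoeff (qPoch n) = 1 := by
  rw [qPoch, map_prod]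
  rw [Finset.prod_eq_one]
  intro j _
  simp

lemma qPoch_ne_zero (n : ℕ) : qPoch n ≠ 0 := by
  intro h
  have := congrArg (constantCoeff) h
  rw [constantCoeff_qPoch] at this
  simp at this

lemma qPoch_inv_mul (n : ℕ) : qPoch n * (qPoch n)⁻¹ = 1 :=
  PowerSeries.mul_inv_cancel _ (by rw [constantCoeff_qPoch]; norm_num)

lemma fS_rec (a : ℕ) : fS (a + 1) * (1 - X ^ (a + 1)) = fS a * X ^ (a + 1) := by
  have h := fS_eq (a + 1)
  rw [dS_succ] at h
  linear_combination h

lemma fS_mul : ∀ a : ℕ, fS a * qPoch a = X ^ (a * (a + 1) / 2) := by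
  intro a
  induction a with
  | zero => simp [fS_zero, qPoch_zero]
  | succ a ih =>
    have h := fS_rec a
    rw [qPoch_succ]
    have h2 : (X : PowerSeries ℚ) ^ ((a+1) * (a+2) / 2) = X ^ (a * (a+1)/2) * X ^ (a+1) := by
      rw [← pow_add, tri_succ]
    calc fS (a+1) * (qPoch a * (1 - X ^ (a+1)))
        = (fS (a+1) * (1 - X ^ (a+1))) * qPoch a := by ring
      _ = (fS a * X ^ (a+1)) * qPoch a := by rw [h]
      _ = (fS a * qPoch a) * X ^ (a+1) := by ring
      _ = X ^ (a * (a+1)/2) * X ^ (a+1) := by rw [ih]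
      _ = X ^ ((a+1) * (a+2) / 2) := h2.symm

lemma gS_mul : ∀ a b : ℕ, b ≤ a →
    gS a b * (qPoch b * qPoch (a - b)) = X ^ (b * (b + 1) / 2) * qPoch a := by
  intro a
  induction a with
  | zero =>
    intro b hb
    interval_cases b
    simp [gS_zero, qPoch_zero]
  | succ a ih =>
    intro b hb
    match b with
    | 0 => simp [gS_zero, qPoch_zero]
    | c + 1 =>
      by_cases hca : c + 1 ≤ a
      · have h1 := ih (c + 1) hca
        have h2 := ih c (by omega)
        have hq1 : qPoch (a + 1 - (c + 1)) = qPoch (a - (c + 1)) * (1 - X ^ (a - c)) := by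
          rw [show a + 1 - (c + 1) = a - (c + 1) + 1 from by omega, qPoch_succ,
            show a - (c + 1) + 1 = a - c from by omega]
        have hq2 : qPoch (a - c) = qPoch (a - (c + 1)) * (1 - X ^ (a - c)) := by
          rw [show a - c = a - (c + 1) + 1 from by omega, qPoch_succ,
            show a - (c + 1) + 1 = a - c from by omega]
        rw [hq2] at h2
        have hp1 : (X : PowerSeries ℚ) ^ ((c + 1) * (c + 1 + 1) / 2)
            = X ^ (c * (c + 1) / 2) * X ^ (c + 1) := by
          rw [← pow_add, show c * (c+1)/2 + (c+1) = (c+1)*(c+2)/2 from (tri_succ c).symm]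
        have hp2 : (X : PowerSeries ℚ) ^ (a + 1) = X ^ (a - c) * X ^ (c + 1) := by
          rw [← pow_add, show a - c + (c + 1) = a + 1 from by omega]
        rw [qPoch_succ c] at h1
        rw [gS_succ, hq1, qPoch_succ a, qPoch_succ c]
        linear_combination (1 - (X : PowerSeries ℚ) ^ (a - c)) * h1
          + ((X : PowerSeries ℚ) ^ (a + 1) * (1 - X ^ (c + 1))) * h2
          + (qPoch a * ((X : PowerSeries ℚ) ^ (a + 1) - X ^ (a - c))) * hp1
          + (qPoch a * (X : PowerSeries ℚ) ^ (c * (c + 1) / 2)) * hp2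
      · have hc : c = a := by omega
        subst hc
        have haa : gS c c = X ^ (c * (c + 1) / 2) := by
          have h := ih c le_rfl
          rw [Nat.sub_self, qPoch_zero, mul_one] at h
          exact mul_right_cancel₀ (qPoch_ne_zero c) h
        rw [gS_succ, gS_of_lt (lt_add_one c), zero_add, Nat.sub_self, qPoch_zero, mul_one, haa,
          ← pow_add, show c * (c + 1) / 2 + (c + 1) = (c+1)*(c+1+1)/2 from (tri_succ c).symm]


/- ------------ product lemma ------------- -/
lemma nat_card_sigma {ι : Type*} [Fintype ι] (f : ι → Type*) [∀ i, Finite (f i)] :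
    Nat.card (Σ i, f i) = ∑ i, Nat.card (f i) := by
  haveI : ∀ i, Fintype (f i) := fun i => Fintype.ofFinite _
  simp [Nat.card_eq_fintype_card]

lemma pS_eq (a b : ℕ) :
    PowerSeries.mk (fun N => (Nat.card {p : StrictPartition × StrictPartition //
        p.2.first ≤ a ∧ p.1.len = a ∧ p.2.len = b ∧ p.1.size + p.2.size = N} : ℚ))
      = fS a * gS a b := by
  ext N
  rw [coeff_mk, PowerSeries.coeff_mul]
  simp only [fS, gS, coeff_mk]
  haveI FA : ∀ u : ℕ, Finite {lam : StrictPartition // lam.len = a ∧ lam.size = u} :=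
    fun u => finite_subtype_sp (N := u) (fun μ h => h.2.le)
  haveI FB : ∀ v : ℕ, Finite {mu : StrictPartition // mu.first ≤ a ∧ mu.len = b ∧ mu.size = v} :=
    fun v => finite_subtype_sp (N := v) (fun μ h => h.2.2.le)
  have key : Nat.card {p : StrictPartition × StrictPartition //
        p.2.first ≤ a ∧ p.1.len = a ∧ p.2.len = b ∧ p.1.size + p.2.size = N}
      = ∑ uv ∈ Finset.HasAntidiagonal.antidiagonal N,
          Nat.card {lam : StrictPartition // lam.len = a ∧ lam.size = uv.1}
            * Nat.card {mu : StrictPartition // mu.first ≤ a ∧ mu.len = b ∧ mu.size = uv.2} := by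
    have e : {p : StrictPartition × StrictPartition //
          p.2.first ≤ a ∧ p.1.len = a ∧ p.2.len = b ∧ p.1.size + p.2.size = N}
        ≃ Σ uv : (Finset.HasAntidiagonal.antidiagonal N : Finset (ℕ × ℕ)),
            ({lam : StrictPartition // lam.len = a ∧ lam.size = uv.1.1}
              × {mu : StrictPartition // mu.first ≤ a ∧ mu.len = b ∧ mu.size = uv.1.2}) :=
      { toFun := fun x =>
          ⟨⟨(x.1.1.size, x.1.2.size), Finset.HasAntidiagonal.mem_antidiagonal.2 x.2.2.2.2⟩,
            ⟨x.1.1, x.2.2.1, rfl⟩, ⟨x.1.2, x.2.1, x.2.2.2.1, rfl⟩⟩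
        invFun := fun y =>
          ⟨(y.2.1.1, y.2.2.1), y.2.2.2.1, y.2.1.2.1, y.2.2.2.2.1, by
            rw [y.2.1.2.2, y.2.2.2.2.2]
            exact Finset.HasAntidiagonal.mem_antidiagonal.1 y.1.2⟩
        left_inv := fun x => rfl
        right_inv := by
          rintro ⟨⟨⟨u, v⟩, huv⟩, ⟨lam, hl1, hl2⟩, ⟨mu, hm1, hm2, hm3⟩⟩
          obtain rfl : u = lam.size := hl2.symm
          obtain rfl : v = mu.size := hm3.symm
          rfl }
    rw [Nat.card_congr e, nat_card_sigma, ← Finset.sum_coe_sort (Finset.HasAntidiagonal.antidiagonal N)]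
    exact Finset.sum_congr rfl fun uv _ => Nat.card_prod _ _
  rw [key]
  push_cast
  rfl

/- ------------ splitting over lengths ------------- -/
lemma split (n : ℕ) :
    PowerSeries.mk (fun N => (Nat.card {p : StrictPartition × StrictPartition //
        p.2.first ≤ p.1.len ∧ p.1.len + p.2.len = n ∧ p.1.size + p.2.size = N} : ℚ))
      = ∑ b ∈ Finset.range (n + 1),
          PowerSeries.mk (fun N => (Nat.card {p : StrictPartition × StrictPartition //
            p.2.first ≤ (n - b) ∧ p.1.len = n - b ∧ p.2.len = b ∧ p.1.size + p.2.size = N} : ℚ)) := by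
  ext N
  rw [coeff_mk, map_sum]
  simp only [coeff_mk]
  haveI FF : ∀ b : ℕ, Finite {p : StrictPartition × StrictPartition //
      p.2.first ≤ (n - b) ∧ p.1.len = n - b ∧ p.2.len = b ∧ p.1.size + p.2.size = N} := by
    intro b
    haveI F1 : Finite {μ : StrictPartition // μ.size ≤ N} :=
      finite_subtype_sp (N := N) (fun μ h => h)
    refine Finite.of_injective (fun x =>
      ((⟨x.1.1, by have := x.2.2.2.2; omega⟩ : {μ : StrictPartition // μ.size ≤ N}),
       (⟨x.1.2, by have := x.2.2.2.2; omega⟩ : {μ : StrictPartition // μ.size ≤ N}))) ?_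
    rintro x y hxy
    apply Subtype.ext
    have h1 := congrArg (fun z => (z.1 : {μ : StrictPartition // μ.size ≤ N}).1) hxy
    have h2 := congrArg (fun z => (z.2 : {μ : StrictPartition // μ.size ≤ N}).1) hxy
    exact Prod.ext h1 h2
  have key : Nat.card {p : StrictPartition × StrictPartition //
        p.2.first ≤ p.1.len ∧ p.1.len + p.2.len = n ∧ p.1.size + p.2.size = N}
      = ∑ b ∈ Finset.range (n + 1),
          Nat.card {p : StrictPartition × StrictPartition //
            p.2.first ≤ (n - b) ∧ p.1.len = n - b ∧ p.2.len = b ∧ p.1.size + p.2.size = N} := by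
    have e : {p : StrictPartition × StrictPartition //
          p.2.first ≤ p.1.len ∧ p.1.len + p.2.len = n ∧ p.1.size + p.2.size = N}
        ≃ Σ b : (Finset.range (n + 1) : Finset ℕ),
            {p : StrictPartition × StrictPartition //
              p.2.first ≤ (n - b.1) ∧ p.1.len = n - b.1 ∧ p.2.len = b.1 ∧ p.1.size + p.2.size = N} :=
      { toFun := fun x =>
          ⟨⟨x.1.2.len, Finset.mem_range.2 (by have := x.2.2.1; omega)⟩,
            ⟨x.1, by
              show x.1.2.first ≤ n - x.1.2.len
              have := x.2.2.1; have := x.2.1; omega, by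
              show x.1.1.len = n - x.1.2.len
              have := x.2.2.1; omega, rfl,
              x.2.2.2⟩⟩
        invFun := fun y =>
          ⟨y.2.1, by
              have hb := Finset.mem_range.1 y.1.2
              have h1 := y.2.2.1
              have h2 := y.2.2.2.1
              have h3 := y.2.2.2.2.1
              omega, by
              have hb := Finset.mem_range.1 y.1.2
              have h2 := y.2.2.2.1
              have h3 := y.2.2.2.2.1
              omega, y.2.2.2.2.2⟩
        left_inv := fun x => rfl
        right_inv := by
          rintro ⟨⟨b, hb⟩, ⟨p, h1, h2, h3, h4⟩⟩
          obtain rfl : b = p.2.len := h3.symm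
          rfl }
    rw [Nat.card_congr e, nat_card_sigma, ← Finset.sum_coe_sort (Finset.range (n + 1))]
  rw [key]
  push_cast
  rfl

/- ------------ closed form for one term ------------- -/
lemma fS_inv (a : ℕ) : fS a = X ^ (a * (a + 1) / 2) * (qPoch a)⁻¹ := by
  calc fS a = fS a * (qPoch a * (qPoch a)⁻¹) := by rw [qPoch_inv_mul, mul_one]
    _ = (fS a * qPoch a) * (qPoch a)⁻¹ := by ring
    _ = X ^ (a * (a + 1) / 2) * (qPoch a)⁻¹ := by rw [fS_mul]

lemma gS_inv {a b : ℕ} (hab : b ≤ a) :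
    gS a b = X ^ (b * (b + 1) / 2) * qPoch a * (qPoch b)⁻¹ * (qPoch (a - b))⁻¹ := by
  calc gS a b
      = gS a b * ((qPoch b * (qPoch b)⁻¹) * (qPoch (a - b) * (qPoch (a - b))⁻¹)) := by
        rw [qPoch_inv_mul, qPoch_inv_mul, mul_one, mul_one]
    _ = (gS a b * (qPoch b * qPoch (a - b))) * ((qPoch b)⁻¹ * (qPoch (a - b))⁻¹) := by ring
    _ = (X ^ (b * (b + 1) / 2) * qPoch a) * ((qPoch b)⁻¹ * (qPoch (a - b))⁻¹) := by
        rw [gS_mul a b hab]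
    _ = X ^ (b * (b + 1) / 2) * qPoch a * (qPoch b)⁻¹ * (qPoch (a - b))⁻¹ := by ring

lemma term_eq {a b : ℕ} (hab : b ≤ a) :
    fS a * gS a b = X ^ (a * (a + 1) / 2 + b * (b + 1) / 2) * (qPoch (a - b))⁻¹ * (qPoch b)⁻¹ := by
  rw [fS_inv, gS_inv hab]
  calc X ^ (a * (a + 1) / 2) * (qPoch a)⁻¹
        * (X ^ (b * (b + 1) / 2) * qPoch a * (qPoch b)⁻¹ * (qPoch (a - b))⁻¹)
      = (qPoch a * (qPoch a)⁻¹) * (X ^ (a * (a + 1) / 2) * X ^ (b * (b + 1) / 2)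
          * (qPoch (a - b))⁻¹ * (qPoch b)⁻¹) := by ring
    _ = X ^ (a * (a + 1) / 2 + b * (b + 1) / 2) * (qPoch (a - b))⁻¹ * (qPoch b)⁻¹ := by
        rw [qPoch_inv_mul, one_mul, ← pow_add]

lemma expo {b n : ℕ} (h : 2 * b ≤ n) :
    (n - b) * ((n - b) + 1) / 2 + b * (b + 1) / 2
      = (n - 2 * b) * (n - 2 * b + 1) / 2 + b * (b + 1) + (n - 2 * b) * b := by
  obtain ⟨i, rfl⟩ : ∃ i, n = i + 2 * b := ⟨n - 2 * b, by omega⟩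
  have e1 : i + 2 * b - b = i + b := by omega
  have e2 : i + 2 * b - 2 * b = i := by omega
  rw [e1, e2]
  obtain ⟨x, hx⟩ := Nat.even_mul_succ_self (i + b)
  obtain ⟨y, hy⟩ := Nat.even_mul_succ_self i
  obtain ⟨z, hz⟩ := Nat.even_mul_succ_self b
  have ring1 : (i + b) * ((i + b) + 1) = i * (i + 1) + b * (b + 1) + 2 * (i * b) := by ring
  rw [hx, hy, hz] at ring1
  rw [hx, hz, show i * (i + 1) = y + y from hy]
  generalize i * b = m at ring1 ⊢
  omega

/- ------------ main computation ------------- -/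
lemma main (n : ℕ) :
    PowerSeries.mk (fun N => (Nat.card {p : StrictPartition × StrictPartition //
        p.2.first ≤ p.1.len ∧ p.1.len + p.2.len = n ∧ p.1.size + p.2.size = N} : ℚ))
      = ∑ j ∈ Finset.range (n / 2 + 1),
          (X : PowerSeries ℚ) ^
              ((n - 2 * j) * (n - 2 * j + 1) / 2 + j * (j + 1) + (n - 2 * j) * j)
            * (qPoch (n - 2 * j))⁻¹ * (qPoch j)⁻¹ := by
  rw [split n]
  have h1 : ∀ b ∈ Finset.range (n + 1),
      PowerSeries.mk (fun N => (Nat.card {p : StrictPartition × StrictPartition //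
          p.2.first ≤ (n - b) ∧ p.1.len = n - b ∧ p.2.len = b ∧ p.1.size + p.2.size = N} : ℚ))
        = fS (n - b) * gS (n - b) b := fun b _ => pS_eq (n - b) b
  rw [Finset.sum_congr rfl h1]
  rw [← Finset.sum_subset (Finset.range_subset_range.2 (show n / 2 + 1 ≤ n + 1 by omega))
    (fun b _ hb => by
      have : n - b < b := by
        have := Finset.mem_range.1 ‹b ∈ Finset.range (n + 1)›
        have hb' : ¬ b < n / 2 + 1 := fun hc => hb (Finset.mem_range.2 hc)
        omega
      rw [gS_of_lt this, mul_zero])]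
  refine Finset.sum_congr rfl fun j hj => ?_
  have hj2 : 2 * j ≤ n := by
    have := Finset.mem_range.1 hj
    omega
  have hab : j ≤ n - j := by omega
  rw [term_eq hab, show n - j - j = n - 2 * j from by omega, expo hj2]

end S2aux

/-- `∑_{(λ,μ) ∈ S₂} x^{ℓ(λ)+ℓ(μ)} q^{|λ|+|μ|}
  = ∑_{i,j ≥ 0} q^{i(i+1)/2 + j(j+1) + ij} x^{i+2j} / ((q;q)_i (q;q)_j)`,
where `S₂` is the set of pairs of strict partitions with `μ₁ ≤ ℓ(λ)`.
Both sides are power series in `x` with coefficients power series in `q`;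
the right-hand coefficient of `x^n` sums over all `i, j ≥ 0` with `i + 2j = n`. -/
theorem S2_gf :
    (PowerSeries.mk (fun n => PowerSeries.mk (fun N =>
        (Nat.card {p : StrictPartition × StrictPartition //
          p.2.first ≤ p.1.len ∧ p.1.len + p.2.len = n ∧
          p.1.size + p.2.size = N} : ℚ))) : PowerSeries (PowerSeries ℚ)) =
      PowerSeries.mk (fun n => ∑ j ∈ Finset.range (n / 2 + 1),
        (PowerSeries.X : PowerSeries ℚ) ^
            ((n - 2 * j) * (n - 2 * j + 1) / 2 + j * (j + 1) + (n - 2 * j) * j) *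
          (qPoch (n - 2 * j))⁻¹ * (qPoch j)⁻¹) := by
  apply PowerSeries.ext
  intro n
  rw [coeff_mk, coeff_mk, S2aux.main]
end

section
/- For k ≥ 1, let S_k be the set of k-tuples (λ^{(1)}, …, λ^{(k)}) of strict partitions satisfying ℓ(λ^{(i)}) ≥ (λ^{(i+1)})_1 for 1 ≤ i < k. Then ∑_{𝛌∈S_k} x^{ℓ(𝛌)} q^{|𝛌|} = ∑_{i_1,…,i_k≥0} q^{∑_{a=1}^k a·i_a(i_a+1)/2 + ∑_{1≤a<b≤k} a·i_a·i_b} x^{∑_{a=1}^k a·i_a} / ((q;q)_{i_1} ⋯ (q;q)_{i_k}). -/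
open Finset PowerSeries

namespace SkAux


/-- triangular number -/
def T (m : ℕ) : ℕ := m * (m + 1) / 2

lemma two_T (m : ℕ) : 2 * T m = m * (m + 1) :=
  Nat.mul_div_cancel' (even_iff_two_dvd.mp (Nat.even_mul_succ_self m)) 

lemma T_succ (m : ℕ) : T (m + 1) = T m + (m + 1) := by
  have h1 := two_T m
  have h2 := two_T (m + 1)
  have : (m+1) * ((m+1)+1) = m * (m+1) + 2 * (m+1) := by ring
  omega

noncomputable def qq (n : ℕ) : PowerSeries ℚ :=
  ∏ j ∈ Finset.range n, (1 - (PowerSeries.X : PowerSeries ℚ) ^ (j + 1))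

lemma qq_zero : qq 0 = 1 := by simp [qq]

lemma qq_succ (n : ℕ) : qq (n + 1) = qq n * (1 - X ^ (n + 1)) := by
  simp [qq, Finset.prod_range_succ]

lemma constantCoeff_qq (n : ℕ) : constantCoeff (qq n) = 1 := by
  induction n with
  | zero => simp [qq_zero]
  | succ n ih => simp [qq_succ, ih, constantCoeff_X]

lemma qq_ne (n : ℕ) : constantCoeff (qq n) ≠ 0 := by
  rw [constantCoeff_qq]; norm_num

lemma qq_mul_inv (n : ℕ) : qq n * (qq n)⁻¹ = 1 :=
  PowerSeries.mul_inv_cancel _ (qq_ne n)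



def okSet (m c n : ℕ) : Set (Finset ℕ) :=
  {s | (∀ x ∈ s, 0 < x) ∧ (∀ x ∈ s, x ≤ c) ∧ s.card = m ∧ ∑ x ∈ s, x = n}

def freeSet (m n : ℕ) : Set (Finset ℕ) :=
  {s | (∀ x ∈ s, 0 < x) ∧ s.card = m ∧ ∑ x ∈ s, x = n}

lemma mem_le_sum {s : Finset ℕ} {x : ℕ} (hx : x ∈ s) : x ≤ ∑ y ∈ s, y :=
  Finset.single_le_sum (f := id) (fun i _ => Nat.zero_le i) hx

lemma freeSet_finite (m n : ℕ) : (freeSet m n).Finite := by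
  apply Set.Finite.subset (Finset.finite_toSet ((Finset.range (n+1)).powerset))
  intro s hs
  simp only [Finset.coe_powerset, Set.mem_preimage, Set.mem_powerset_iff, Finset.coe_range,
    Finset.mem_coe, Finset.mem_powerset]
  intro x hx
  have := mem_le_sum hx
  rw [hs.2.2] at this
  simp only [Finset.coe_range, Set.mem_Iio]; omega

lemma okSet_finite (m c n : ℕ) : (okSet m c n).Finite :=
  (freeSet_finite m n).subset (fun s hs => ⟨hs.1, hs.2.2.1, hs.2.2.2⟩)

instance (m n : ℕ) : Finite (freeSet m n) := (freeSet_finite m n).to_subtype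
instance (m c n : ℕ) : Finite (okSet m c n) := (okSet_finite m c n).to_subtype

lemma card_freeSet_zero (n : ℕ) :
    Nat.card (freeSet 0 n) = if n = 0 then 1 else 0 := by
  rw [Nat.card_coe_set_eq]
  split_ifs with h
  · subst h
    have : freeSet 0 0 = {∅} := by
      ext s
      simp only [freeSet, Set.mem_setOf_eq, Set.mem_singleton_iff]
      constructor
      · rintro ⟨-, hc, -⟩; exact Finset.card_eq_zero.mp hc
      · rintro rfl; simp
    rw [this, Set.ncard_singleton]
  · have : freeSet 0 n = ∅ := by
      ext s
      simp only [freeSet, Set.mem_setOf_eq, Set.mem_empty_iff_false, iff_false, not_and]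
      intro _ hc
      rw [Finset.card_eq_zero.mp hc]
      simpa using fun hn => h hn.symm
    rw [this, Set.ncard_empty]

lemma card_okSet_zero (c n : ℕ) :
    Nat.card (okSet 0 c n) = if n = 0 then 1 else 0 := by
  rw [Nat.card_coe_set_eq]
  split_ifs with h
  · subst h
    have : okSet 0 c 0 = {∅} := by
      ext s
      simp only [okSet, Set.mem_setOf_eq, Set.mem_singleton_iff]
      constructor
      · rintro ⟨-, -, hc, -⟩; exact Finset.card_eq_zero.mp hc
      · rintro rfl; simp
    rw [this, Set.ncard_singleton]
  · have : okSet 0 c n = ∅ := by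
      ext s
      simp only [okSet, Set.mem_setOf_eq, Set.mem_empty_iff_false, iff_false, not_and]
      intro _ _ hc
      rw [Finset.card_eq_zero.mp hc]
      simpa using fun hn => h hn.symm
    rw [this, Set.ncard_empty]

lemma okSet_empty_of_lt {m c : ℕ} (h : c < m) (n : ℕ) : okSet m c n = ∅ := by
  ext s
  simp only [okSet, Set.mem_setOf_eq, Set.mem_empty_iff_false, iff_false]
  rintro ⟨hpos, hle, hcard, -⟩
  have hsub : s ⊆ Finset.Icc 1 c := by
    intro x hx; simp only [Finset.mem_Icc]; exact ⟨hpos x hx, hle x hx⟩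
  have := Finset.card_le_card hsub
  rw [hcard, Nat.card_Icc] at this
  omega


lemma rec_D (m c n : ℕ) :
    Nat.card (okSet (m+1) (c+1) n)
      = Nat.card (okSet (m+1) c n)
        + (if c + 1 ≤ n then Nat.card (okSet m c (n - (c+1))) else 0) := by
  classical
  simp only [Nat.card_coe_set_eq]
  have hsplit : okSet (m+1) (c+1) n
      = (okSet (m+1) (c+1) n ∩ {s | c+1 ∉ s}) ∪ (okSet (m+1) (c+1) n ∩ {s | c+1 ∈ s}) := by
    ext s; by_cases h : c+1 ∈ s <;> simp [h]
  have hA : okSet (m+1) (c+1) n ∩ {s | c+1 ∉ s} = okSet (m+1) c n := by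
    ext s
    simp only [okSet, Set.mem_inter_iff, Set.mem_setOf_eq]
    constructor
    · rintro ⟨⟨hp, hle, hc, hs⟩, hnot⟩
      refine ⟨hp, fun x hx => ?_, hc, hs⟩
      have := hle x hx
      have : x ≠ c + 1 := fun h => hnot (h ▸ hx)
      omega
    · rintro ⟨hp, hle, hc, hs⟩
      exact ⟨⟨hp, fun x hx => le_trans (hle x hx) (by omega), hc, hs⟩,
        fun hmem => by have := hle _ hmem; omega⟩
  have hdisj : Disjoint (okSet (m+1) (c+1) n ∩ {s | c+1 ∉ s})
      (okSet (m+1) (c+1) n ∩ {s | c+1 ∈ s}) := by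
    rw [Set.disjoint_left]
    rintro s ⟨-, h1⟩ ⟨-, h2⟩
    exact h1 h2
  rw [hsplit, Set.ncard_union_eq hdisj
    (((okSet_finite _ _ _).inter_of_left _)) ((okSet_finite _ _ _).inter_of_left _), hA]
  congr 1
  by_cases hn : c + 1 ≤ n
  · rw [if_pos hn]
    have himg : (fun s : Finset ℕ => s.erase (c+1)) '' (okSet (m+1) (c+1) n ∩ {s | c+1 ∈ s})
        = okSet m c (n - (c+1)) := by
      ext t
      simp only [Set.mem_image, okSet, Set.mem_inter_iff, Set.mem_setOf_eq]
      constructor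
      · rintro ⟨s, ⟨⟨hp, hle, hc, hs⟩, hmem⟩, rfl⟩
        refine ⟨fun x hx => hp x (Finset.mem_of_mem_erase hx),
          fun x hx => ?_, ?_, ?_⟩
        · have h1 := hle x (Finset.mem_of_mem_erase hx)
          have h2 := Finset.ne_of_mem_erase hx
          omega
        · rw [Finset.card_erase_of_mem hmem, hc]
          omega
        · have := Finset.sum_erase_add s id hmem
          simp only [id] at this
          omega
      · rintro ⟨hp, hle, hc, hs⟩
        have hnotmem : c + 1 ∉ t := fun h => by have := hle _ h; omega
        refine ⟨insert (c+1) t, ⟨⟨?_, ?_, ?_, ?_⟩, Finset.mem_insert_self _ _⟩,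
          by rw [Finset.erase_insert hnotmem]⟩
        · intro x hx
          rcases Finset.mem_insert.mp hx with rfl | hx
          · omega
          · exact hp x hx
        · intro x hx
          rcases Finset.mem_insert.mp hx with rfl | hx
          · exact le_rfl
          · exact le_trans (hle x hx) (by omega)
        · rw [Finset.card_insert_of_notMem hnotmem, hc]
        · rw [Finset.sum_insert hnotmem, hs]; omega
    have hinj : Set.InjOn (fun s : Finset ℕ => s.erase (c+1))
        (okSet (m+1) (c+1) n ∩ {s | c+1 ∈ s}) := by
      rintro s ⟨-, hs⟩ t ⟨-, ht⟩ h
      have := congrArg (insert (c+1)) h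
      simpa [Finset.insert_erase hs, Finset.insert_erase ht] using this
    rw [← himg, Set.ncard_image_of_injOn hinj]
  · rw [if_neg hn]
    have : okSet (m+1) (c+1) n ∩ {s | c+1 ∈ s} = ∅ := by
      ext s
      simp only [Set.mem_inter_iff, okSet, Set.mem_setOf_eq, Set.mem_empty_iff_false, iff_false,
        not_and]
      rintro ⟨-, -, -, hs⟩ hmem
      have := mem_le_sum hmem
      omega
    rw [this, Set.ncard_empty]


lemma pred_injOn {s : Finset ℕ} (h : ∀ x ∈ s, 1 ≤ x) :
    ∀ x ∈ s, ∀ y ∈ s, x - 1 = y - 1 → x = y := by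
  intro x hx y hy e
  have := h x hx; have := h y hy; omega

lemma image_pred_succ {s : Finset ℕ} (h : ∀ x ∈ s, 1 ≤ x) :
    (s.image (· - 1)).image (· + 1) = s := by
  rw [Finset.image_image]
  rw [show ((· + 1) ∘ (· - 1) : ℕ → ℕ) = fun x => x - 1 + 1 from rfl]
  calc s.image (fun x => x - 1 + 1) = s.image id := by
        apply Finset.image_congr
        intro x hx
        have := h x hx; simp; omega
    _ = s := Finset.image_id

lemma image_succ_pred (t : Finset ℕ) : (t.image (· + 1)).image (· - 1) = t := by
  rw [Finset.image_image]
  rw [show ((· - 1) ∘ (· + 1) : ℕ → ℕ) = id by funext x; simp]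
  exact Finset.image_id

lemma card_image_pred {s : Finset ℕ} (h : ∀ x ∈ s, 1 ≤ x) :
    (s.image (· - 1)).card = s.card :=
  Finset.card_image_of_injOn (fun x hx y hy e => pred_injOn h x hx y hy e)

lemma sum_image_pred {s : Finset ℕ} (h : ∀ x ∈ s, 1 ≤ x) :
    ∑ x ∈ s.image (· - 1), x = (∑ x ∈ s, x) - s.card := by
  rw [Finset.sum_image (pred_injOn h)]
  have h1 : ∑ x ∈ s, (x - 1) + ∑ _x ∈ s, 1 = ∑ x ∈ s, x := by
    rw [← Finset.sum_add_distrib]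
    apply Finset.sum_congr rfl
    intro x hx; have := h x hx; omega
  have h2 : ∑ _x ∈ s, 1 = s.card := by simp
  omega

lemma sum_image_succ (t : Finset ℕ) :
    ∑ x ∈ t.image (· + 1), x = (∑ x ∈ t, x) + t.card := by
  rw [Finset.sum_image (fun x _ y _ e => by omega)]
  rw [Finset.sum_add_distrib]
  simp

lemma rec_E (m n : ℕ) :
    Nat.card (freeSet (m+1) n)
      = if m + 1 ≤ n then
          Nat.card (freeSet (m+1) (n - (m+1))) + Nat.card (freeSet m (n - (m+1)))
        else 0 := by
  classical
  simp only [Nat.card_coe_set_eq]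
  by_cases hn : m + 1 ≤ n
  · rw [if_pos hn]
    have hsplit : freeSet (m+1) n
        = (freeSet (m+1) n ∩ {s | 1 ∉ s}) ∪ (freeSet (m+1) n ∩ {s | 1 ∈ s}) := by
      ext s; by_cases h : 1 ∈ s <;> simp [h]
    have hdisj : Disjoint (freeSet (m+1) n ∩ {s | 1 ∉ s}) (freeSet (m+1) n ∩ {s | 1 ∈ s}) := by
      rw [Set.disjoint_left]; rintro s ⟨-, h1⟩ ⟨-, h2⟩; exact h1 h2
    rw [hsplit, Set.ncard_union_eq hdisj ((freeSet_finite _ _).inter_of_left _)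
      ((freeSet_finite _ _).inter_of_left _)]
    congr 1
    · -- 1 ∉ s case ↦ freeSet (m+1) (n - (m+1))
      have hA2 : ∀ s ∈ freeSet (m+1) n ∩ {s | 1 ∉ s}, ∀ x ∈ s, 2 ≤ x := by
        rintro s ⟨⟨hp, -, -⟩, h1⟩ x hx
        have := hp x hx
        have : x ≠ 1 := fun e => h1 (e ▸ hx)
        omega
      have himg : (fun s : Finset ℕ => s.image (· - 1)) '' (freeSet (m+1) n ∩ {s | 1 ∉ s})
          = freeSet (m+1) (n - (m+1)) := by
        ext t
        simp only [Set.mem_image, freeSet, Set.mem_inter_iff, Set.mem_setOf_eq]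
        constructor
        · rintro ⟨s, hsmem, rfl⟩
          obtain ⟨⟨hp, hc, hs⟩, h1⟩ := hsmem
          have h2 := hA2 s ⟨⟨hp, hc, hs⟩, h1⟩
          have hge1 : ∀ x ∈ s, 1 ≤ x := fun x hx => hp x hx
          refine ⟨?_, ?_, ?_⟩
          · intro x hx
            obtain ⟨y, hy, rfl⟩ := Finset.mem_image.mp hx
            have := h2 y hy; omega
          · rw [card_image_pred hge1, hc]
          · rw [sum_image_pred hge1, hs, hc]
        · rintro ⟨hp, hc, hs⟩
          refine ⟨t.image (· + 1), ⟨⟨?_, ?_, ?_⟩, ?_⟩, image_succ_pred t⟩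
          · intro x hx; obtain ⟨y, -, rfl⟩ := Finset.mem_image.mp hx; omega
          · rw [Finset.card_image_of_injOn (fun x _ y _ e => by omega), hc]
          · rw [sum_image_succ, hs, hc]
            omega
          · intro hx
            obtain ⟨y, hy, he⟩ := Finset.mem_image.mp hx
            have := hp y hy; omega
      have hinj : Set.InjOn (fun s : Finset ℕ => s.image (· - 1))
          (freeSet (m+1) n ∩ {s | 1 ∉ s}) := by
        intro s hsm t htm h
        have h1 : ∀ x ∈ s, 1 ≤ x := fun x hx => hsm.1.1 x hx
        have h2 : ∀ x ∈ t, 1 ≤ x := fun x hx => htm.1.1 x hx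
        have := congrArg (fun u : Finset ℕ => u.image (· + 1)) h
        simpa [image_pred_succ h1, image_pred_succ h2] using this
      rw [← himg, Set.ncard_image_of_injOn hinj]
    · -- 1 ∈ s case ↦ freeSet m (n - (m+1))
      have himg : (fun s : Finset ℕ => (s.erase 1).image (· - 1)) ''
          (freeSet (m+1) n ∩ {s | 1 ∈ s}) = freeSet m (n - (m+1)) := by
        ext t
        simp only [Set.mem_image, freeSet, Set.mem_inter_iff, Set.mem_setOf_eq]
        constructor
        · rintro ⟨s, ⟨⟨hp, hc, hs⟩, h1⟩, rfl⟩
          have h2 : ∀ x ∈ s.erase 1, 2 ≤ x := by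
            intro x hx
            have := hp x (Finset.mem_of_mem_erase hx)
            have := Finset.ne_of_mem_erase hx
            omega
          have hge1 : ∀ x ∈ s.erase 1, 1 ≤ x := fun x hx => by have := h2 x hx; omega
          have hce : (s.erase 1).card = m := by rw [Finset.card_erase_of_mem h1, hc]; omega
          have hse : ∑ x ∈ s.erase 1, x = n - 1 := by
            have := Finset.sum_erase_add s id h1
            simp only [id] at this
            omega
          refine ⟨?_, ?_, ?_⟩
          · intro x hx
            obtain ⟨y, hy, rfl⟩ := Finset.mem_image.mp hx
            have := h2 y hy; omega
          · rw [card_image_pred hge1, hce]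
          · rw [sum_image_pred hge1, hse, hce]; omega
        · rintro ⟨hp, hc, hs⟩
          have h1img : (1:ℕ) ∉ t.image (· + 1) := by
            intro hx
            obtain ⟨y, hy, he⟩ := Finset.mem_image.mp hx
            have := hp y hy; omega
          refine ⟨insert 1 (t.image (· + 1)), ⟨⟨?_, ?_, ?_⟩, Finset.mem_insert_self _ _⟩, ?_⟩
          · intro x hx
            rcases Finset.mem_insert.mp hx with rfl | hx
            · omega
            · obtain ⟨y, -, rfl⟩ := Finset.mem_image.mp hx; omega
          · rw [Finset.card_insert_of_notMem h1img,
              Finset.card_image_of_injOn (fun x _ y _ e => by omega), hc]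
          · rw [Finset.sum_insert h1img, sum_image_succ, hs, hc]
            omega
          · rw [Finset.erase_insert h1img, image_succ_pred]
      have hinj : Set.InjOn (fun s : Finset ℕ => (s.erase 1).image (· - 1))
          (freeSet (m+1) n ∩ {s | 1 ∈ s}) := by
        intro s hsm t htm h
        have h1 : ∀ x ∈ s.erase 1, 1 ≤ x := fun x hx => hsm.1.1 x (Finset.mem_of_mem_erase hx)
        have h2 : ∀ x ∈ t.erase 1, 1 ≤ x := fun x hx => htm.1.1 x (Finset.mem_of_mem_erase hx)
        have := congrArg (fun u : Finset ℕ => insert 1 (u.image (· + 1))) h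
        simpa [image_pred_succ h1, image_pred_succ h2, Finset.insert_erase hsm.2,
          Finset.insert_erase htm.2] using this
      rw [← himg, Set.ncard_image_of_injOn hinj]
  · rw [if_neg hn]
    have : freeSet (m+1) n = ∅ := by
      ext s
      simp only [freeSet, Set.mem_setOf_eq, Set.mem_empty_iff_false, iff_false, not_and]
      intro hp hc
      intro hs
      have : s.card • 1 ≤ ∑ x ∈ s, x :=
        Finset.card_nsmul_le_sum s _ 1 (fun x hx => hp x hx)
      rw [hc, hs] at this
      simp at this
      omega
    rw [this, Set.ncard_empty]


noncomputable def Dser (m c : ℕ) : PowerSeries ℚ :=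
  PowerSeries.mk fun n => (Nat.card (okSet m c n) : ℚ)
noncomputable def Eser (m : ℕ) : PowerSeries ℚ :=
  PowerSeries.mk fun n => (Nat.card (freeSet m n) : ℚ)

lemma qq_ne_zero (n : ℕ) : qq n ≠ 0 := fun h => qq_ne n (by rw [h]; simp)

lemma Eser_zero : Eser 0 = 1 := by
  ext n
  simp only [Eser, coeff_mk, card_freeSet_zero, coeff_one]
  split_ifs <;> simp

lemma Dser_zero (c : ℕ) : Dser 0 c = 1 := by
  ext n
  simp only [Dser, coeff_mk, card_okSet_zero, coeff_one]
  split_ifs <;> simp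

lemma Dser_of_lt {m c : ℕ} (h : c < m) : Dser m c = 0 := by
  ext n
  simp [Dser, okSet_empty_of_lt h]

lemma Dser_rec (m c : ℕ) : Dser (m+1) (c+1) = Dser (m+1) c + X ^ (c+1) * Dser m c := by
  ext n
  simp only [Dser, map_add, coeff_mk, coeff_X_pow_mul']
  rw [rec_D]
  split_ifs <;> push_cast <;> ring

lemma Eser_rec (m : ℕ) : Eser (m+1) = X ^ (m+1) * (Eser (m+1) + Eser m) := by
  ext n
  simp only [Eser, coeff_mk, coeff_X_pow_mul', map_add]
  rw [rec_E]
  split_ifs <;> push_cast <;> ring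

lemma KE (m : ℕ) : Eser m * qq m = X ^ T m := by
  induction m with
  | zero => simp [Eser_zero, qq_zero, T]
  | succ m ih =>
    have h := Eser_rec m
    rw [qq_succ, T_succ, show (X : PowerSeries ℚ) ^ (T m + (m+1)) = X ^ T m * X ^ (m+1) from
      pow_add _ _ _, ← ih]
    linear_combination qq m * h

lemma KD : ∀ c m, m ≤ c → Dser m c * qq m * qq (c - m) = X ^ T m * qq c := by
  intro c
  induction c with
  | zero =>
    intro m hm
    interval_cases m
    simp [Dser_zero, qq_zero, T]
  | succ c ih =>
    intro m hm
    match m with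
    | 0 => simp [Dser_zero, qq_zero, T]
    | Nat.succ m =>
      simp only [Nat.succ_eq_add_one] at hm ⊢
      by_cases hmc : m + 1 ≤ c
      · have ih1 := ih (m+1) hmc
        have ih2 := ih m (le_trans (Nat.le_succ m) hmc)
        set d := c - (m+1) with hd
        have e1 : c + 1 - (m+1) = d + 1 := by omega
        have e2 : c - m = d + 1 := by omega
        have e3 : c - (m+1) = d := rfl
        rw [e2, qq_succ d] at ih2
        rw [qq_succ m, T_succ m, show (X : PowerSeries ℚ) ^ (T m + (m+1)) = X ^ T m * X ^ (m+1)
          from pow_add _ _ _] at ih1 ⊢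
        have hX : (X : PowerSeries ℚ) ^ (d+1) * X ^ (m+1) = X ^ (c+1) := by
          rw [← pow_add]; congr 1; omega
        rw [Dser_rec, e1, qq_succ d, qq_succ c]
        linear_combination (1 - X^(d+1)) * ih1 + X^(c+1) * (1 - X^(m+1)) * ih2
          - (X^(T m) * qq c) * hX
      · have hm' : m = c := by omega
        subst hm'
        have ih1 := ih m le_rfl
        rw [Nat.sub_self, qq_zero, mul_one] at ih1
        have hDm : Dser m m = X ^ T m := by
          have := mul_right_cancel₀ (qq_ne_zero m) ih1
          exact this
        rw [Nat.sub_self, qq_zero, mul_one, Dser_rec, Dser_of_lt (Nat.lt_succ_self m), hDm]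
        rw [qq_succ m, T_succ m]
        rw [show (X : PowerSeries ℚ) ^ (T m + (m+1)) = X ^ T m * X ^ (m+1) from pow_add _ _ _]
        ring

lemma Eser_eq (m : ℕ) : Eser m = X ^ T m * (qq m)⁻¹ := by
  calc Eser m = Eser m * (qq m * (qq m)⁻¹) := by rw [qq_mul_inv, mul_one]
    _ = Eser m * qq m * (qq m)⁻¹ := by ring
    _ = X ^ T m * (qq m)⁻¹ := by rw [KE]

lemma Dser_eq {m c : ℕ} (h : m ≤ c) :
    Dser m c = X ^ T m * qq c * (qq m)⁻¹ * (qq (c - m))⁻¹ := by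
  calc Dser m c = Dser m c * (qq m * (qq m)⁻¹) * (qq (c-m) * (qq (c-m))⁻¹) := by
        rw [qq_mul_inv, qq_mul_inv]; ring
    _ = (Dser m c * qq m * qq (c - m)) * (qq m)⁻¹ * (qq (c-m))⁻¹ := by ring
    _ = X ^ T m * qq c * (qq m)⁻¹ * (qq (c - m))⁻¹ := by rw [KD c m h]

section Tele

variable {k : ℕ}

def Mn (f : Fin k → ℕ) (a : ℕ) : ℕ := ∑ b ∈ univ.filter (fun b : Fin k => a ≤ b.val), f b

def fN (f : Fin k → ℕ) (a : ℕ) : ℕ := if h : a < k then f ⟨a, h⟩ else 0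

lemma Mn_of_ge {f : Fin k → ℕ} {a : ℕ} (h : k ≤ a) : Mn f a = 0 := by
  rw [Mn, Finset.filter_false_of_mem, Finset.sum_empty]
  intro b _
  have := b.isLt
  omega

lemma Mn_succ {f : Fin k → ℕ} {a : ℕ} (h : a < k) : Mn f a = f ⟨a, h⟩ + Mn f (a+1) := by
  rw [Mn, Mn]
  have hins : (univ.filter (fun b : Fin k => a ≤ b.val))
      = insert ⟨a, h⟩ (univ.filter (fun b : Fin k => a + 1 ≤ b.val)) := by
    ext b
    simp only [Finset.mem_filter, Finset.mem_univ, true_and, Finset.mem_insert, Fin.ext_iff]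
    omega
  rw [hins, Finset.sum_insert (by simp)]

lemma Mn_succ_le (f : Fin k → ℕ) (a : ℕ) : Mn f (a+1) ≤ Mn f a := by
  refine Finset.sum_le_sum_of_subset ?_
  intro b hb
  simp only [Finset.mem_filter, Finset.mem_univ, true_and] at hb ⊢
  omega

noncomputable def coordSerN (f : Fin k → ℕ) (a : ℕ) : PowerSeries ℚ :=
  if a = 0 then Eser (Mn f 0) else Dser (Mn f a) (Mn f (a-1))

lemma tele_aux (f : Fin k → ℕ) :
    ∀ j, j < k → ∏ a ∈ range (j+1), coordSerN f a
      = X ^ (∑ a ∈ range (j+1), T (Mn f a)) * (qq (Mn f j))⁻¹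
        * ∏ a ∈ range j, (qq (fN f a))⁻¹ := by
  intro j
  induction j with
  | zero =>
    intro _
    rw [show (0:ℕ)+1 = 1 from rfl, Finset.prod_range_one, Finset.sum_range_one,
      Finset.range_zero, Finset.prod_empty, mul_one]
    have h0 : coordSerN f 0 = Eser (Mn f 0) := by simp [coordSerN]
    rw [h0, Eser_eq]
  | succ j ihj =>
    intro hj
    have hjk : j < k := by omega
    have hle : Mn f (j+1) ≤ Mn f j := Mn_succ_le f j
    have hsub : Mn f j - Mn f (j+1) = fN f j := by
      rw [Mn_succ hjk, fN, dif_pos hjk]; omega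
    have hC : coordSerN f (j+1) = Dser (Mn f (j+1)) (Mn f j) := by
      simp [coordSerN]
    rw [Finset.prod_range_succ, ihj hjk, hC, Dser_eq hle, hsub,
      Finset.sum_range_succ (fun a => T (Mn f a)) (j+1), pow_add,
      Finset.prod_range_succ (fun a => (qq (fN f a))⁻¹) j]
    have hinv : (qq (Mn f j))⁻¹ * qq (Mn f j) = 1 := by
      rw [mul_comm]; exact qq_mul_inv _
    linear_combination ((X ^ (∑ a ∈ range (j+1), T (Mn f a))) * (X ^ T (Mn f (j+1)))
      * (qq (Mn f (j+1)))⁻¹ * (qq (fN f j))⁻¹ * (∏ a ∈ range j, (qq (fN f a))⁻¹)) * hinv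

lemma tele_prod (hk : 1 ≤ k) (f : Fin k → ℕ) :
    ∏ a ∈ range k, coordSerN f a
      = X ^ (∑ a ∈ range k, T (Mn f a)) * ∏ a ∈ range k, (qq (fN f a))⁻¹ := by
  obtain ⟨j, rfl⟩ : ∃ j, k = j + 1 := ⟨k - 1, by omega⟩
  have h := tele_aux f j (by omega)
  rw [h]
  have hlast : Mn f j = fN f j := by
    rw [Mn_succ (by omega : j < j + 1), Mn_of_ge (le_refl (j+1)), fN, dif_pos (by omega : j < j + 1)]
    omega
  rw [Finset.prod_range_succ (fun a => (qq (fN f a))⁻¹) j, hlast]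
  ring

end Tele

lemma list_sum_toFinset {l : List ℕ} (h : l.Nodup) : ∑ x ∈ l.toFinset, x = l.sum := by
  induction l with
  | nil => simp
  | cons a t ih =>
    rw [List.toFinset_cons, Finset.sum_insert (by
      simp only [List.mem_toFinset]; exact (List.nodup_cons.mp h).1), ih (List.nodup_cons.mp h).2,
      List.sum_cons]

lemma sp_nodup (μ : StrictPartition) : μ.parts.Nodup := μ.sorted.nodup

lemma sp_card (μ : StrictPartition) : μ.parts.toFinset.card = μ.len :=
  List.toFinset_card_of_nodup (sp_nodup μ)

lemma sp_sum (μ : StrictPartition) : ∑ x ∈ μ.parts.toFinset, x = μ.size :=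
  list_sum_toFinset (sp_nodup μ)

lemma headI_max {l : List ℕ} (hs : l.Pairwise (· > ·)) : ∀ x ∈ l, x ≤ l.headI := by
  cases l with
  | nil => intro x hx; simp at hx
  | cons h t =>
    intro x hx
    rcases List.mem_cons.mp hx with rfl | hxt
    · exact le_rfl
    · exact le_of_lt (List.rel_of_pairwise_cons hs hxt)

lemma sp_le_headI (μ : StrictPartition) : ∀ x ∈ μ.parts, x ≤ μ.first :=
  headI_max μ.sorted

lemma sp_first_le_iff (μ : StrictPartition) (c : ℕ) :
    μ.first ≤ c ↔ ∀ x ∈ μ.parts.toFinset, x ≤ c := by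
  constructor
  · intro h x hx
    exact le_trans (sp_le_headI μ x (List.mem_toFinset.mp hx)) h
  · intro h
    rcases he : μ.parts with _ | ⟨hd, t⟩
    · simp [StrictPartition.first, he]
    · have : hd ∈ μ.parts.toFinset := by rw [he]; simp
      have := h hd this
      simpa [StrictPartition.first, he] using this

lemma sp_parts_toFinset_inj : Function.Injective (fun μ : StrictPartition => μ.parts.toFinset) := by
  intro μ ν h
  haveI : IsAntisymm ℕ (· > ·) := ⟨fun a b h1 h2 => by omega⟩
  have hperm : μ.parts.Perm ν.parts :=
    List.perm_of_nodup_nodup_toFinset_eq (sp_nodup μ) (sp_nodup ν) h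
  have heq : μ.parts = ν.parts := List.Perm.eq_of_pairwise' μ.sorted ν.sorted hperm
  cases μ; cases ν; simpa using heq

noncomputable def ofFinset (s : Finset ℕ) (hpos : ∀ x ∈ s, 0 < x) : StrictPartition where
  parts := (s.sort (· ≤ ·)).reverse
  pos := by
    intro p hp
    rw [List.mem_reverse, Finset.mem_sort] at hp
    exact hpos p hp
  sorted := by
    rw [List.pairwise_reverse]
    exact (Finset.sortedLT_sort s).pairwise

lemma ofFinset_toFinset (s : Finset ℕ) (hpos : ∀ x ∈ s, 0 < x) :
    (ofFinset s hpos).parts.toFinset = s := by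
  show ((s.sort (· ≤ ·)).reverse).toFinset = s
  rw [List.toFinset_reverse, Finset.sort_toFinset]

lemma mem_freeSet' {m w : ℕ} (s : freeSet m w) :
    (∀ x ∈ s.1, 0 < x) ∧ s.1.card = m ∧ ∑ x ∈ s.1, x = w := s.2

lemma mem_okSet' {m c w : ℕ} (s : okSet m c w) :
    (∀ x ∈ s.1, 0 < x) ∧ (∀ x ∈ s.1, x ≤ c) ∧ s.1.card = m ∧ ∑ x ∈ s.1, x = w := s.2

lemma card_free (m w : ℕ) :
    Nat.card {μ : StrictPartition // μ.len = m ∧ μ.size = w} = Nat.card (freeSet m w) := by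
  apply Nat.card_congr
  refine ⟨fun x => ⟨x.1.parts.toFinset, ?_⟩,
    fun s => ⟨ofFinset s.1 (mem_freeSet' s).1, ?_⟩, ?_, ?_⟩
  · refine ⟨fun y hy => x.1.pos y (List.mem_toFinset.mp hy), ?_, ?_⟩
    · rw [sp_card, x.2.1]
    · rw [sp_sum, x.2.2]
  · obtain ⟨hpos, hcard, hsum⟩ := mem_freeSet' s
    constructor
    · rw [← sp_card, ofFinset_toFinset, hcard]
    · rw [← sp_sum, ofFinset_toFinset, hsum]
  · intro x
    apply Subtype.ext
    apply sp_parts_toFinset_inj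
    dsimp only
    exact ofFinset_toFinset _ _
  · intro s
    apply Subtype.ext
    dsimp only
    exact ofFinset_toFinset _ _

lemma card_ok (m c w : ℕ) :
    Nat.card {μ : StrictPartition // (μ.len = m ∧ μ.first ≤ c) ∧ μ.size = w}
      = Nat.card (okSet m c w) := by
  apply Nat.card_congr
  refine ⟨fun x => ⟨x.1.parts.toFinset, ?_⟩,
    fun s => ⟨ofFinset s.1 (mem_okSet' s).1, ?_⟩, ?_, ?_⟩
  · refine ⟨fun y hy => x.1.pos y (List.mem_toFinset.mp hy),
      (sp_first_le_iff x.1 c).mp x.2.1.2, ?_, ?_⟩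
    · rw [sp_card, x.2.1.1]
    · rw [sp_sum, x.2.2]
  · obtain ⟨hpos, hle, hcard, hsum⟩ := mem_okSet' s
    refine ⟨⟨?_, ?_⟩, ?_⟩
    · rw [← sp_card, ofFinset_toFinset, hcard]
    · rw [sp_first_le_iff, ofFinset_toFinset]
      exact hle
    · rw [← sp_sum, ofFinset_toFinset, hsum]
  · intro x
    apply Subtype.ext
    apply sp_parts_toFinset_inj
    dsimp only
    exact ofFinset_toFinset _ _
  · intro s
    apply Subtype.ext
    dsimp only
    exact ofFinset_toFinset _ _

lemma sp_mem_le_size (μ : StrictPartition) {x : ℕ} (hx : x ∈ μ.parts) : x ≤ μ.size :=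
  List.single_le_sum (fun y _ => Nat.zero_le y) x hx

lemma finite_sp_cond (P : StrictPartition → Prop) (w : ℕ) :
    Finite {μ : StrictPartition // P μ ∧ μ.size = w} := by
  classical
  apply Finite.of_injective (f := fun x : {μ : StrictPartition // P μ ∧ μ.size = w} =>
    (⟨x.1.parts.toFinset, by
      rw [Finset.mem_powerset]
      intro y hy
      rw [Finset.mem_range]
      have := sp_mem_le_size x.1 (List.mem_toFinset.mp hy)
      rw [x.2.2] at this
      omega⟩ : {t : Finset ℕ // t ∈ (Finset.range (w+1)).powerset}))
  intro x y h
  apply Subtype.ext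
  apply sp_parts_toFinset_inj
  exact congrArg Subtype.val h

lemma finite_sp_le (w : ℕ) : Finite {μ : StrictPartition // μ.size ≤ w} := by
  classical
  apply Finite.of_injective (f := fun x : {μ : StrictPartition // μ.size ≤ w} =>
    (⟨x.1.parts.toFinset, by
      rw [Finset.mem_powerset]
      intro y hy
      rw [Finset.mem_range]
      have := sp_mem_le_size x.1 (List.mem_toFinset.mp hy)
      omega⟩ : {t : Finset ℕ // t ∈ (Finset.range (w+1)).powerset}))
  intro x y h
  apply Subtype.ext
  apply sp_parts_toFinset_inj
  exact congrArg Subtype.val h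

lemma finite_tuple {k : ℕ} (P : (Fin k → StrictPartition) → Prop) (N : ℕ) :
    Finite {L : Fin k → StrictPartition // P L ∧ (∑ a, (L a).size) = N} := by
  haveI := finite_sp_le N
  apply Finite.of_injective (f := fun x : {L : Fin k → StrictPartition // P L ∧ _} =>
    (fun a => (⟨x.1 a, by
      have h := Finset.single_le_sum (f := fun a => (x.1 a).size) (fun i _ => Nat.zero_le _)
        (Finset.mem_univ a)
      have h2 := x.2.2
      omega⟩ : {μ : StrictPartition // μ.size ≤ N})))
  intro x y h
  apply Subtype.ext
  funext a
  exact congrArg Subtype.val (congrFun h a)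

lemma len_le_first (μ : StrictPartition) : μ.len ≤ μ.first := by
  have hsub : μ.parts.toFinset ⊆ Finset.Icc 1 μ.first := by
    intro x hx
    rw [List.mem_toFinset] at hx
    rw [Finset.mem_Icc]
    exact ⟨μ.pos x hx, sp_le_headI μ x hx⟩
  have := Finset.card_le_card hsub
  rw [sp_card, Nat.card_Icc] at this
  omega


section PartE
variable {k : ℕ}

lemma nat_card_sigma {ι : Type*} [Fintype ι] (g : ι → Type*) [∀ i, Finite (g i)] :
    Nat.card (Σ i, g i) = ∑ i, Nat.card (g i) := by
  classical
  haveI := fun i => Fintype.ofFinite (g i)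
  simp only [Nat.card_eq_fintype_card]
  exact Fintype.card_sigma

lemma finite_tuple' {N : ℕ} (P : (Fin k → StrictPartition) → Prop)
    (h : ∀ L, P L → (∑ a, (L a).size) = N) : Finite {L : Fin k → StrictPartition // P L} := by
  haveI := finite_sp_le N
  apply Finite.of_injective (f := fun x : {L : Fin k → StrictPartition // P L} =>
    (fun a => (⟨x.1 a, by
      have hs := Finset.single_le_sum (f := fun a => (x.1 a).size) (fun i _ => Nat.zero_le _)
        (Finset.mem_univ a)
      have h2 := h x.1 x.2
      omega⟩ : {μ : StrictPartition // μ.size ≤ N})))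
  intro x y hxy
  apply Subtype.ext
  funext a
  exact congrArg Subtype.val (congrFun hxy a)

lemma card_tuple (Qs : Fin k → StrictPartition → Prop) (N : ℕ) :
    Nat.card {L : Fin k → StrictPartition // (∀ a, Qs a (L a)) ∧ (∑ a, (L a).size) = N}
      = ∑ l ∈ finsuppAntidiag (univ : Finset (Fin k)) N,
          ∏ a, Nat.card {μ : StrictPartition // Qs a μ ∧ μ.size = l a} := by
  classical
  haveI hT : Finite {L : Fin k → StrictPartition // (∀ a, Qs a (L a)) ∧ (∑ a, (L a).size) = N} :=
    finite_tuple' _ (fun L hL => hL.2)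
  set A := finsuppAntidiag (univ : Finset (Fin k)) N with hA
  let φ : {L : Fin k → StrictPartition // (∀ a, Qs a (L a)) ∧ (∑ a, (L a).size) = N} → A :=
    fun x => ⟨Finsupp.equivFunOnFinite.symm (fun a => (x.1 a).size), by
      rw [hA, Finset.mem_finsuppAntidiag]
      refine ⟨?_, Finset.subset_univ _⟩
      rw [show ⇑(Finsupp.equivFunOnFinite.symm fun a => ((x.1 : Fin k → StrictPartition) a).size)
        = fun a => (x.1 a).size from rfl]
      exact x.2.2⟩
  have h1 : Nat.card {L : Fin k → StrictPartition //
      (∀ a, Qs a (L a)) ∧ (∑ a, (L a).size) = N} = ∑ y : A, Nat.card {x // φ x = y} := by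
    rw [← nat_card_sigma]
    exact (Nat.card_congr (Equiv.sigmaFiberEquiv φ)).symm
  rw [h1, ← Finset.sum_coe_sort A
    (fun l => ∏ a, Nat.card {μ : StrictPartition // Qs a μ ∧ μ.size = l a})]
  apply Finset.sum_congr rfl
  intro y _
  have e1 : {x // φ x = y} ≃ ∀ a, {μ : StrictPartition // Qs a μ ∧ μ.size = (y : Fin k →₀ ℕ) a} := by
    refine ⟨fun x a => ⟨x.1.1 a, x.1.2.1 a, ?_⟩, fun G => ⟨⟨fun a => (G a).1,
      fun a => (G a).2.1, ?_⟩, ?_⟩, fun x => rfl, fun G => rfl⟩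
    · have hv := congrArg Subtype.val x.2
      have hfun : (fun a => (x.1.1 a).size) = ((y : Fin k →₀ ℕ) : Fin k → ℕ) :=
        (Equiv.symm_apply_eq _).mp hv
      exact congrFun hfun a
    · have hy := (Finset.mem_finsuppAntidiag.mp y.2).1
      calc ∑ a, (G a).1.size = ∑ a, (y : Fin k →₀ ℕ) a := by
            apply Finset.sum_congr rfl
            intro a _
            exact (G a).2.2
        _ = N := hy
    · apply Subtype.ext
      show Finsupp.equivFunOnFinite.symm _ = _
      rw [Equiv.symm_apply_eq]
      funext a
      exact (G a).2.2
  rw [Nat.card_congr e1, Nat.card_pi]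

end PartE


section PartF
variable {k : ℕ}

def Q (f : Fin k → ℕ) (a : Fin k) (μ : StrictPartition) : Prop :=
  μ.len = Mn f a.val ∧ (1 ≤ a.val → μ.first ≤ Mn f (a.val - 1))

lemma coord_coeff (f : Fin k → ℕ) (a : Fin k) (w : ℕ) :
    (coeff w) (coordSerN f a.val)
      = (Nat.card {μ : StrictPartition // Q f a μ ∧ μ.size = w} : ℚ) := by
  by_cases ha : a.val = 0
  · rw [show coordSerN f a.val = Eser (Mn f 0) by simp [coordSerN, ha]]
    rw [Eser, coeff_mk, ← card_free (Mn f 0) w]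
    congr 1
    apply Nat.card_congr
    apply Equiv.subtypeEquivRight
    intro μ
    rw [Q, ha]
    constructor
    · rintro ⟨h1, h2⟩
      exact ⟨⟨h1, fun h => by omega⟩, h2⟩
    · rintro ⟨⟨h1, -⟩, h2⟩
      exact ⟨h1, h2⟩
  · rw [show coordSerN f a.val = Dser (Mn f a.val) (Mn f (a.val - 1)) by
      simp [coordSerN, ha]]
    rw [Dser, coeff_mk, ← card_ok (Mn f a.val) (Mn f (a.val - 1)) w]
    congr 1
    apply Nat.card_congr
    apply Equiv.subtypeEquivRight
    intro μ
    rw [Q]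
    constructor
    · rintro ⟨⟨h1, h2⟩, h3⟩
      exact ⟨⟨h1, fun _ => h2⟩, h3⟩
    · rintro ⟨⟨h1, h2⟩, h3⟩
      exact ⟨⟨h1, h2 (by omega)⟩, h3⟩

lemma fiber_series (f : Fin k → ℕ) :
    PowerSeries.mk (fun N => (Nat.card {L : Fin k → StrictPartition //
        (∀ a, Q f a (L a)) ∧ (∑ a, (L a).size) = N} : ℚ))
      = ∏ a : Fin k, coordSerN f a.val := by
  ext N
  rw [coeff_mk, PowerSeries.coeff_prod, card_tuple (fun a => Q f a) N]
  push_cast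
  apply Finset.sum_congr rfl
  intro l _
  apply Finset.prod_congr rfl
  intro a _
  rw [coord_coeff]

lemma sum_Mn (g : Fin k → ℕ) :
    ∑ a ∈ range k, Mn g a = ∑ a : Fin k, (a.val + 1) * g a := by
  have h1 : ∀ a, Mn g a = ∑ b : Fin k, if a ≤ b.val then g b else 0 := by
    intro a; rw [Mn, Finset.sum_filter]
  calc ∑ a ∈ range k, Mn g a
      = ∑ a ∈ range k, ∑ b : Fin k, if a ≤ b.val then g b else 0 :=
        Finset.sum_congr rfl (fun a _ => h1 a)
    _ = ∑ b : Fin k, ∑ a ∈ range k, if a ≤ b.val then g b else 0 := Finset.sum_comm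
    _ = ∑ b : Fin k, (b.val + 1) * g b := by
        apply Finset.sum_congr rfl
        intro b _
        rw [← Finset.sum_filter]
        have hf : (range k).filter (fun a => a ≤ b.val) = range (b.val + 1) := by
          ext x
          simp only [Finset.mem_filter, Finset.mem_range]
          have := b.isLt
          omega
        rw [hf, Finset.sum_const, Finset.card_range, smul_eq_mul]

lemma I2 (f : Fin k → ℕ) :
    ∑ a ∈ range k, Mn f a * Mn f a
      = ∑ b : Fin k, (b.val + 1) * (f b * f b)
        + 2 * ∑ p ∈ univ.filter (fun p : Fin k × Fin k => p.1 < p.2),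
            (p.1.val + 1) * f p.1 * f p.2 := by
  classical
  have h0 : ∀ a, Mn f a = ∑ b : Fin k, if a ≤ b.val then f b else 0 := by
    intro a; rw [Mn, Finset.sum_filter]
  have h1 : ∀ a, Mn f a * Mn f a
      = ∑ p ∈ (univ : Finset (Fin k × Fin k)),
          (if a ≤ p.1.val ∧ a ≤ p.2.val then f p.1 * f p.2 else 0) := by
    intro a
    rw [h0 a, Finset.sum_mul_sum, ← Finset.univ_product_univ, Finset.sum_product]
    apply Finset.sum_congr rfl
    intro b _
    apply Finset.sum_congr rfl
    intro c _
    by_cases hb : a ≤ b.val <;> by_cases hc : a ≤ c.val <;> simp [hb, hc]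
  have h2 : ∑ a ∈ range k, Mn f a * Mn f a
      = ∑ p ∈ (univ : Finset (Fin k × Fin k)), (min p.1.val p.2.val + 1) * (f p.1 * f p.2) := by
    calc ∑ a ∈ range k, Mn f a * Mn f a
        = ∑ a ∈ range k, ∑ p ∈ (univ : Finset (Fin k × Fin k)),
            (if a ≤ p.1.val ∧ a ≤ p.2.val then f p.1 * f p.2 else 0) :=
          Finset.sum_congr rfl (fun a _ => h1 a)
      _ = ∑ p ∈ (univ : Finset (Fin k × Fin k)), ∑ a ∈ range k,
            (if a ≤ p.1.val ∧ a ≤ p.2.val then f p.1 * f p.2 else 0) := Finset.sum_comm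
      _ = _ := by
          apply Finset.sum_congr rfl
          intro p _
          rw [← Finset.sum_filter]
          have hf : (range k).filter (fun a => a ≤ p.1.val ∧ a ≤ p.2.val)
              = range (min p.1.val p.2.val + 1) := by
            ext x
            simp only [Finset.mem_filter, Finset.mem_range]
            have := p.1.isLt
            have := p.2.isLt
            omega
          rw [hf, Finset.sum_const, Finset.card_range, smul_eq_mul]
  set w : Fin k × Fin k → ℕ := fun p => (min p.1.val p.2.val + 1) * (f p.1 * f p.2) with hw
  have hsplit1 : ∑ p ∈ (univ : Finset (Fin k × Fin k)), w p
      = ∑ p ∈ univ.filter (fun p : Fin k × Fin k => p.1 < p.2), w p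
        + ∑ p ∈ univ.filter (fun p : Fin k × Fin k => ¬ p.1 < p.2), w p :=
    (Finset.sum_filter_add_sum_filter_not univ _ w).symm
  have hsplit2 : ∑ p ∈ univ.filter (fun p : Fin k × Fin k => ¬ p.1 < p.2), w p
      = ∑ p ∈ (univ.filter (fun p : Fin k × Fin k => ¬ p.1 < p.2)).filter
            (fun p => p.2 < p.1), w p
        + ∑ p ∈ (univ.filter (fun p : Fin k × Fin k => ¬ p.1 < p.2)).filter
            (fun p => ¬ p.2 < p.1), w p :=
    (Finset.sum_filter_add_sum_filter_not _ _ w).symm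
  have hgt : (univ.filter (fun p : Fin k × Fin k => ¬ p.1 < p.2)).filter (fun p => p.2 < p.1)
      = univ.filter (fun p : Fin k × Fin k => p.2 < p.1) := by
    ext p
    simp only [Finset.mem_filter, Finset.mem_univ, true_and, Fin.lt_def]
    omega
  have hdiag : (univ.filter (fun p : Fin k × Fin k => ¬ p.1 < p.2)).filter (fun p => ¬ p.2 < p.1)
      = univ.filter (fun p : Fin k × Fin k => p.1 = p.2) := by
    ext p
    simp only [Finset.mem_filter, Finset.mem_univ, true_and, Fin.lt_def, Fin.ext_iff]
    omega
  have hswap : ∑ p ∈ univ.filter (fun p : Fin k × Fin k => p.2 < p.1), w p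
      = ∑ p ∈ univ.filter (fun p : Fin k × Fin k => p.1 < p.2), w p := by
    apply Finset.sum_nbij' (i := Prod.swap) (j := Prod.swap)
    · intro p hp
      simp only [Finset.mem_filter, Finset.mem_univ, true_and] at hp ⊢
      exact hp
    · intro p hp
      simp only [Finset.mem_filter, Finset.mem_univ, true_and] at hp ⊢
      exact hp
    · intro p _; exact Prod.swap_swap p
    · intro p _; exact Prod.swap_swap p
    · intro p _
      rw [hw]
      simp only [Prod.fst_swap, Prod.snd_swap]
      rw [Nat.min_comm]
      ring
  have hdiagsum : ∑ p ∈ univ.filter (fun p : Fin k × Fin k => p.1 = p.2), w p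
      = ∑ b : Fin k, (b.val + 1) * (f b * f b) := by
    apply Finset.sum_nbij' (i := fun p : Fin k × Fin k => p.1) (j := fun b : Fin k => (b, b))
    · intro p _; exact Finset.mem_univ _
    · intro b _
      simp only [Finset.mem_filter, Finset.mem_univ, true_and]
    · intro p hp
      simp only [Finset.mem_filter, Finset.mem_univ, true_and] at hp
      rw [Prod.ext_iff]
      exact ⟨rfl, hp⟩
    · intro b _; rfl
    · intro p hp
      simp only [Finset.mem_filter, Finset.mem_univ, true_and] at hp
      rw [hw]
      simp only [← hp, Nat.min_self]
  have hlt : ∑ p ∈ univ.filter (fun p : Fin k × Fin k => p.1 < p.2), w p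
      = ∑ p ∈ univ.filter (fun p : Fin k × Fin k => p.1 < p.2),
          (p.1.val + 1) * f p.1 * f p.2 := by
    apply Finset.sum_congr rfl
    intro p hp
    simp only [Finset.mem_filter, Finset.mem_univ, true_and, Fin.lt_def] at hp
    rw [hw]
    simp only [Nat.min_eq_left (le_of_lt hp)]
    ring
  rw [h2]
  rw [hgt, hdiag] at hsplit2
  have hfin : univ.sum w
      = ∑ p ∈ univ.filter (fun p : Fin k × Fin k => p.1 < p.2), w p
        + ∑ p ∈ univ.filter (fun p : Fin k × Fin k => ¬ p.1 < p.2), w p := hsplit1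
  omega

lemma exp_eq (f : Fin k → ℕ) :
    ∑ a ∈ range k, T (Mn f a)
      = (∑ a : Fin k, (a.val + 1) * (f a * (f a + 1) / 2))
        + ∑ p ∈ univ.filter (fun p : Fin k × Fin k => p.1 < p.2),
            (p.1.val + 1) * f p.1 * f p.2 := by
  have hL : 2 * ∑ a ∈ range k, T (Mn f a) = ∑ a ∈ range k, (Mn f a * Mn f a + Mn f a) := by
    rw [Finset.mul_sum]
    apply Finset.sum_congr rfl
    intro a _
    rw [two_T]
    ring
  have hR1 : 2 * ∑ a : Fin k, (a.val + 1) * (f a * (f a + 1) / 2)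
      = ∑ a : Fin k, (a.val + 1) * (f a * f a + f a) := by
    rw [Finset.mul_sum]
    apply Finset.sum_congr rfl
    intro a _
    calc 2 * ((a.val + 1) * (f a * (f a + 1) / 2)) = (a.val + 1) * (2 * T (f a)) := by
          rw [T]; ring
      _ = (a.val + 1) * (f a * f a + f a) := by rw [two_T]; ring
  have hq := I2 f
  have hl := sum_Mn f
  have hsum : ∑ a ∈ range k, (Mn f a * Mn f a + Mn f a)
      = ∑ a ∈ range k, Mn f a * Mn f a + ∑ a ∈ range k, Mn f a := Finset.sum_add_distrib
  have hR2 : ∑ a : Fin k, (a.val + 1) * (f a * f a + f a)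
      = ∑ b : Fin k, (b.val + 1) * (f b * f b) + ∑ a : Fin k, (a.val + 1) * f a := by
    rw [← Finset.sum_add_distrib]
    apply Finset.sum_congr rfl
    intro a _
    ring
  omega

lemma fiber_closed (hk : 1 ≤ k) (f : Fin k → ℕ) :
    PowerSeries.mk (fun N => (Nat.card {L : Fin k → StrictPartition //
        (∀ a, Q f a (L a)) ∧ (∑ a, (L a).size) = N} : ℚ))
      = (X : PowerSeries ℚ) ^ ((∑ a : Fin k, (a.val + 1) * (f a * (f a + 1) / 2))
          + ∑ p ∈ univ.filter (fun p : Fin k × Fin k => p.1 < p.2),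
              (p.1.val + 1) * f p.1 * f p.2)
        * ∏ a : Fin k, (qq (f a))⁻¹ := by
  rw [fiber_series, show (∏ a : Fin k, coordSerN f a.val) = ∏ a ∈ range k, coordSerN f a from
    Fin.prod_univ_eq_prod_range _ _, tele_prod hk f, ← exp_eq f]
  congr 1
  rw [← Fin.prod_univ_eq_prod_range (fun i => (qq (fN f i))⁻¹) k]
  apply Finset.prod_congr rfl
  intro a _
  have : fN f a.val = f a := by
    rw [fN, dif_pos a.isLt]
  rw [this]

end PartF

section PartG
variable {k : ℕ}

def Chain (L : Fin k → StrictPartition) : Prop :=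
  ∀ (a : Fin k) (h : a.val + 1 < k), (L ⟨a.val + 1, h⟩).first ≤ (L a).len

def gl (L : Fin k → StrictPartition) : Fin k → ℕ :=
  fun a => (L a).len - (if h : a.val + 1 < k then (L ⟨a.val + 1, h⟩).len else 0)

lemma chain_dec {L : Fin k → StrictPartition} (hL : Chain L) {a : ℕ} (h1 : a + 1 < k)
    (h0 : a < k) : (L ⟨a + 1, h1⟩).len ≤ (L ⟨a, h0⟩).len :=
  le_trans (len_le_first _) (hL ⟨a, h0⟩ h1)

lemma tele_len {L : Fin k → StrictPartition} (hL : Chain L) :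
    ∀ j a, k ≤ a + j → ∀ (ha : a < k), Mn (gl L) a = (L ⟨a, ha⟩).len := by
  intro j
  induction j with
  | zero => intro a haj ha; omega
  | succ j ih =>
    intro a haj ha
    rw [Mn_succ ha]
    by_cases h1 : a + 1 < k
    · rw [ih (a+1) (by omega) h1]
      show (L ⟨a, ha⟩).len - (if h : a + 1 < k then (L ⟨a+1, h⟩).len else 0)
          + (L ⟨a+1, h1⟩).len = (L ⟨a, ha⟩).len
      rw [dif_pos h1]
      exact Nat.sub_add_cancel (chain_dec hL h1 ha)
    · rw [Mn_of_ge (by omega : k ≤ a + 1)]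
      show (L ⟨a, ha⟩).len - (if h : a + 1 < k then (L ⟨a+1, h⟩).len else 0) + 0
          = (L ⟨a, ha⟩).len
      rw [dif_neg h1, Nat.sub_zero, add_zero]

lemma sum_len_eq {L : Fin k → StrictPartition} (hL : Chain L) :
    ∑ a ∈ range k, Mn (gl L) a = ∑ a : Fin k, (L a).len := by
  rw [← Fin.sum_univ_eq_sum_range (fun i => Mn (gl L) i) k]
  apply Finset.sum_congr rfl
  intro a _
  rw [tele_len hL k a.val (by omega) a.isLt, Fin.eta]

lemma sum_fin_Mn (f : Fin k → ℕ) : ∑ a : Fin k, Mn f a.val = ∑ a ∈ range k, Mn f a :=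
  Fin.sum_univ_eq_sum_range (fun i => Mn f i) k

lemma fiber_iff {n N : ℕ} (f : Fin k → ℕ) (hfs : ∑ a : Fin k, (a.val + 1) * f a = n)
    (L : Fin k → StrictPartition) :
    ((Chain L ∧ (∑ a, (L a).len) = n ∧ (∑ a, (L a).size) = N) ∧ gl L = f)
      ↔ (∀ a, Q f a (L a)) ∧ (∑ a, (L a).size) = N := by
  constructor
  · rintro ⟨⟨hc, hlen, hsz⟩, rfl⟩
    refine ⟨?_, hsz⟩
    intro a
    constructor
    · rw [tele_len hc k a.val (by omega) a.isLt, Fin.eta]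
    · intro hge1
      have hlt : a.val - 1 < k := by omega
      rw [tele_len hc k (a.val - 1) (by omega) hlt]
      have h2 : (a.val - 1) + 1 < k := by have := a.isLt; omega
      have h3 := hc ⟨a.val - 1, hlt⟩ h2
      have he : (⟨(a.val - 1) + 1, h2⟩ : Fin k) = a := by
        apply Fin.ext
        simp only []
        omega
      rwa [he] at h3
  · rintro ⟨hQ, hsz⟩
    have hlen_a : ∀ a : Fin k, (L a).len = Mn f a.val := fun a => (hQ a).1
    have hchain : Chain L := by
      intro a h
      have h2 := (hQ ⟨a.val + 1, h⟩).2 (by simp)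
      simp only [Nat.add_sub_cancel] at h2
      rw [hlen_a a]
      exact h2
    refine ⟨⟨hchain, ?_, hsz⟩, ?_⟩
    · calc ∑ a, (L a).len = ∑ a : Fin k, Mn f a.val :=
            Finset.sum_congr rfl (fun a _ => hlen_a a)
        _ = ∑ a ∈ range k, Mn f a := sum_fin_Mn f
        _ = ∑ a : Fin k, (a.val + 1) * f a := sum_Mn f
        _ = n := hfs
    · funext a
      show (L a).len - (if h : a.val + 1 < k then (L ⟨a.val + 1, h⟩).len else 0) = f a
      rw [hlen_a a]
      by_cases h1 : a.val + 1 < k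
      · rw [dif_pos h1, hlen_a ⟨a.val + 1, h1⟩]
        show Mn f a.val - Mn f (a.val + 1) = f a
        have hms := Mn_succ (f := f) a.isLt
        rw [Fin.eta] at hms
        omega
      · rw [dif_neg h1]
        have hms := Mn_succ (f := f) a.isLt
        rw [Fin.eta, Mn_of_ge (by omega : k ≤ a.val + 1)] at hms
        omega

lemma decompose (n N : ℕ) :
    Nat.card {L : Fin k → StrictPartition //
        (∀ (a : Fin k) (h : a.val + 1 < k), (L ⟨a.val + 1, h⟩).first ≤ (L a).len) ∧
        (∑ a, (L a).len) = n ∧ (∑ a, (L a).size) = N}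
      = ∑ f ∈ (Fintype.piFinset fun _ : Fin k => Finset.range (n + 1)).filter
            (fun f => ∑ a, (a.val + 1) * f a = n),
          Nat.card {L : Fin k → StrictPartition //
            (∀ a, Q f a (L a)) ∧ (∑ a, (L a).size) = N} := by
  classical
  haveI hT : Finite {L : Fin k → StrictPartition //
      Chain L ∧ (∑ a, (L a).len) = n ∧ (∑ a, (L a).size) = N} :=
    finite_tuple' _ (fun L hL => hL.2.2)
  set Fn := (Fintype.piFinset fun _ : Fin k => Finset.range (n + 1)).filter
      (fun f => ∑ a, (a.val + 1) * f a = n) with hFn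
  have hmem : ∀ x : {L : Fin k → StrictPartition //
      Chain L ∧ (∑ a, (L a).len) = n ∧ (∑ a, (L a).size) = N}, gl x.1 ∈ Fn := by
    intro x
    have hc : Chain x.1 := x.2.1
    have hlen := x.2.2.1
    rw [hFn, Finset.mem_filter]
    constructor
    · rw [Fintype.mem_piFinset]
      intro a
      rw [Finset.mem_range]
      have h1 : gl x.1 a ≤ (x.1 a).len := Nat.sub_le _ _
      have h2 : (x.1 a).len ≤ ∑ b, (x.1 b).len :=
        Finset.single_le_sum (f := fun b => (x.1 b).len) (fun i _ => Nat.zero_le _)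
          (Finset.mem_univ a)
      omega
    · rw [← sum_Mn (gl x.1), sum_len_eq hc, hlen]
  let ψ : {L : Fin k → StrictPartition //
      Chain L ∧ (∑ a, (L a).len) = n ∧ (∑ a, (L a).size) = N} → Fn :=
    fun x => ⟨gl x.1, hmem x⟩
  have h1 : Nat.card {L : Fin k → StrictPartition //
      Chain L ∧ (∑ a, (L a).len) = n ∧ (∑ a, (L a).size) = N}
      = ∑ y : Fn, Nat.card {x // ψ x = y} := by
    rw [← nat_card_sigma]
    exact (Nat.card_congr (Equiv.sigmaFiberEquiv ψ)).symm
  rw [show Nat.card {L : Fin k → StrictPartition //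
      (∀ (a : Fin k) (h : a.val + 1 < k), (L ⟨a.val + 1, h⟩).first ≤ (L a).len) ∧
      (∑ a, (L a).len) = n ∧ (∑ a, (L a).size) = N}
      = Nat.card {L : Fin k → StrictPartition //
      Chain L ∧ (∑ a, (L a).len) = n ∧ (∑ a, (L a).size) = N} from rfl, h1,
    ← Finset.sum_coe_sort Fn (fun f => Nat.card {L : Fin k → StrictPartition //
      (∀ a, Q f a (L a)) ∧ (∑ a, (L a).size) = N})]
  apply Finset.sum_congr rfl
  intro y _
  have hfs : ∑ a : Fin k, (a.val + 1) * (y : Fin k → ℕ) a = n := (Finset.mem_filter.mp y.2).2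
  have e1 : {x // ψ x = y} ≃ {L : Fin k → StrictPartition //
      (∀ a, Q (y : Fin k → ℕ) a (L a)) ∧ (∑ a, (L a).size) = N} :=
    ⟨fun x => ⟨x.1.1, (fiber_iff _ hfs x.1.1).mp ⟨x.1.2, congrArg Subtype.val x.2⟩⟩,
     fun z => ⟨⟨z.1, ((fiber_iff _ hfs z.1).mpr z.2).1⟩,
       Subtype.ext ((fiber_iff _ hfs z.1).mpr z.2).2⟩,
     fun x => rfl, fun z => rfl⟩
  rw [Nat.card_congr e1]

lemma qq_qPoch (n : ℕ) : qq n = qPoch n := rfl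

end PartG
end SkAux

/-- For `k ≥ 1`, with `S_k` the set of `k`-tuples of strict partitions with
`ℓ(λ^{(i)}) ≥ (λ^{(i+1)})₁` for `1 ≤ i < k`:
`∑_{𝛌 ∈ S_k} x^{ℓ(𝛌)} q^{|𝛌|} = ∑_{i_1,…,i_k ≥ 0}
  q^{∑_a a·i_a(i_a+1)/2 + ∑_{a<b} a·i_a·i_b} x^{∑_a a·i_a} / ∏_a (q;q)_{i_a}`.
(Here the tuple is indexed by `Fin k`, index `a : Fin k` playing the role of `a+1`.) -/
theorem Sk_gf (k : ℕ) (hk : 1 ≤ k) :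
    (PowerSeries.mk (fun n => PowerSeries.mk (fun N =>
        (Nat.card {L : Fin k → StrictPartition //
          (∀ (a : Fin k) (h : a.val + 1 < k), (L ⟨a.val + 1, h⟩).first ≤ (L a).len) ∧
          (∑ a, (L a).len) = n ∧ (∑ a, (L a).size) = N} : ℚ))) :
      PowerSeries (PowerSeries ℚ)) =
      PowerSeries.mk (fun n =>
        ∑ f ∈ (Fintype.piFinset fun _ : Fin k => Finset.range (n + 1)).filter
            (fun f => ∑ a, (a.val + 1) * f a = n),
          (PowerSeries.X : PowerSeries ℚ) ^
              (∑ a, (a.val + 1) * (f a * (f a + 1) / 2) +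
                ∑ p ∈ Finset.univ.filter (fun p : Fin k × Fin k => p.1 < p.2),
                  (p.1.val + 1) * f p.1 * f p.2) *
            ∏ a, (qPoch (f a))⁻¹) := by
  apply PowerSeries.ext
  intro n
  rw [coeff_mk, coeff_mk]
  apply PowerSeries.ext
  intro N
  rw [coeff_mk, map_sum, SkAux.decompose n N]
  push_cast
  apply Finset.sum_congr rfl
  intro f hf
  have hcl := SkAux.fiber_closed hk f
  simp only [SkAux.qq_qPoch] at hcl
  rw [← hcl, coeff_mk]
end

section
/- Fix j_1, …, j_k ≥ 0 and let A be the set of k-tuples of strict partitions with ℓ(λ^{(i)}) = j_i + ⋯ + j_k for all i. Let V = {𝛌 ∈ A : ℓ(λ^{(i)}) ≥ (λ^{(i+1)})_1 for 1 ≤ i < k} and W = {𝛌 ∈ A : for 1 ≤ i < k, the last ℓ(λ^{(i+1)}) parts of λ^{(i)} form the staircase Δ_{ℓ(λ^{(i+1)})}}. Then there is a size-preserving bijection from V to W (equivalently, ∑_{𝛌∈V} q^{|𝛌|} = ∑_{𝛌∈W} q^{|𝛌|}). -/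
open Finset PowerSeries

/-- The staircase `Δ_m = (m, m-1, …, 1)` as a list. -/
def staircase (m : ℕ) : List ℕ := (List.range m).reverse.map (· + 1)

namespace VW

abbrev PF := {S : Finset ℕ // ∀ x ∈ S, 0 < x}

def rk (T : Finset ℕ) (t : ℕ) : ℕ := (T.filter (· ≤ t)).card
def shiftBy (S : Finset ℕ) (v : ℕ) : ℕ := v + (S.filter (fun s => v < s)).card

lemma rk_lt_rk {T : Finset ℕ} {t t' : ℕ} (ht' : t' ∈ T) (h : t < t') :
    rk T t < rk T t' := by
  apply Finset.card_lt_card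
  constructor
  · exact Finset.monotone_filter_right _ (fun x _ hx => le_trans hx h.le)
  · intro hsub
    have : t' ∈ T.filter (· ≤ t) := hsub (by simp [ht'])
    simp at this
    omega

lemma rk_injOn {T : Finset ℕ} : Set.InjOn (rk T) T := by
  intro a ha b hb hab
  rcases lt_trichotomy a b with h | h | h
  · exact absurd hab (Nat.ne_of_lt (rk_lt_rk hb h))
  · exact h
  · exact absurd hab.symm (Nat.ne_of_lt (rk_lt_rk ha h))

lemma rk_mem_Icc {T : Finset ℕ} {t : ℕ} (ht : t ∈ T) : rk T t ∈ Icc 1 T.card := by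
  simp only [mem_Icc]
  refine ⟨?_, Finset.card_filter_le _ _⟩
  have h0 : t ∈ T.filter (· ≤ t) := by simp [ht]
  exact Finset.card_pos.mpr ⟨t, h0⟩

lemma rk_image (T : Finset ℕ) : T.image (rk T) = Icc 1 T.card := by
  apply Finset.eq_of_subset_of_card_le
  · intro u hu
    rcases Finset.mem_image.mp hu with ⟨t, ht, rfl⟩
    exact rk_mem_Icc ht
  · rw [Nat.card_Icc, Finset.card_image_of_injOn rk_injOn]
    omega

lemma rk_le_self {T : Finset ℕ} (hT : ∀ x ∈ T, 0 < x) (v : ℕ) : rk T v ≤ v := by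
  have : T.filter (· ≤ v) ⊆ Icc 1 v := by
    intro x hx
    simp only [mem_filter] at hx
    simp only [mem_Icc]
    exact ⟨hT x hx.1, hx.2⟩
  have := Finset.card_le_card this
  simpa [rk, Nat.card_Icc] using this

/-- the selected subset of `T`: elements whose rank lies in `U`. -/
def sel (T U : Finset ℕ) : Finset ℕ := T.filter (fun t => rk T t ∈ U)

lemma sel_subset (T U : Finset ℕ) : sel T U ⊆ T := Finset.filter_subset _ _

lemma sel_image {T U : Finset ℕ} (hU : U ⊆ Icc 1 T.card) :
    (sel T U).image (rk T) = U := by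
  apply Finset.Subset.antisymm
  · intro u hu
    rcases Finset.mem_image.mp hu with ⟨t, ht, rfl⟩
    exact (Finset.mem_filter.mp ht).2
  · intro u hu
    have : u ∈ T.image (rk T) := by rw [rk_image]; exact hU hu
    rcases Finset.mem_image.mp this with ⟨t, ht, rfl⟩
    exact Finset.mem_image.mpr ⟨t, Finset.mem_filter.mpr ⟨ht, hu⟩, rfl⟩

lemma sel_card {T U : Finset ℕ} (hU : U ⊆ Icc 1 T.card) :
    (sel T U).card = U.card := by
  have h := Finset.card_image_of_injOn (rk_injOn.mono (by
    intro x hx; exact sel_subset T U hx))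
  rw [sel_image hU] at h
  omega


lemma le_shiftBy (S : Finset ℕ) (v : ℕ) : v ≤ shiftBy S v := Nat.le_add_right _ _

lemma shiftBy_strictMono {S : Finset ℕ} {v v' : ℕ} (h : v < v') (hv' : v' ∉ S) :
    shiftBy S v < shiftBy S v' := by
  have hsub : S.filter (fun s => v < s) ⊆ S.filter (fun s => v' < s) ∪ Ioo v v' := by
    intro s hs
    simp only [mem_filter, mem_union, mem_Ioo] at *
    rcases lt_or_ge v' s with h1 | h1
    · exact Or.inl ⟨hs.1, h1⟩
    · right
      refine ⟨hs.2, lt_of_le_of_ne h1 ?_⟩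
      rintro rfl
      exact hv' hs.1
  have h1 := Finset.card_le_card hsub
  have h2 := Finset.card_union_le (S.filter (fun s => v' < s)) (Ioo v v')
  have h3 : (Ioo v v').card = v' - v - 1 := Nat.card_Ioo _ _
  unfold shiftBy
  omega

lemma shiftBy_injOn {S : Finset ℕ} {v v' : ℕ} (hv : v ∉ S) (hv' : v' ∉ S)
    (h : shiftBy S v = shiftBy S v') : v = v' := by
  rcases lt_trichotomy v v' with hh | hh | hh
  · exact absurd h (Nat.ne_of_lt (shiftBy_strictMono hh hv'))
  · exact hh
  · exact absurd h.symm (Nat.ne_of_lt (shiftBy_strictMono hh hv))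

lemma filter_le_card_eq {S : Finset ℕ} (v : ℕ) :
    (S.filter (fun s => v < s)).card + (S.filter (fun s => s ≤ v)).card = S.card := by
  have h := Finset.card_filter_add_card_filter_not (s := S) (p := fun s => v < s)
  simp only [not_lt] at h
  omega

lemma shiftBy_lower {S : Finset ℕ} (hS : ∀ x ∈ S, 0 < x) {v : ℕ} (hv : v ∉ S)
    (hv1 : 1 ≤ v) : S.card + 1 ≤ shiftBy S v := by
  have hsplit := filter_le_card_eq (S := S) v
  have hle : (S.filter (fun s => s ≤ v)).card ≤ v - 1 := by
    have hsub : S.filter (fun s => s ≤ v) ⊆ Icc 1 (v - 1) := by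
      intro x hx
      simp only [mem_filter, mem_Icc] at *
      have hx0 := hS x hx.1
      have : x ≠ v := by rintro rfl; exact hv hx.1
      omega
    have := Finset.card_le_card hsub
    simpa [Nat.card_Icc] using this
  unfold shiftBy
  omega

lemma shiftBy_surj {S : Finset ℕ} (hS : ∀ x ∈ S, 0 < x) :
    ∀ v', S.card + 1 ≤ v' → ∃ v, 1 ≤ v ∧ v ∉ S ∧ shiftBy S v = v' := by
  intro v' hv'
  induction v', hv' using Nat.le_induction with
  | base =>
    have hne : ((Icc 1 (S.card + 1)).filter (fun x => x ∉ S)).Nonempty := by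
      by_contra hemp
      rw [Finset.not_nonempty_iff_eq_empty, Finset.filter_eq_empty_iff] at hemp
      have hsub : Icc 1 (S.card + 1) ⊆ S := by
        intro x hx
        by_contra hxx
        exact (hemp hx) hxx
      have := Finset.card_le_card hsub
      simp [Nat.card_Icc] at this
    set v := ((Icc 1 (S.card + 1)).filter (fun x => x ∉ S)).min' hne with hvdef
    have hvmem := Finset.min'_mem _ hne
    simp only [mem_filter, mem_Icc, ← hvdef] at hvmem
    refine ⟨v, hvmem.1.1, hvmem.2, ?_⟩
    have hfill : ∀ x, 1 ≤ x → x < v → x ∈ S := by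
      intro x hx1 hxv
      by_contra hxs
      have hxmem : x ∈ (Icc 1 (S.card + 1)).filter (fun x => x ∉ S) := by
        simp only [mem_filter, mem_Icc]
        exact ⟨⟨hx1, by omega⟩, hxs⟩
      have := Finset.min'_le _ _ hxmem
      omega
    have heq : S.filter (fun s => s ≤ v) = Icc 1 (v - 1) := by
      ext x
      simp only [mem_filter, mem_Icc]
      constructor
      · intro hx
        have := hS x hx.1
        have : x ≠ v := by rintro rfl; exact hvmem.2 hx.1
        omega
      · intro hx
        have := hfill x hx.1 (by omega)
        exact ⟨this, by omega⟩
    have hsplit := filter_le_card_eq (S := S) v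
    rw [heq] at hsplit
    rw [Nat.card_Icc] at hsplit
    unfold shiftBy
    omega
  | succ v' hge ih =>
    obtain ⟨v, hv1, hvS, hvs⟩ := ih
    have hne : ((Icc (v + 1) (v + S.card + 1)).filter (fun x => x ∉ S)).Nonempty := by
      by_contra hemp
      rw [Finset.not_nonempty_iff_eq_empty, Finset.filter_eq_empty_iff] at hemp
      have hsub : Icc (v + 1) (v + S.card + 1) ⊆ S := by
        intro x hx
        by_contra hxx
        exact (hemp hx) hxx
      have := Finset.card_le_card hsub
      simp [Nat.card_Icc] at this
      omega
    set w := ((Icc (v + 1) (v + S.card + 1)).filter (fun x => x ∉ S)).min' hne with hwdef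
    have hwmem := Finset.min'_mem _ hne
    simp only [mem_filter, mem_Icc, ← hwdef] at hwmem
    have hfill : ∀ x, v < x → x < w → x ∈ S := by
      intro x hx1 hxw
      by_contra hxs
      have hxmem : x ∈ (Icc (v + 1) (v + S.card + 1)).filter (fun x => x ∉ S) := by
        simp only [mem_filter, mem_Icc]
        exact ⟨⟨by omega, by omega⟩, hxs⟩
      have := Finset.min'_le _ _ hxmem
      omega
    refine ⟨w, by omega, hwmem.2, ?_⟩
    have heq : S.filter (fun s => v < s) = S.filter (fun s => w < s) ∪ Ioo v w := by
      ext x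
      simp only [mem_filter, mem_union, mem_Ioo]
      constructor
      · intro hx
        rcases lt_or_ge w x with h1 | h1
        · exact Or.inl ⟨hx.1, h1⟩
        · right
          have : x ≠ w := by rintro rfl; exact hwmem.2 hx.1
          omega
      · rintro (hx | hx)
        · exact ⟨hx.1, by omega⟩
        · exact ⟨hfill x hx.1 hx.2, hx.1⟩
    have hdisj : Disjoint (S.filter (fun s => w < s)) (Ioo v w) := by
      rw [Finset.disjoint_left]
      intro x hx1 hx2
      simp only [mem_filter] at hx1
      simp only [mem_Ioo] at hx2
      omega
    have hcard : (S.filter (fun s => v < s)).card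
        = (S.filter (fun s => w < s)).card + (Ioo v w).card := by
      rw [heq, Finset.card_union_of_disjoint hdisj]
    rw [Nat.card_Ioo] at hcard
    unfold shiftBy at *
    omega


def phi (T U : Finset ℕ) : Finset ℕ × Finset ℕ :=
  (Icc 1 (sel T U).card ∪ (T \ sel T U).image (shiftBy (sel T U)), sel T U)

def psiW (T' U' : Finset ℕ) : Finset ℕ :=
  (Icc 1 ((T' \ Icc 1 U'.card).sup id)).filter
    (fun v => v ∉ U' ∧ shiftBy U' v ∈ T' \ Icc 1 U'.card)

def psi (T' U' : Finset ℕ) : Finset ℕ × Finset ℕ :=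
  (U' ∪ psiW T' U', U'.image (rk (U' ∪ psiW T' U')))

section Forward
variable {T U : Finset ℕ}

lemma sel_pos (hT : ∀ x ∈ T, 0 < x) : ∀ x ∈ sel T U, 0 < x := fun x hx => hT x (sel_subset T U hx)

lemma shift_big (hT : ∀ x ∈ T, 0 < x) : ∀ v ∈ T \ sel T U, (sel T U).card + 1 ≤ shiftBy (sel T U) v := by
  intro v hv
  rw [mem_sdiff] at hv
  exact shiftBy_lower (sel_pos hT) hv.2 (hT v hv.1)

lemma phi_disj (hT : ∀ x ∈ T, 0 < x) :
    Disjoint (Icc 1 (sel T U).card) ((T \ sel T U).image (shiftBy (sel T U))) := by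
  rw [Finset.disjoint_left]
  intro x hx1 hx2
  rw [mem_Icc] at hx1
  rcases Finset.mem_image.mp hx2 with ⟨v, hv, rfl⟩
  have := shift_big hT v hv
  omega

lemma phi_fst_card (hT : ∀ x ∈ T, 0 < x) : (phi T U).1.card = T.card := by
  have h1 := phi_disj (T := T) (U := U) hT
  have h2 : ((T \ sel T U).image (shiftBy (sel T U))).card = (T \ sel T U).card := by
    apply Finset.card_image_of_injOn
    intro a ha b hb hab
    rw [Finset.mem_coe, mem_sdiff] at ha hb
    exact shiftBy_injOn ha.2 hb.2 hab
  have h3 : (T \ sel T U).card = T.card - (sel T U).card :=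
    Finset.card_sdiff_of_subset (sel_subset T U)
  have h4 : (sel T U).card ≤ T.card := Finset.card_le_card (sel_subset T U)
  rw [phi, Finset.card_union_of_disjoint h1, h2, h3, Nat.card_Icc]
  omega

lemma phi_fst_pos (hT : ∀ x ∈ T, 0 < x) : ∀ x ∈ (phi T U).1, 0 < x := by
  intro x hx
  rcases Finset.mem_union.mp hx with hx | hx
  · rw [mem_Icc] at hx; omega
  · rcases Finset.mem_image.mp hx with ⟨v, hv, rfl⟩
    rw [mem_sdiff] at hv
    have := hT v hv.1
    have := le_shiftBy (sel T U) v
    omega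

lemma sum_card_comm (A B : Finset ℕ) (r : ℕ → ℕ → Prop) [DecidableRel r] :
    ∑ a ∈ A, (B.filter (r a)).card = ∑ b ∈ B, (A.filter (fun a => r a b)).card := by
  simp only [Finset.card_filter]
  rw [Finset.sum_comm]

lemma phi_sum (hT : ∀ x ∈ T, 0 < x) (hU : U ⊆ Icc 1 T.card) :
    (phi T U).1.sum id + (phi T U).2.sum id = T.sum id + U.sum id := by
  set S := sel T U with hS
  have hps : ∀ x ∈ S, 0 < x := sel_pos hT
  -- sum of first component
  have e1 : (phi T U).1.sum id = (Icc 1 S.card).sum id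
      + ∑ v ∈ T \ S, (v + (S.filter (fun s => v < s)).card) := by
    rw [phi, Finset.sum_union (phi_disj hT)]
    congr 1
    rw [Finset.sum_image]
    · rfl
    · intro a ha b hb hab
      rw [Finset.mem_coe, mem_sdiff] at ha hb
      exact shiftBy_injOn ha.2 hb.2 hab
  -- sum U via ranks
  have e2 : U.sum id = ∑ s ∈ S, rk T s := by
    rw [← sel_image hU, Finset.sum_image]
    · rfl
    · intro a ha b hb hab
      exact rk_injOn (sel_subset T U ha) (sel_subset T U hb) hab
  -- split rank
  have e3 : ∀ s, rk T s = (S.filter (· ≤ s)).card + ((T \ S).filter (· ≤ s)).card := by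
    intro s
    rw [rk, ← Finset.card_union_of_disjoint, ← Finset.filter_union,
      Finset.union_sdiff_of_subset (sel_subset T U)]
    exact Finset.disjoint_filter_filter (Finset.sdiff_disjoint.symm)
  -- inner rank sum is sum over Icc 1 S.card
  have e4 : ∑ s ∈ S, (S.filter (· ≤ s)).card = (Icc 1 S.card).sum id := by
    rw [← rk_image S, Finset.sum_image]
    · rfl
    · intro a ha b hb hab
      exact rk_injOn ha hb hab
  -- double counting
  have e5 : ∑ s ∈ S, ((T \ S).filter (· ≤ s)).card
      = ∑ v ∈ T \ S, (S.filter (fun s => v ≤ s)).card := by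
    have := sum_card_comm S (T \ S) (fun s v => v ≤ s)
    simpa using this
  have e6 : ∀ v ∈ T \ S, (S.filter (fun s => v ≤ s)).card
      = (S.filter (fun s => v < s)).card := by
    intro v hv
    rw [mem_sdiff] at hv
    congr 1
    apply Finset.filter_congr
    intro s hs
    constructor
    · intro h
      rcases Nat.lt_or_ge v s with h' | h'
      · exact h'
      · exfalso; have : v = s := by omega
        subst this; exact hv.2 hs
    · omega
  have e7 : T.sum id = (T \ S).sum id + S.sum id :=
    (Finset.sum_sdiff (sel_subset T U)).symm
  have e8 : ∑ v ∈ T \ S, (v + (S.filter (fun s => v < s)).card)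
      = (T \ S).sum id + ∑ v ∈ T \ S, (S.filter (fun s => v < s)).card := by
    rw [Finset.sum_add_distrib]
    rfl
  have e9 : ∑ s ∈ S, rk T s = (Icc 1 S.card).sum id
      + ∑ v ∈ T \ S, (S.filter (fun s => v < s)).card := by
    calc ∑ s ∈ S, rk T s
        = ∑ s ∈ S, ((S.filter (· ≤ s)).card + ((T \ S).filter (· ≤ s)).card) := by
          apply Finset.sum_congr rfl; intro s _; exact e3 s
      _ = (Icc 1 S.card).sum id + ∑ v ∈ T \ S, (S.filter (fun s => v ≤ s)).card := by
          rw [Finset.sum_add_distrib, e4, e5]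
      _ = _ := by
          congr 1
          apply Finset.sum_congr rfl
          exact e6
  have : (phi T U).2.sum id = S.sum id := rfl
  rw [this, e1, e2, e9, e8, e7]
  ring

end Forward

section Comp
variable {T U : Finset ℕ}

lemma psi_phi (hT : ∀ x ∈ T, 0 < x) (hU : U ⊆ Icc 1 T.card) :
    psi (phi T U).1 (phi T U).2 = (T, U) := by
  set S := sel T U with hSdef
  -- M = image of shiftBy S over T \ S
  have hM : (phi T U).1 \ Icc 1 (phi T U).2.card
      = (T \ S).image (shiftBy S) := by
    have : (phi T U).2.card = S.card := rfl
    rw [this]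
    exact Finset.union_sdiff_cancel_left (phi_disj hT)
  have hW : psiW (phi T U).1 (phi T U).2 = T \ S := by
    rw [psiW, hM]
    apply Finset.Subset.antisymm
    · intro v hv
      simp only [mem_filter, mem_Icc] at hv
      rcases Finset.mem_image.mp hv.2.2 with ⟨v₀, hv₀, heq⟩
      have : v₀ = v := shiftBy_injOn (Finset.mem_sdiff.mp hv₀).2 hv.2.1 heq
      subst this
      exact hv₀
    · intro v hv
      have hvpos := hT v (Finset.mem_sdiff.mp hv).1
      have hmem : shiftBy S v ∈ (T \ S).image (shiftBy S) :=
        Finset.mem_image_of_mem _ hv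
      simp only [mem_filter, mem_Icc]
      refine ⟨⟨hvpos, ?_⟩, (Finset.mem_sdiff.mp hv).2, hmem⟩
      calc v ≤ shiftBy S v := le_shiftBy _ _
        _ ≤ _ := Finset.le_sup (f := id) hmem
  have hT1 : (phi T U).2 ∪ psiW (phi T U).1 (phi T U).2 = T := by
    rw [hW]
    exact Finset.union_sdiff_of_subset (sel_subset T U)
  rw [psi, hT1]
  have : (phi T U).2 = S := rfl
  rw [this, sel_image hU]

lemma phi_psi {T' U' : Finset ℕ} (hT' : ∀ x ∈ T', 0 < x) (hU' : ∀ x ∈ U', 0 < x)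
    (hIcc : Icc 1 U'.card ⊆ T') :
    phi (psi T' U').1 (psi T' U').2 = (T', U') := by
  set n := U'.card with hn
  set M := T' \ Icc 1 n with hMdef
  have hMlow : ∀ x ∈ M, n + 1 ≤ x := by
    intro x hx
    rw [hMdef, mem_sdiff, mem_Icc] at hx
    have := hT' x hx.1
    omega
  set W := psiW T' U' with hWdef
  have hWmem : ∀ v ∈ W, 1 ≤ v ∧ v ∉ U' ∧ shiftBy U' v ∈ M := by
    intro v hv
    rw [hWdef, psiW, mem_filter, mem_Icc] at hv
    exact ⟨hv.1.1, hv.2.1, hv.2.2⟩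
  have hWimage : W.image (shiftBy U') = M := by
    apply Finset.Subset.antisymm
    · intro x hx
      rcases Finset.mem_image.mp hx with ⟨v, hv, rfl⟩
      exact (hWmem v hv).2.2
    · intro x hx
      obtain ⟨v, hv1, hv2, hv3⟩ := shiftBy_surj hU' x (by
        have := hMlow x hx; omega)
      apply Finset.mem_image.mpr
      refine ⟨v, ?_, hv3⟩
      rw [hWdef, psiW, mem_filter, mem_Icc]
      refine ⟨⟨hv1, ?_⟩, hv2, by rw [hv3]; exact hx⟩
      calc v ≤ shiftBy U' v := le_shiftBy _ _
        _ = x := hv3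
        _ ≤ _ := Finset.le_sup (f := id) hx
  have hWdisj : Disjoint U' W := by
    rw [Finset.disjoint_left]
    intro x hx1 hx2
    exact (hWmem x hx2).2.1 hx1
  have hWcard : W.card = M.card := by
    rw [← hWimage]
    exact (Finset.card_image_of_injOn (by
      intro a ha b hb hab
      exact shiftBy_injOn (hWmem a ha).2.1 (hWmem b hb).2.1 hab)).symm
  have hMcard : M.card = T'.card - n := by
    rw [hMdef, Finset.card_sdiff_of_subset hIcc, Nat.card_Icc]
    omega
  have hncard : n ≤ T'.card := by
    have := Finset.card_le_card hIcc
    simpa [Nat.card_Icc] using this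
  set Tn := U' ∪ W with hTn
  have hTncard : Tn.card = T'.card := by
    rw [hTn, Finset.card_union_of_disjoint hWdisj, hWcard, hMcard]
    omega
  -- U'' is the rank image
  set Un := U'.image (rk Tn) with hUn
  have hU'sub : U' ⊆ Tn := Finset.subset_union_left
  have hUnsub : Un ⊆ Icc 1 Tn.card := by
    intro u hu
    rcases Finset.mem_image.mp hu with ⟨s, hs, rfl⟩
    exact rk_mem_Icc (hU'sub hs)
  have hUncard : Un.card = n := by
    rw [hUn, Finset.card_image_of_injOn (rk_injOn.mono (by
      intro x hx; exact hU'sub hx))]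
  have hsel : sel Tn Un = U' := by
    have hsub : U' ⊆ sel Tn Un := by
      intro s hs
      rw [sel, mem_filter]
      exact ⟨hU'sub hs, Finset.mem_image_of_mem _ hs⟩
    apply (Finset.eq_of_subset_of_card_le hsub (by
      rw [sel_card hUnsub, hUncard])).symm
  have hpsi1 : (psi T' U').1 = Tn := rfl
  have hpsi2 : (psi T' U').2 = Un := rfl
  rw [phi, hpsi1, hpsi2, hsel]
  have hTdiff : Tn \ U' = W := by
    rw [hTn]
    exact Finset.union_sdiff_cancel_left hWdisj
  rw [hTdiff, hWimage]
  have : U'.card = n := rfl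
  rw [this]
  rw [Finset.union_sdiff_of_subset hIcc]

end Comp

-- positivity of psi outputs
lemma psiW_pos (T' U' : Finset ℕ) : ∀ x ∈ psiW T' U', 0 < x := by
  intro x hx
  rw [psiW, mem_filter, mem_Icc] at hx
  omega

lemma psi_fst_pos {T' U' : Finset ℕ} (hU' : ∀ x ∈ U', 0 < x) :
    ∀ x ∈ (psi T' U').1, 0 < x := by
  intro x hx
  rcases Finset.mem_union.mp hx with hx | hx
  · exact hU' x hx
  · exact psiW_pos T' U' x hx

lemma psi_snd_pos (T' U' : Finset ℕ) : ∀ x ∈ (psi T' U').2, 0 < x := by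
  intro x hx
  rcases Finset.mem_image.mp hx with ⟨s, hs, rfl⟩
  have := rk_mem_Icc (T := U' ∪ psiW T' U') (Finset.mem_union_left _ hs)
  rw [mem_Icc] at this
  omega

/-- conditions of psi outputs -/
lemma psi_conds {T' U' : Finset ℕ} (hT' : ∀ x ∈ T', 0 < x) (hU' : ∀ x ∈ U', 0 < x)
    (hIcc : Icc 1 U'.card ⊆ T') :
    (psi T' U').1.card = T'.card ∧ (psi T' U').2.card = U'.card ∧
      (psi T' U').2 ⊆ Icc 1 T'.card := by
  have h := phi_psi hT' hU' hIcc
  -- derive from phi_psi and phi facts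
  have hpos1 : ∀ x ∈ (psi T' U').1, 0 < x := psi_fst_pos hU'
  have hc1 : (phi (psi T' U').1 (psi T' U').2).1.card = (psi T' U').1.card :=
    phi_fst_card hpos1
  have hc1' : (psi T' U').1.card = T'.card := by
    rw [← hc1, h]
  refine ⟨hc1', ?_, ?_⟩
  · -- snd card : image of rk over U'
    have : (psi T' U').2 = U'.image (rk ((psi T' U').1)) := rfl
    rw [this, Finset.card_image_of_injOn]
    apply rk_injOn.mono
    intro x hx
    have : U' ⊆ (psi T' U').1 := Finset.subset_union_left
    exact this hx
  · intro u hu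
    rcases Finset.mem_image.mp hu with ⟨s, hs, rfl⟩
    have hsub : U' ⊆ (psi T' U').1 := Finset.subset_union_left
    have := rk_mem_Icc (hsub hs)
    rwa [hc1'] at this

def Xc (c₁ c₂ : ℕ) (p : PF × PF) : Prop :=
  p.1.1.card = c₁ ∧ p.2.1.card = c₂ ∧ p.2.1 ⊆ Icc 1 c₁
def Yc (c₁ c₂ : ℕ) (p : PF × PF) : Prop :=
  p.1.1.card = c₁ ∧ p.2.1.card = c₂ ∧ Icc 1 c₂ ⊆ p.1.1

def phiPF (p : PF × PF) : PF × PF :=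
  (⟨(phi p.1.1 p.2.1).1, phi_fst_pos p.1.2⟩, ⟨(phi p.1.1 p.2.1).2, sel_pos p.1.2⟩)
def psiPF (p : PF × PF) : PF × PF :=
  (⟨(psi p.1.1 p.2.1).1, psi_fst_pos p.2.2⟩, ⟨(psi p.1.1 p.2.1).2, psi_snd_pos _ _⟩)

lemma pfpair_ext {p q : PF × PF} (h1 : p.1.1 = q.1.1) (h2 : p.2.1 = q.2.1) : p = q := by
  apply Prod.ext <;> [exact Subtype.ext h1; exact Subtype.ext h2]

def coreE (c₁ c₂ : ℕ) : {p : PF × PF // Xc c₁ c₂ p} ≃ {p : PF × PF // Yc c₁ c₂ p} where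
  toFun x := ⟨phiPF x.1, by
    obtain ⟨h1, h2, h3⟩ := x.2
    have hU : x.1.2.1 ⊆ Icc 1 x.1.1.1.card := by rw [h1]; exact h3
    refine ⟨?_, ?_, ?_⟩
    · rw [phiPF]; show (phi _ _).1.card = c₁
      rw [phi_fst_card x.1.1.2, h1]
    · show (phi _ _).2.card = c₂
      show (sel _ _).card = c₂
      rw [sel_card hU, h2]
    · show Icc 1 c₂ ⊆ (phi _ _).1
      rw [phi]
      have : (sel x.1.1.1 x.1.2.1).card = c₂ := by rw [sel_card hU, h2]
      rw [this]
      exact Finset.subset_union_left⟩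
  invFun y := ⟨psiPF y.1, by
    obtain ⟨h1, h2, h3⟩ := y.2
    have hIcc : Icc 1 y.1.2.1.card ⊆ y.1.1.1 := by rw [h2]; exact h3
    obtain ⟨c1, c2, c3⟩ := psi_conds y.1.1.2 y.1.2.2 hIcc
    refine ⟨?_, ?_, ?_⟩
    · show (psi _ _).1.card = c₁
      rw [c1, h1]
    · show (psi _ _).2.card = c₂
      rw [c2, h2]
    · show (psi _ _).2 ⊆ Icc 1 c₁
      have := c3
      rw [h1] at this
      exact this⟩
  left_inv x := by
    apply Subtype.ext
    obtain ⟨h1, h2, h3⟩ := x.2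
    have hU : x.1.2.1 ⊆ Icc 1 x.1.1.1.card := by rw [h1]; exact h3
    have h := psi_phi x.1.1.2 hU
    apply pfpair_ext
    · show (psi (phi _ _).1 (phi _ _).2).1 = x.1.1.1
      rw [h]
    · show (psi (phi _ _).1 (phi _ _).2).2 = x.1.2.1
      rw [h]
  right_inv y := by
    apply Subtype.ext
    obtain ⟨h1, h2, h3⟩ := y.2
    have hIcc : Icc 1 y.1.2.1.card ⊆ y.1.1.1 := by rw [h2]; exact h3
    have h := phi_psi y.1.1.2 y.1.2.2 hIcc
    apply pfpair_ext
    · show (phi (psi _ _).1 (psi _ _).2).1 = y.1.1.1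
      rw [h]
    · show (phi (psi _ _).1 (psi _ _).2).2 = y.1.2.1
      rw [h]

lemma coreE_sum (c₁ c₂ : ℕ) (x : {p : PF × PF // Xc c₁ c₂ p}) :
    ((coreE c₁ c₂ x).1.1.1.sum id + (coreE c₁ c₂ x).1.2.1.sum id)
      = x.1.1.1.sum id + x.1.2.1.sum id := by
  obtain ⟨h1, h2, h3⟩ := x.2
  have hU : x.1.2.1 ⊆ Icc 1 x.1.1.1.card := by rw [h1]; exact h3
  exact phi_sum x.1.1.2 hU


instance : IsAntisymm ℕ (· > ·) := ⟨fun a b h1 h2 => by omega⟩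


lemma parts_nodup (μ : StrictPartition) : μ.parts.Nodup := by
  apply List.Pairwise.imp (fun {x y} (h : x > y) => Nat.ne_of_gt h)
  exact μ.sorted

/-- the parts of a strict partition as a finset -/
def toF (μ : StrictPartition) : PF :=
  ⟨⟨(↑μ.parts : Multiset ℕ), parts_nodup μ⟩, fun x hx => μ.pos x (by exact hx)⟩

def ofList (l : List ℕ) (hp : ∀ x ∈ l, 0 < x) (hs : l.Pairwise (· > ·)) : StrictPartition :=
  ⟨l, hp, hs⟩

lemma sort_reverse_sorted (S : Finset ℕ) : ((S.sort (· ≤ ·)).reverse).Pairwise (· > ·) := by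
  rw [List.pairwise_reverse]
  exact (Finset.sortedLT_sort S).pairwise

/-- inverse: sorted descending list of a finset of positives -/
def ofF (S : PF) : StrictPartition :=
  ⟨(S.1.sort (· ≤ ·)).reverse,
   fun x hx => S.2 x (by rw [List.mem_reverse, Finset.mem_sort] at hx; exact hx),
   sort_reverse_sorted S.1⟩

def spEquiv : StrictPartition ≃ PF where
  toFun := toF
  invFun := ofF
  left_inv μ := by
    have hperm : ((toF μ).1.sort (· ≤ ·)).reverse.Perm μ.parts := by
      have h1 : ((toF μ).1.sort (· ≤ ·)).Perm μ.parts := by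
        rw [← Multiset.coe_eq_coe, Finset.sort_eq]
        rfl
      exact (List.reverse_perm _).trans h1
    have := List.Perm.eq_of_pairwise' (sort_reverse_sorted (toF μ).1) μ.sorted hperm
    cases μ
    simp only [ofF, this]
  right_inv S := by
    apply Subtype.ext
    apply Finset.ext
    intro x
    simp only [toF, ofF, Finset.mem_mk, Multiset.mem_coe, List.mem_reverse,
      Finset.mem_sort]

@[simp] lemma spEquiv_apply (μ : StrictPartition) : spEquiv μ = toF μ := rfl

lemma len_eq (μ : StrictPartition) : μ.len = (toF μ).1.card := by
  rfl

lemma size_eq (μ : StrictPartition) : μ.size = (toF μ).1.sum id := by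
  simp [StrictPartition.size, toF, Finset.sum]

lemma mem_toF {μ : StrictPartition} {x : ℕ} : x ∈ (toF μ).1 ↔ x ∈ μ.parts := by
  exact Iff.rfl

lemma first_le_iff (μ : StrictPartition) (c : ℕ) :
    μ.first ≤ c ↔ ∀ x ∈ μ.parts, x ≤ c := by
  cases hμ : μ.parts with
  | nil => simp [StrictPartition.first, hμ]
  | cons a l =>
    have hs := μ.sorted
    rw [hμ] at hs
    rw [List.pairwise_cons] at hs
    constructor
    · intro h x hx
      rcases List.mem_cons.mp hx with rfl | hx
      · simpa [StrictPartition.first, hμ] using h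
      · have := hs.1 x hx
        have : x < a := this
        have ha : μ.first = a := by simp [StrictPartition.first, hμ]
        omega
    · intro h
      have := h a (List.mem_cons_self)
      simpa [StrictPartition.first, hμ] using this

lemma first_le_iff' (μ : StrictPartition) (c : ℕ) :
    μ.first ≤ c ↔ (toF μ).1 ⊆ Icc 1 c := by
  rw [first_le_iff]
  constructor
  · intro h x hx
    rw [mem_toF] at hx
    rw [mem_Icc]
    exact ⟨μ.pos x hx, h x hx⟩
  · intro h x hx
    have := h (mem_toF.mpr hx)
    rw [mem_Icc] at this
    exact this.2

lemma mem_staircase {x nn : ℕ} : x ∈ staircase nn ↔ 1 ≤ x ∧ x ≤ nn := by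
  simp only [staircase, List.mem_map, List.mem_reverse, List.mem_range]
  constructor
  · rintro ⟨y, hy, rfl⟩; omega
  · intro h; exact ⟨x - 1, by omega, by omega⟩

lemma staircase_length (nn : ℕ) : (staircase nn).length = nn := by
  simp [staircase]

lemma staircase_nodup (nn : ℕ) : (staircase nn).Nodup := by
  apply List.Nodup.map (fun a b h => by omega)
  exact List.nodup_reverse.mpr (List.nodup_range : (List.range nn).Nodup)

lemma staircase_sorted (nn : ℕ) : (staircase nn).Pairwise (· > ·) := by
  unfold staircase
  rw [List.pairwise_map, List.pairwise_reverse]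
  exact (List.pairwise_lt_range : (List.range nn).Pairwise (· < ·)).imp (fun {a b} h => by
    show b + 1 > a + 1
    omega)

lemma sorted_stair (nn : ℕ) : ∀ (l : List ℕ), l.Pairwise (· > ·) → (∀ x ∈ l, 0 < x) →
    (∀ x, 1 ≤ x → x ≤ nn → x ∈ l) → l.drop (l.length - nn) = staircase nn := by
  intro l
  induction l with
  | nil =>
    intro _ _ hsub
    cases nn with
    | zero => simp [staircase]
    | succ n => exact absurd (hsub 1 le_rfl (by omega)) List.not_mem_nil
  | cons a tl ih =>
    intro hs hp hsub
    rw [List.pairwise_cons] at hs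
    by_cases ha : nn < a
    · have hsub' : ∀ x, 1 ≤ x → x ≤ nn → x ∈ tl := by
        intro x h1 h2
        rcases List.mem_cons.mp (hsub x h1 h2) with rfl | hx
        · omega
        · exact hx
      have hlen : nn ≤ tl.length := by
        have h1 : Icc 1 nn ⊆ tl.toFinset := by
          intro x hx
          rw [mem_Icc] at hx
          rw [List.mem_toFinset]
          exact hsub' x hx.1 hx.2
        have := Finset.card_le_card h1
        rw [Nat.card_Icc] at this
        have h2 := tl.toFinset_card_le
        omega
      have : (a :: tl).length - nn = (tl.length - nn) + 1 := by
        simp only [List.length_cons]; omega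
      rw [this, List.drop_succ_cons]
      exact ih hs.2 (fun x hx => hp x (List.mem_cons_of_mem a hx)) hsub'
    · -- a ≤ nn: the whole list is the staircase
      have hall : ∀ x ∈ a :: tl, 1 ≤ x ∧ x ≤ nn := by
        intro x hx
        rcases List.mem_cons.mp hx with rfl | hx
        · exact ⟨hp x (List.mem_cons_self), by omega⟩
        · have := hs.1 x hx
          exact ⟨hp x (List.mem_cons_of_mem a hx), by omega⟩
      have hnodup : (a :: tl).Nodup := by
        apply List.Pairwise.imp (fun {x y} (h : x > y) => Nat.ne_of_gt h)
        exact List.pairwise_cons.mpr hs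
      have hperm : (a :: tl).Perm (staircase nn) := by
        apply List.perm_of_nodup_nodup_toFinset_eq hnodup (staircase_nodup nn)
        apply Finset.ext
        intro x
        rw [List.mem_toFinset, List.mem_toFinset, mem_staircase]
        constructor
        · exact hall x
        · intro hx
          exact hsub x hx.1 hx.2
      have heq : a :: tl = staircase nn :=
        List.Perm.eq_of_pairwise' (List.pairwise_cons.mpr hs) (staircase_sorted nn) hperm
      have hlen : (a :: tl).length = nn := by
        rw [heq, staircase_length]
      rw [hlen, Nat.sub_self, List.drop_zero, heq]

lemma drop_stair_iff (μ : StrictPartition) (nn : ℕ) :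
    μ.parts.drop (μ.len - nn) = staircase nn ↔ Icc 1 nn ⊆ (toF μ).1 := by
  constructor
  · intro h x hx
    rw [mem_Icc] at hx
    rw [mem_toF]
    have hmem : x ∈ staircase nn := mem_staircase.mpr hx
    rw [← h] at hmem
    exact List.drop_subset _ _ hmem
  · intro h
    apply sorted_stair nn μ.parts μ.sorted μ.pos
    intro x h1 h2
    rw [← mem_toF]
    exact h (mem_Icc.mpr ⟨h1, h2⟩)


/-- interpolating predicate -/
def IP (k : ℕ) (ℓ : ℕ → ℕ) (t : ℕ) (F : Fin k → PF) : Prop :=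
  (∀ a : Fin k, (F a).1.card = ℓ a.1) ∧
  ∀ (a : Fin k) (h : a.1 + 1 < k),
    if a.1 < t then Icc 1 (ℓ (a.1 + 1)) ⊆ (F a).1
    else (F ⟨a.1 + 1, h⟩).1 ⊆ Icc 1 (ℓ a.1)

def tsz (k : ℕ) (F : Fin k → PF) : ℕ := ∑ a, (F a).1.sum id

section Tuple
variable {k t : ℕ} (ℓ : ℕ → ℕ)

def upd2 (ht : t + 1 < k) (F : Fin k → PF) (p : PF × PF) : Fin k → PF :=
  Function.update (Function.update F ⟨t, by omega⟩ p.1) ⟨t + 1, ht⟩ p.2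

lemma upd2_at (ht : t + 1 < k) (F : Fin k → PF) (p : PF × PF) :
    upd2 ht F p ⟨t, by omega⟩ = p.1 := by
  rw [upd2, Function.update_of_ne (by simp [Fin.ext_iff]), Function.update_self]

lemma upd2_at1 (ht : t + 1 < k) (F : Fin k → PF) (p : PF × PF) :
    upd2 ht F p ⟨t + 1, ht⟩ = p.2 := by
  rw [upd2, Function.update_self]

lemma upd2_other (ht : t + 1 < k) (F : Fin k → PF) (p : PF × PF) (a : Fin k)
    (h1 : a.1 ≠ t) (h2 : a.1 ≠ t + 1) : upd2 ht F p a = F a := by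
  rw [upd2, Function.update_of_ne (by simp [Fin.ext_iff]; omega),
    Function.update_of_ne (by simp [Fin.ext_iff]; omega)]

lemma upd2_upd2 (ht : t + 1 < k) (F : Fin k → PF) (p : PF × PF) :
    upd2 ht (upd2 ht F p) (F ⟨t, by omega⟩, F ⟨t + 1, ht⟩) = F := by
  funext a
  by_cases h1 : a.1 = t
  · have ha : a = ⟨t, by omega⟩ := Fin.ext h1
    rw [ha, upd2_at]
  · by_cases h2 : a.1 = t + 1
    · have ha : a = ⟨t + 1, ht⟩ := Fin.ext h2
      rw [ha, upd2_at1]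
    · rw [upd2_other ht _ _ a h1 h2, upd2_other ht _ _ a h1 h2]

lemma ip_x (ht : t + 1 < k) {F : Fin k → PF} (hF : IP k ℓ t F) :
    Xc (ℓ t) (ℓ (t + 1)) (F ⟨t, by omega⟩, F ⟨t + 1, ht⟩) := by
  refine ⟨hF.1 _, hF.1 _, ?_⟩
  have h2 := hF.2 ⟨t, by omega⟩ ht
  rw [if_neg (by show ¬ (t < t); omega)] at h2
  exact h2

lemma ip_y (ht : t + 1 < k) {G : Fin k → PF} (hG : IP k ℓ (t + 1) G) :
    Yc (ℓ t) (ℓ (t + 1)) (G ⟨t, by omega⟩, G ⟨t + 1, ht⟩) := by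
  refine ⟨hG.1 _, hG.1 _, ?_⟩
  have h2 := hG.2 ⟨t, by omega⟩ ht
  rw [if_pos (by show t < t + 1; omega)] at h2
  exact h2

lemma step_forward (ht : t + 1 < k) {F : Fin k → PF} (hF : IP k ℓ t F) {q : PF × PF}
    (hq : Yc (ℓ t) (ℓ (t + 1)) q) : IP k ℓ (t + 1) (upd2 ht F q) := by
  constructor
  · intro a
    by_cases h1 : a.1 = t
    · have ha : a = ⟨t, by omega⟩ := Fin.ext h1
      rw [ha, upd2_at]
      show q.1.1.card = ℓ t
      exact hq.1
    · by_cases h2 : a.1 = t + 1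
      · have ha : a = ⟨t + 1, ht⟩ := Fin.ext h2
        rw [ha, upd2_at1]
        show q.2.1.card = ℓ (t + 1)
        exact hq.2.1
      · rw [upd2_other ht _ _ a h1 h2]
        exact hF.1 a
  · intro a h
    by_cases h1 : a.1 = t
    · rw [if_pos (by omega)]
      have ha : a = ⟨t, by omega⟩ := Fin.ext h1
      rw [ha, upd2_at]
      show Icc 1 (ℓ (t + 1)) ⊆ q.1.1
      exact hq.2.2
    · by_cases h2 : a.1 = t + 1
      · rw [if_neg (by omega)]
        have hf := hF.2 a h
        rw [if_neg (by omega)] at hf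
        rw [upd2_other ht F q ⟨a.1 + 1, h⟩ (by simp; omega) (by simp; omega)]
        exact hf
      · by_cases h3 : a.1 < t
        · rw [if_pos (by omega)]
          have hf := hF.2 a h
          rw [if_pos h3] at hf
          rw [upd2_other ht _ _ a h1 h2]
          exact hf
        · rw [if_neg (by omega)]
          have hf := hF.2 a h
          rw [if_neg (by omega)] at hf
          rw [upd2_other ht F q ⟨a.1 + 1, h⟩ (by simp; omega) (by simp; omega)]
          exact hf

lemma step_backward (ht : t + 1 < k) {G : Fin k → PF} (hG : IP k ℓ (t + 1) G) {p : PF × PF}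
    (hp : Xc (ℓ t) (ℓ (t + 1)) p) : IP k ℓ t (upd2 ht G p) := by
  constructor
  · intro a
    by_cases h1 : a.1 = t
    · have ha : a = ⟨t, by omega⟩ := Fin.ext h1
      rw [ha, upd2_at]
      show p.1.1.card = ℓ t
      exact hp.1
    · by_cases h2 : a.1 = t + 1
      · have ha : a = ⟨t + 1, ht⟩ := Fin.ext h2
        rw [ha, upd2_at1]
        show p.2.1.card = ℓ (t + 1)
        exact hp.2.1
      · rw [upd2_other ht _ _ a h1 h2]
        exact hG.1 a
  · intro a h
    by_cases h1 : a.1 = t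
    · rw [if_neg (by omega)]
      have ha1 : (⟨a.1 + 1, h⟩ : Fin k) = ⟨t + 1, ht⟩ := Fin.ext (by simp [h1])
      rw [ha1, upd2_at1]
      rw [h1]
      exact hp.2.2
    · by_cases h2 : a.1 = t + 1
      · rw [if_neg (by omega)]
        have hg := hG.2 a h
        rw [if_neg (by omega)] at hg
        rw [upd2_other ht G p ⟨a.1 + 1, h⟩ (by simp; omega) (by simp; omega)]
        exact hg
      · by_cases h3 : a.1 < t
        · rw [if_pos h3]
          have hg := hG.2 a h
          rw [if_pos (by omega)] at hg
          rw [upd2_other ht _ _ a h1 h2]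
          exact hg
        · rw [if_neg (by omega)]
          have hg := hG.2 a h
          rw [if_neg (by omega)] at hg
          rw [upd2_other ht G p ⟨a.1 + 1, h⟩ (by simp; omega) (by simp; omega)]
          exact hg

lemma tsz_split (ht : t + 1 < k) (F : Fin k → PF) :
    tsz k F = (F ⟨t, by omega⟩).1.sum id + ((F ⟨t + 1, ht⟩).1.sum id
      + ∑ a ∈ (univ.erase ⟨t, by omega⟩).erase ⟨t + 1, ht⟩, (F a).1.sum id) := by
  rw [tsz, ← Finset.add_sum_erase _ _ (Finset.mem_univ (⟨t, by omega⟩ : Fin k))]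
  congr 1
  have hmem : (⟨t + 1, ht⟩ : Fin k) ∈ univ.erase (⟨t, by omega⟩ : Fin k) :=
    Finset.mem_erase.mpr ⟨by simp [Fin.ext_iff], Finset.mem_univ _⟩
  rw [← Finset.add_sum_erase _ _ hmem]

lemma tsz_upd2 (ht : t + 1 < k) (F : Fin k → PF) (p : PF × PF)
    (hsum : p.1.1.sum id + p.2.1.sum id
      = (F ⟨t, by omega⟩).1.sum id + (F ⟨t + 1, ht⟩).1.sum id) :
    tsz k (upd2 ht F p) = tsz k F := by
  rw [tsz_split ht (upd2 ht F p), tsz_split ht F, upd2_at, upd2_at1]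
  have hrest : ∑ a ∈ (univ.erase (⟨t, by omega⟩ : Fin k)).erase ⟨t + 1, ht⟩,
        ((upd2 ht F p) a).1.sum id
      = ∑ a ∈ (univ.erase (⟨t, by omega⟩ : Fin k)).erase ⟨t + 1, ht⟩, (F a).1.sum id := by
    apply Finset.sum_congr rfl
    intro a ha
    rw [Finset.mem_erase, Finset.mem_erase] at ha
    rw [upd2_other ht F p a (fun hh => ha.2.1 (Fin.ext hh)) (fun hh => ha.1 (Fin.ext hh))]
  rw [hrest]
  omega

noncomputable def stepE (ht : t + 1 < k) :
    {F : Fin k → PF // IP k ℓ t F} ≃ {F : Fin k → PF // IP k ℓ (t + 1) F} where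
  toFun x := ⟨upd2 ht x.1
      (coreE (ℓ t) (ℓ (t + 1)) ⟨(x.1 ⟨t, by omega⟩, x.1 ⟨t + 1, ht⟩), ip_x ℓ ht x.2⟩).1,
    step_forward ℓ ht x.2 (coreE (ℓ t) (ℓ (t + 1)) _).2⟩
  invFun y := ⟨upd2 ht y.1
      ((coreE (ℓ t) (ℓ (t + 1))).symm ⟨(y.1 ⟨t, by omega⟩, y.1 ⟨t + 1, ht⟩), ip_y ℓ ht y.2⟩).1,
    step_backward ℓ ht y.2 ((coreE (ℓ t) (ℓ (t + 1))).symm _).2⟩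
  left_inv x := by
    apply Subtype.ext
    set q := coreE (ℓ t) (ℓ (t + 1)) ⟨(x.1 ⟨t, by omega⟩, x.1 ⟨t + 1, ht⟩), ip_x ℓ ht x.2⟩
      with hqdef
    show upd2 ht (upd2 ht x.1 q.1) ((coreE (ℓ t) (ℓ (t + 1))).symm
      ⟨((upd2 ht x.1 q.1) ⟨t, by omega⟩, (upd2 ht x.1 q.1) ⟨t + 1, ht⟩), _⟩).1 = x.1
    have h2 : (⟨((upd2 ht x.1 q.1) ⟨t, by omega⟩, (upd2 ht x.1 q.1) ⟨t + 1, ht⟩),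
        ip_y ℓ ht (step_forward ℓ ht x.2 q.2)⟩ : {p : PF × PF // Yc (ℓ t) (ℓ (t + 1)) p})
        = q := by
      apply Subtype.ext
      show ((upd2 ht x.1 q.1) ⟨t, by omega⟩, (upd2 ht x.1 q.1) ⟨t + 1, ht⟩) = q.1
      rw [upd2_at, upd2_at1]
    rw [h2, hqdef, Equiv.symm_apply_apply]
    exact upd2_upd2 ht x.1 _
  right_inv y := by
    apply Subtype.ext
    set p := (coreE (ℓ t) (ℓ (t + 1))).symm ⟨(y.1 ⟨t, by omega⟩, y.1 ⟨t + 1, ht⟩), ip_y ℓ ht y.2⟩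
      with hpdef
    show upd2 ht (upd2 ht y.1 p.1) ((coreE (ℓ t) (ℓ (t + 1)))
      ⟨((upd2 ht y.1 p.1) ⟨t, by omega⟩, (upd2 ht y.1 p.1) ⟨t + 1, ht⟩), _⟩).1 = y.1
    have h2 : (⟨((upd2 ht y.1 p.1) ⟨t, by omega⟩, (upd2 ht y.1 p.1) ⟨t + 1, ht⟩),
        ip_x ℓ ht (step_backward ℓ ht y.2 p.2)⟩ : {p : PF × PF // Xc (ℓ t) (ℓ (t + 1)) p})
        = p := by
      apply Subtype.ext
      show ((upd2 ht y.1 p.1) ⟨t, by omega⟩, (upd2 ht y.1 p.1) ⟨t + 1, ht⟩) = p.1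
      rw [upd2_at, upd2_at1]
    rw [h2, hpdef, Equiv.apply_symm_apply]
    exact upd2_upd2 ht y.1 _

lemma stepE_sum (ht : t + 1 < k) (x : {F : Fin k → PF // IP k ℓ t F}) :
    tsz k ((stepE ℓ ht) x).1 = tsz k x.1 := by
  show tsz k (upd2 ht x.1 _) = tsz k x.1
  apply tsz_upd2
  exact coreE_sum (ℓ t) (ℓ (t + 1)) _

end Tuple

lemma chain (k : ℕ) (ℓ : ℕ → ℕ) :
    ∀ t, ∃ e : {F : Fin k → PF // IP k ℓ 0 F} ≃ {F : Fin k → PF // IP k ℓ t F},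
      ∀ x, tsz k (e x).1 = tsz k x.1 := by
  intro t
  induction t with
  | zero => exact ⟨Equiv.refl _, fun x => rfl⟩
  | succ t ih =>
    obtain ⟨e, he⟩ := ih
    by_cases ht : t + 1 < k
    · exact ⟨e.trans (stepE ℓ ht), fun x => by
        rw [Equiv.trans_apply, stepE_sum, he]⟩
    · have hiff : ∀ F : Fin k → PF, IP k ℓ t F ↔ IP k ℓ (t + 1) F := by
        intro F
        unfold IP
        constructor
        · rintro ⟨h1, h2⟩
          refine ⟨h1, fun a h => ?_⟩
          have h3 := h2 a h
          rw [if_pos (by omega : a.1 < t)] at h3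
          rw [if_pos (by omega : a.1 < t + 1)]
          exact h3
        · rintro ⟨h1, h2⟩
          refine ⟨h1, fun a h => ?_⟩
          have h3 := h2 a h
          rw [if_pos (by omega : a.1 < t + 1)] at h3
          rw [if_pos (by omega : a.1 < t)]
          exact h3
      refine ⟨e.trans (Equiv.subtypeEquivRight hiff), fun x => ?_⟩
      rw [Equiv.trans_apply]
      exact he x

/-- restrict a size-preserving equiv to fixed size -/
noncomputable def restrictE {α β : Type} {P : α → Prop} {Q : β → Prop} (f : α → ℕ) (g : β → ℕ)
    (e : {a // P a} ≃ {b // Q b}) (hs : ∀ x, g (e x).1 = f x.1) (N : ℕ) :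
    {a // P a ∧ f a = N} ≃ {b // Q b ∧ g b = N} :=
  ((Equiv.subtypeSubtypeEquivSubtypeInter P (fun a => f a = N)).symm.trans
    (Equiv.subtypeEquiv e (fun x => by
      constructor
      · intro h; rw [hs]; exact h
      · intro h; rw [← hs x]; exact h))).trans
    (Equiv.subtypeSubtypeEquivSubtypeInter Q (fun b => g b = N))

end VW

open VW in
/-- main theorem -/
theorem V_equinumerous_W (k : ℕ) (j : ℕ → ℕ) (N : ℕ) :
    Nat.card {L : Fin k → StrictPartition //
        (∀ a : Fin k, (L a).len = ∑ b ∈ Finset.Ico a.val k, j b) ∧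
        (∀ (a : Fin k) (h : a.val + 1 < k), (L ⟨a.val + 1, h⟩).first ≤ (L a).len) ∧
        (∑ a, (L a).size) = N} =
      Nat.card {L : Fin k → StrictPartition //
        (∀ a : Fin k, (L a).len = ∑ b ∈ Finset.Ico a.val k, j b) ∧
        (∀ (a : Fin k) (h : a.val + 1 < k),
          (L a).parts.drop ((L a).len - (L ⟨a.val + 1, h⟩).len) =
            staircase ((L ⟨a.val + 1, h⟩).len)) ∧
        (∑ a, (L a).size) = N} := by
  classical
  set ℓ : ℕ → ℕ := fun a => ∑ b ∈ Finset.Ico a k, j b with hℓdef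
  have hsum_eq : ∀ L : Fin k → StrictPartition,
      (∑ a, (L a).size) = tsz k (fun a => toF (L a)) := by
    intro L
    rw [tsz]
    apply Finset.sum_congr rfl
    intro a _
    rw [size_eq]
  have iffV : ∀ L : Fin k → StrictPartition,
      ((∀ a : Fin k, (L a).len = ∑ b ∈ Finset.Ico a.val k, j b) ∧
       (∀ (a : Fin k) (h : a.val + 1 < k), (L ⟨a.val + 1, h⟩).first ≤ (L a).len) ∧
       (∑ a, (L a).size) = N)
      ↔ (IP k ℓ 0 (fun a => toF (L a)) ∧ tsz k (fun a => toF (L a)) = N) := by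
    intro L
    constructor
    · rintro ⟨h1, h2, h3⟩
      refine ⟨⟨fun a => ?_, fun a h => ?_⟩, ?_⟩
      · rw [← len_eq]; exact h1 a
      · rw [if_neg (by omega)]
        have hh := h2 a h
        rw [first_le_iff'] at hh
        rw [h1 a] at hh
        exact hh
      · rw [← hsum_eq]; exact h3
    · rintro ⟨⟨h1, h2⟩, h3⟩
      have hlen : ∀ a : Fin k, (L a).len = ℓ a.1 := by
        intro a; rw [len_eq]; exact h1 a
      refine ⟨hlen, fun a h => ?_, ?_⟩
      · rw [first_le_iff']
        have hh := h2 a h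
        rw [if_neg (by omega)] at hh
        rw [hlen a]
        exact hh
      · rw [hsum_eq]; exact h3
  have iffW : ∀ L : Fin k → StrictPartition,
      ((∀ a : Fin k, (L a).len = ∑ b ∈ Finset.Ico a.val k, j b) ∧
       (∀ (a : Fin k) (h : a.val + 1 < k),
          (L a).parts.drop ((L a).len - (L ⟨a.val + 1, h⟩).len) =
            staircase ((L ⟨a.val + 1, h⟩).len)) ∧
       (∑ a, (L a).size) = N)
      ↔ (IP k ℓ k (fun a => toF (L a)) ∧ tsz k (fun a => toF (L a)) = N) := by
    intro L
    constructor
    · rintro ⟨h1, h2, h3⟩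
      refine ⟨⟨fun a => ?_, fun a h => ?_⟩, ?_⟩
      · rw [← len_eq]; exact h1 a
      · rw [if_pos (by omega)]
        have hh := h2 a h
        rw [drop_stair_iff] at hh
        have : (L ⟨a.val + 1, h⟩).len = ℓ (a.1 + 1) := h1 ⟨a.val + 1, h⟩
        rw [this] at hh
        exact hh
      · rw [← hsum_eq]; exact h3
    · rintro ⟨⟨h1, h2⟩, h3⟩
      have hlen : ∀ a : Fin k, (L a).len = ℓ a.1 := by
        intro a; rw [len_eq]; exact h1 a
      refine ⟨hlen, fun a h => ?_, ?_⟩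
      · rw [drop_stair_iff]
        have hh := h2 a h
        rw [if_pos (by omega)] at hh
        rw [hlen ⟨a.val + 1, h⟩]
        exact hh
      · rw [hsum_eq]; exact h3
  obtain ⟨e, he⟩ := chain k ℓ k
  have eMid := restrictE (tsz k) (tsz k) e he N
  have eV := Equiv.subtypeEquiv (Equiv.piCongrRight fun _ : Fin k => spEquiv)
    (p := fun L : Fin k → StrictPartition =>
      (∀ a : Fin k, (L a).len = ∑ b ∈ Finset.Ico a.val k, j b) ∧
      (∀ (a : Fin k) (h : a.val + 1 < k), (L ⟨a.val + 1, h⟩).first ≤ (L a).len) ∧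
      (∑ a, (L a).size) = N)
    (q := fun F : Fin k → PF => IP k ℓ 0 F ∧ tsz k F = N)
    (fun L => by
      have hfe : ((Equiv.piCongrRight fun _ : Fin k => spEquiv) L) = fun a => toF (L a) :=
        funext fun a => spEquiv_apply (L a)
      rw [hfe]
      exact iffV L)
  have eW := Equiv.subtypeEquiv (Equiv.piCongrRight fun _ : Fin k => spEquiv)
    (p := fun L : Fin k → StrictPartition =>
      (∀ a : Fin k, (L a).len = ∑ b ∈ Finset.Ico a.val k, j b) ∧
      (∀ (a : Fin k) (h : a.val + 1 < k),
        (L a).parts.drop ((L a).len - (L ⟨a.val + 1, h⟩).len) =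
          staircase ((L ⟨a.val + 1, h⟩).len)) ∧
      (∑ a, (L a).size) = N)
    (q := fun F : Fin k → PF => IP k ℓ k F ∧ tsz k F = N)
    (fun L => by
      have hfe : ((Equiv.piCongrRight fun _ : Fin k => spEquiv) L) = fun a => toF (L a) :=
        funext fun a => spEquiv_apply (L a)
      rw [hfe]
      exact iffW L)
  exact Nat.card_congr ((eV.trans eMid).trans eW.symm)
end
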